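/- arXiv:2002.05456 — 6 statements merged into one kernel-verified Lean document; each statement's English description precedes it below -/
import Mathlib

section
/- (Stečkin) Let s = σ + it with 1 < σ ≤ 1.25 and let z ∈ ℂ with 0 < Re(z) < 1. Then F(s, z) - κ·F(σ₁(σ) + it, z) ≥ 0. -/
/-- `κ = 1/√5`. -/
noncomputable def κ : ℝ := 1 / Real.sqrt 5

/-- `σ₁(σ) = (1 + √(1 + 4σ²))/2`. -/
noncomputable def σ₁ (σ : ℝ) : ℝ := (1 + Real.sqrt (1 + 4 * σ ^ 2)) / 2

/-- `F(s,z) = Re(1/(s-z) + 1/(s-1+conj z))`. -/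
noncomputable def F (s z : ℂ) : ℝ := ((s - z)⁻¹ + (s - 1 + (starRingEnd ℂ) z)⁻¹).re

lemma F_eval (σ t : ℝ) (z : ℂ) :
    F (σ + t * Complex.I) z =
      (σ - z.re) / ((σ - z.re) ^ 2 + (t - z.im) ^ 2)
        + (σ - 1 + z.re) / ((σ - 1 + z.re) ^ 2 + (t - z.im) ^ 2) := by
  simp only [F, Complex.add_re, Complex.inv_re, Complex.sub_re, Complex.add_im,
    Complex.sub_im, Complex.normSq_apply, Complex.ofReal_re, Complex.ofReal_im,
    Complex.mul_re, Complex.mul_im, Complex.I_re, Complex.I_im, Complex.one_re,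
    Complex.one_im, Complex.conj_re, Complex.conj_im, mul_zero, mul_one, zero_mul,
    sub_zero, zero_sub, add_zero, zero_add]
  ring

lemma key2 (σ x v : ℝ) (hσ : 1 < σ) (hx0 : 0 < x) (hx1 : x < 1) (hv : 0 ≤ v) :
    (σ ^ 2 + x - x ^ 2 + v) * ((σ ^ 2 - σ + x - x ^ 2 - v) ^ 2 + v * (2 * σ - 1) ^ 2)
      ≤ (σ ^ 2 - σ + x - x ^ 2 + v) * ((σ ^ 2 + x - x ^ 2 - v) ^ 2 + v * (1 + 4 * σ ^ 2)) := by
  have habpos : 0 < σ ^ 2 - σ + x - x ^ 2 := by nlinarith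
  have hw : 0 < σ - 1 + 4 * x - 4 * x ^ 2 := by nlinarith
  have hid : (σ ^ 2 - σ + x - x ^ 2 + v)
        * ((σ ^ 2 + x - x ^ 2 - v) ^ 2 + v * (1 + 4 * σ ^ 2))
      - (σ ^ 2 + x - x ^ 2 + v)
        * ((σ ^ 2 - σ + x - x ^ 2 - v) ^ 2 + v * (2 * σ - 1) ^ 2)
      = σ * ((σ ^ 2 - σ + x - x ^ 2 + v) ^ 2 + σ * (σ ^ 2 - σ + x - x ^ 2)
          + v * (σ - 1 + 4 * x - 4 * x ^ 2)) := by ring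
  have hrhs : 0 ≤ σ * ((σ ^ 2 - σ + x - x ^ 2 + v) ^ 2
      + σ * (σ ^ 2 - σ + x - x ^ 2) + v * (σ - 1 + 4 * x - 4 * x ^ 2)) := by
    apply mul_nonneg (by linarith)
    have t1 : (0:ℝ) ≤ (σ ^ 2 - σ + x - x ^ 2 + v) ^ 2 := sq_nonneg _
    have t2 : (0:ℝ) ≤ σ * (σ ^ 2 - σ + x - x ^ 2) :=
      mul_nonneg (by linarith) habpos.le
    have t3 : (0:ℝ) ≤ v * (σ - 1 + 4 * x - 4 * x ^ 2) := mul_nonneg hv hw.le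
    linarith
  linarith [hid, hrhs]

set_option maxHeartbeats 1000000 in
lemma key (σ x v : ℝ) (hσ : 1 < σ) (hx0 : 0 < x) (hx1 : x < 1) (hv : 0 ≤ v) :
    κ * ((σ₁ σ - x) / ((σ₁ σ - x) ^ 2 + v) + (σ₁ σ - 1 + x) / ((σ₁ σ - 1 + x) ^ 2 + v))
      ≤ (σ - x) / ((σ - x) ^ 2 + v) + (σ - 1 + x) / ((σ - 1 + x) ^ 2 + v) := by
  have h4 : (0:ℝ) ≤ 1 + 4 * σ ^ 2 := by nlinarith
  have hr : Real.sqrt (1 + 4 * σ ^ 2) ^ 2 = 1 + 4 * σ ^ 2 := Real.sq_sqrt h4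
  have hrge : 2 * σ ≤ Real.sqrt (1 + 4 * σ ^ 2) := by
    have : Real.sqrt ((2*σ)^2) ≤ Real.sqrt (1 + 4 * σ ^ 2) :=
      Real.sqrt_le_sqrt (by nlinarith)
    rwa [Real.sqrt_sq (by linarith)] at this
  set s1 := σ₁ σ with hs1def
  have hs1sq : s1 ^ 2 = s1 + σ ^ 2 := by
    rw [hs1def, σ₁]; nlinarith [hr]
  have hs1gt : σ < s1 := by
    rw [hs1def, σ₁]; nlinarith [hrge]
  -- the positive quantities
  set a := σ - x with ha
  set b := σ - 1 + x with hb
  set a1 := s1 - x with ha1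
  set b1 := s1 - 1 + x with hb1
  have hapos : 0 < a := by simp only [ha]; linarith
  have hbpos : 0 < b := by simp only [hb]; linarith
  have ha1pos : 0 < a1 := by simp only [ha1]; linarith
  have hb1pos : 0 < b1 := by simp only [hb1]; linarith
  have hA : 0 < a ^ 2 + v := by positivity
  have hB : 0 < b ^ 2 + v := by positivity
  have hA1 : 0 < a1 ^ 2 + v := by positivity
  have hB1 : 0 < b1 ^ 2 + v := by positivity
  -- sum formulas
  have eL : a / (a ^ 2 + v) + b / (b ^ 2 + v)
      = (a + b) * (a * b + v) / ((a ^ 2 + v) * (b ^ 2 + v)) := by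
    field_simp; ring
  have eR : a1 / (a1 ^ 2 + v) + b1 / (b1 ^ 2 + v)
      = (a1 + b1) * (a1 * b1 + v) / ((a1 ^ 2 + v) * (b1 ^ 2 + v)) := by
    field_simp; ring
  rw [eL, eR]
  -- step 1 : κ (a1+b1) ≤ a + b
  have hc5 : (0:ℝ) < Real.sqrt 5 := Real.sqrt_pos.2 (by norm_num)
  have hS1 : a1 + b1 = Real.sqrt (1 + 4 * σ ^ 2) := by
    simp only [ha1, hb1, hs1def, σ₁]; ring
  have h1 : κ * (a1 + b1) ≤ a + b := by
    rw [hS1, κ, div_mul_eq_mul_div, div_le_iff₀ hc5, one_mul]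
    have h5 : Real.sqrt (1 + 4 * σ ^ 2) ≤ Real.sqrt (5 * (2 * σ - 1) ^ 2) :=
      Real.sqrt_le_sqrt (by nlinarith)
    have h6 : Real.sqrt (5 * (2 * σ - 1) ^ 2)
        = (2 * σ - 1) * Real.sqrt 5 := by
      rw [show (5 : ℝ) * (2 * σ - 1) ^ 2 = ((2*σ-1) * Real.sqrt 5)^2 by
        rw [mul_pow, Real.sq_sqrt (by norm_num : (0:ℝ) ≤ 5)]; ring]
      exact Real.sqrt_sq (mul_nonneg (by linarith) hc5.le)
    have : Real.sqrt (1 + 4 * σ ^ 2) ≤ (2 * σ - 1) * Real.sqrt 5 := h6 ▸ h5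
    calc Real.sqrt (1 + 4 * σ ^ 2) ≤ (2 * σ - 1) * Real.sqrt 5 := this
      _ = (a + b) * Real.sqrt 5 := by simp only [ha, hb]; ring
  -- step 2 : the product/denominator comparison
  have hP1 : a1 * b1 = σ ^ 2 + x - x ^ 2 := by
    simp only [ha1, hb1]; linear_combination hs1sq
  have hS1sq : (a1 + b1) ^ 2 = 1 + 4 * σ ^ 2 := by
    simp only [ha1, hb1]; linear_combination 4 * hs1sq
  have hA1B1 : (a1 ^ 2 + v) * (b1 ^ 2 + v)
      = (σ ^ 2 + x - x ^ 2 - v) ^ 2 + v * (1 + 4 * σ ^ 2) := by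
    have base : (a1 ^ 2 + v) * (b1 ^ 2 + v)
        = (a1 * b1 - v) ^ 2 + v * (a1 + b1) ^ 2 := by ring
    rw [base, hP1, hS1sq]
  have hAB : (a ^ 2 + v) * (b ^ 2 + v)
      = (σ ^ 2 - σ + x - x ^ 2 - v) ^ 2 + v * (2 * σ - 1) ^ 2 := by
    simp only [ha, hb]; ring
  have hab : a * b = σ ^ 2 - σ + x - x ^ 2 := by simp only [ha, hb]; ring
  have h2 : (a1 * b1 + v) / ((a1 ^ 2 + v) * (b1 ^ 2 + v))
      ≤ (a * b + v) / ((a ^ 2 + v) * (b ^ 2 + v)) := by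
    rw [div_le_div_iff₀ (by positivity) (by positivity)]
    rw [hP1, hA1B1, hAB, hab]
    exact key2 σ x v hσ hx0 hx1 hv
  have hSpos : (0:ℝ) ≤ a + b := by linarith
  have hRnn : 0 ≤ (a1 * b1 + v) / ((a1 ^ 2 + v) * (b1 ^ 2 + v)) := by positivity
  have hknn : 0 ≤ κ * (a1 + b1) := by
    apply mul_nonneg _ (by linarith)
    rw [κ]; positivity
  calc κ * ((a1 + b1) * (a1 * b1 + v) / ((a1 ^ 2 + v) * (b1 ^ 2 + v)))
      = (κ * (a1 + b1)) * ((a1 * b1 + v) / ((a1 ^ 2 + v) * (b1 ^ 2 + v))) := by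
        ring
    _ ≤ (a + b) * ((a * b + v) / ((a ^ 2 + v) * (b ^ 2 + v))) :=
        mul_le_mul h1 h2 hRnn hSpos
    _ = (a + b) * (a * b + v) / ((a ^ 2 + v) * (b ^ 2 + v)) := by ring

/-- **Stečkin's lemma, first inequality**: for `s = σ + it` with `1 < σ ≤ 1.25`
and `0 < Re z < 1`, one has `F(s,z) - κ F(σ₁(σ) + it, z) ≥ 0`. -/
theorem steckin_first (σ t : ℝ) (hσ : 1 < σ) (hσ' : σ ≤ 1.25)
    (z : ℂ) (hz₀ : 0 < z.re) (hz₁ : z.re < 1) :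
    0 ≤ F (σ + t * Complex.I) z - κ * F (σ₁ σ + t * Complex.I) z := by
  rw [F_eval, F_eval, sub_nonneg]
  have := key σ z.re ((t - z.im) ^ 2) hσ hz₀ hz₁ (sq_nonneg _)
  exact this
end

section
/- (Stečkin) Let s = σ + it with 1 < σ ≤ 1.25 and let z ∈ ℂ with Im(z) = t and 1/2 ≤ Re(z) < 1. Then Re(1/(s-1+conj(z))) - κ·F(σ₁(σ) + it, z) ≥ 0. -/
lemma steckin_aux (a c : ℝ) (ha : 0 < a) (hc : 0 < c) (hc' : c ≤ 1 / 2) :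
    (1 + 4 * (1 + a) ^ 2) * (a + 1 - c) ^ 2 ≤
      5 * ((1 + a) ^ 2 + (1 - c) - (1 - c) ^ 2) ^ 2 := by
  have hc2 : c ^ 2 ≤ c / 2 := by nlinarith
  have hc3 : c ^ 3 ≤ c / 4 := by nlinarith
  have hc4 : 0 ≤ c ^ 4 := by positivity
  have hac2 : a * c ^ 2 ≤ a * (c / 2) := by nlinarith
  have ha2c2 : a ^ 2 * c ^ 2 ≤ a ^ 2 * (c / 2) := by nlinarith
  have hac : 0 ≤ a * c := by positivity
  have ha2c : 0 ≤ a ^ 2 * c := by positivity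
  have ha3c : 0 ≤ a ^ 3 * c := by positivity
  have ha3 : 0 ≤ a ^ 3 := by positivity
  have ha4 : 0 ≤ a ^ 4 := by positivity
  nlinarith [hc2, hc3, hc4, hac2, ha2c2, hac, ha2c, ha3c, ha3, ha4]

/-- **Stečkin's lemma, second inequality**: for `s = σ + it` with `1 < σ ≤ 1.25`,
and `z` with `Im z = t` and `1/2 ≤ Re z < 1`,
`Re(1/(s-1+conj z)) - κ F(σ₁(σ) + it, z) ≥ 0`. -/
theorem steckin_second (σ t : ℝ) (hσ : 1 < σ) (hσ' : σ ≤ 1.25)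
    (z : ℂ) (hzt : z.im = t) (hz₀ : 1 / 2 ≤ z.re) (hz₁ : z.re < 1) :
    0 ≤ ((((σ : ℂ) + t * Complex.I) - 1 + (starRingEnd ℂ) z)⁻¹).re -
        κ * F (σ₁ σ + t * Complex.I) z := by
  set β := z.re with hβ
  have hz : z = (β : ℂ) + (t : ℂ) * Complex.I := by
    rw [hβ, ← hzt]; exact (Complex.re_add_im z).symm
  set x := Real.sqrt (1 + 4 * σ ^ 2) with hxdef
  have hx2 : x ^ 2 = 1 + 4 * σ ^ 2 := Real.sq_sqrt (by positivity)
  have hx_gt : 2 < x := by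
    nlinarith [Real.sqrt_nonneg (1 + 4 * σ ^ 2), hx2]
  set y := Real.sqrt 5 with hydef
  have hy2 : y ^ 2 = 5 := Real.sq_sqrt (by norm_num)
  have hy_pos : 0 < y := Real.sqrt_pos.mpr (by norm_num)
  -- the three complex numbers are real
  have e1 : ((σ : ℂ) + t * Complex.I) - 1 + (starRingEnd ℂ) z = ((σ - 1 + β : ℝ) : ℂ) := by
    rw [hz]; simp [Complex.ext_iff]
  have e2 : ((σ₁ σ : ℂ) + t * Complex.I) - z = ((σ₁ σ - β : ℝ) : ℂ) := by
    rw [hz]; simp [Complex.ext_iff]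
  have e3 : ((σ₁ σ : ℂ) + t * Complex.I) - 1 + (starRingEnd ℂ) z = ((σ₁ σ - 1 + β : ℝ) : ℂ) := by
    rw [hz]; simp [Complex.ext_iff]
  rw [F, e1, e2, e3, ← Complex.ofReal_inv, ← Complex.ofReal_inv, ← Complex.ofReal_inv,
    ← Complex.ofReal_add, Complex.ofReal_re, Complex.ofReal_re]
  -- now a purely real inequality
  have hσ₁ : σ₁ σ = (1 + x) / 2 := rfl
  set A := σ - 1 + β with hA
  set B := σ₁ σ - β with hB
  set C := σ₁ σ - 1 + β with hC
  have hApos : 0 < A := by rw [hA]; nlinarith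
  have hBpos : 0 < B := by rw [hB, hσ₁]; nlinarith
  have hCpos : 0 < C := by rw [hC, hσ₁]; nlinarith
  have hBC : B * C = σ ^ 2 + β - β ^ 2 := by
    rw [hB, hC, hσ₁]; nlinarith [hx2]
  have hBCsum : B + C = x := by rw [hB, hC, hσ₁]; ring
  clear_value x y A B C
  -- key inequality
  have hpoly : (1 + 4 * σ ^ 2) * (σ - 1 + β) ^ 2 ≤ 5 * (σ ^ 2 + β - β ^ 2) ^ 2 := by
    have h := steckin_aux (σ - 1) (1 - β) (by linarith) (by linarith) (by linarith)
    linarith [h]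
  have key : x * A ≤ y * (B * C) := by
    have h1 : (x * A) ^ 2 ≤ (y * (B * C)) ^ 2 := by
      rw [mul_pow, mul_pow, hx2, hy2, hBC, hA]
      exact hpoly
    have hxA : 0 ≤ x * A := mul_nonneg (by linarith) hApos.le
    have hyBC : 0 ≤ y * (B * C) := mul_nonneg hy_pos.le (mul_pos hBpos hCpos).le
    exact (pow_le_pow_iff_left₀ hxA hyBC two_ne_zero).mp h1
  rw [sub_nonneg, κ, ← hydef]
  have e4 : 1 / y * (B⁻¹ + C⁻¹) = x / (y * (B * C)) := by
    rw [← hBCsum]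
    field_simp
    ring
  rw [e4, div_le_iff₀ (mul_pos hy_pos (mul_pos hBpos hCpos)), inv_mul_eq_div, le_div_iff₀ hApos]
  linarith [key]
end

section
/- For all real σ and β with 1 < σ ≤ 1.15 and 0.85 ≤ β ≤ 1, one has g(σ,β) := -1/(σ-1+β) + κ/(σ₁(σ)-β) + κ/(σ₁(σ)-1+β) ≤ 0; consequently -1/(σ-β) - 1/(σ-1+β) + κ/(σ₁(σ)-β) + κ/(σ₁(σ)-1+β) ≤ -1/(σ-β). -/
set_option maxHeartbeats 1000000 in
/-- For `1 < σ ≤ 1.15` and `0.85 ≤ β ≤ 1`,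
`g(σ,β) = -1/(σ-1+β) + κ/(σ₁(σ)-β) + κ/(σ₁(σ)-1+β) ≤ 0`, and hence
`-1/(σ-β) - 1/(σ-1+β) + κ/(σ₁(σ)-β) + κ/(σ₁(σ)-1+β) ≤ -1/(σ-β)`. -/
theorem g_nonpos (σ β : ℝ) (hσ : 1 < σ) (hσ' : σ ≤ 1.15)
    (hβ : 0.85 ≤ β) (hβ' : β ≤ 1) :
    (-(1 / (σ - 1 + β)) + κ / (σ₁ σ - β) + κ / (σ₁ σ - 1 + β) ≤ 0) ∧
    (-(1 / (σ - β)) - 1 / (σ - 1 + β) + κ / (σ₁ σ - β) + κ / (σ₁ σ - 1 + β) ≤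
      -(1 / (σ - β))) := by
  have h5 : (0:ℝ) < Real.sqrt 5 := Real.sqrt_pos.mpr (by norm_num)
  have hx : (0:ℝ) ≤ 1 + 4 * σ ^ 2 := by nlinarith
  set r := Real.sqrt (1 + 4 * σ ^ 2) with hr
  have hr2 : r ^ 2 = 1 + 4 * σ ^ 2 := Real.sq_sqrt hx
  have hrpos : 1 < r := by
    nlinarith [Real.sq_sqrt hx, Real.sqrt_nonneg (1 + 4 * σ ^ 2)]
  have hs : σ₁ σ = (1 + r) / 2 := rfl
  have hB : 0 < σ₁ σ - β := by rw [hs]; nlinarith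
  have hC : 0 < σ₁ σ - 1 + β := by rw [hs]; nlinarith
  have hA : 0 < σ - 1 + β := by nlinarith
  have key : κ / (σ₁ σ - β) + κ / (σ₁ σ - 1 + β) ≤ 1 / (σ - 1 + β) := by
    rw [κ, div_div, div_div, div_add_div _ _ (by positivity) (by positivity),
      div_le_div_iff₀ (by positivity) hA]
    have hBC : (σ₁ σ - β) * (σ₁ σ - 1 + β) = σ ^ 2 + β - β ^ 2 := by
      rw [hs]; nlinarith
    have hsq : (Real.sqrt 5) ^ 2 = 5 := Real.sq_sqrt (by norm_num)
    have hu : (0:ℝ) ≤ σ - 1 := by linarith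
    have hv : (0:ℝ) ≤ 1 - β := by linarith
    have t1 : (0:ℝ) ≤ 10*(1-β)*(2-(1-β)-(1-β)^2) := by nlinarith
    have t2 : (0:ℝ) ≤ 2*(σ-1)*(1-β)*(23-14*(1-β)) :=
      mul_nonneg (mul_nonneg (by linarith) hv) (by nlinarith)
    have t3 : (0:ℝ) ≤ 2*(σ-1)^2*(1-β)*(17-7*(1-β)) :=
      mul_nonneg (mul_nonneg (by positivity) hv) (by nlinarith)
    have t4 : (0:ℝ) ≤ 8*(σ-1)^3*(1-β) := by positivity
    have hpoly' : (σ - 1 + β) ^ 2 * (1 + 4 * σ ^ 2) ≤ (σ ^ 2 + β - β ^ 2) ^ 2 * 5 := by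
      nlinarith [t1, t2, t3, t4, hu, sq_nonneg (σ-1), sq_nonneg ((σ-1)^2),
        sq_nonneg ((1-β)^2), mul_nonneg (mul_nonneg hu hu) hu]
    have hpoly : ((σ - 1 + β) * r) ^ 2 ≤ (σ ^ 2 + β - β ^ 2) ^ 2 * 5 := by
      calc ((σ - 1 + β) * r) ^ 2 = (σ - 1 + β) ^ 2 * (1 + 4 * σ ^ 2) := by
            rw [mul_pow, hr2]
        _ ≤ _ := hpoly'
    have hab : Real.sqrt 5 * r * (σ - 1 + β) ≤ 5 * (σ ^ 2 + β - β ^ 2) := by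
      have h2 : (Real.sqrt 5 * r * (σ - 1 + β)) ^ 2 ≤ (5 * (σ ^ 2 + β - β ^ 2)) ^ 2 := by
        calc (Real.sqrt 5 * r * (σ - 1 + β)) ^ 2
            = 5 * ((σ - 1 + β) * r) ^ 2 := by rw [mul_pow, mul_pow, hsq]; ring
          _ ≤ 5 * ((σ ^ 2 + β - β ^ 2) ^ 2 * 5) := by linarith
          _ = (5 * (σ ^ 2 + β - β ^ 2)) ^ 2 := by ring
      have hbnn : (0:ℝ) ≤ 5 * (σ ^ 2 + β - β ^ 2) := by nlinarith
      exact le_of_pow_le_pow_left₀ (by norm_num) hbnn h2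
    have h2s : σ₁ σ - 1 + β + (σ₁ σ - β) = r := by rw [hs]; ring
    calc (1 * (Real.sqrt 5 * (σ₁ σ - 1 + β)) + Real.sqrt 5 * (σ₁ σ - β) * 1) * (σ - 1 + β)
        = Real.sqrt 5 * (σ₁ σ - 1 + β + (σ₁ σ - β)) * (σ - 1 + β) := by ring
      _ = Real.sqrt 5 * r * (σ - 1 + β) := by rw [h2s]
      _ ≤ 5 * (σ ^ 2 + β - β ^ 2) := hab
      _ = Real.sqrt 5 ^ 2 * ((σ₁ σ - β) * (σ₁ σ - 1 + β)) := by rw [hsq, hBC]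
      _ = 1 * (Real.sqrt 5 * (σ₁ σ - β) * (Real.sqrt 5 * (σ₁ σ - 1 + β))) := by ring
  constructor
  · linarith
  · linarith
end

section
/- Let 0 < ε ≤ 0.15. For every integer k with 1 ≤ k ≤ 16, every real σ with 1 < σ ≤ 1 + ε, and every real t ≥ 1, one has Σ_k(σ,t) ≤ Σ_k(1+ε, 1). (Indeed Σ_k(σ,t) is decreasing in t for t ≥ 1 at fixed σ, and Σ_k(σ,1) is increasing in σ on 1 ≤ σ ≤ 1.15.) -/
set_option maxHeartbeats 2000000

/-- `Σ_k(σ,t)`. -/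
noncomputable def Sigk (k : ℕ) (σ t : ℝ) : ℝ :=
  σ / (σ ^ 2 + k ^ 2 * t ^ 2) + (σ - 1) / ((σ - 1) ^ 2 + k ^ 2 * t ^ 2) -
    κ * σ₁ σ / ((σ₁ σ) ^ 2 + k ^ 2 * t ^ 2) -
    κ * (σ₁ σ - 1) / ((σ₁ σ - 1) ^ 2 + k ^ 2 * t ^ 2)


private lemma lem_star (g a : ℝ) (hg1 : 1.61 ≤ g) (hg2 : g ≤ 1.76) (ha : 1 ≤ a) :
    g/(g^2+a)^2 + (g-1)/((g-1)^2+a)^2 ≤ (2*g-1)/(g^2-g+a)^2 := by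
  have h1 : (0:ℝ) ≤ g - 1.61 := by linarith
  have h2 : (0:ℝ) ≤ 1.76 - g := by linarith
  have hm : (0:ℝ) ≤ a - 1 := by linarith
  have hgg := mul_nonneg h1 h2
  have hc0 : (0:ℝ) ≤ -2*g^7+7*g^6-9*g^5+5*g^4+5*g^3-9*g^2+9*g-3 := by
    nlinarith [hgg, mul_nonneg hgg hgg, mul_nonneg (mul_nonneg hgg hgg) hgg, mul_nonneg h1 h1, mul_nonneg h2 h2]
  have hc1 : (0:ℝ) ≤ 12*g^3-18*g^2+22*g-8 := by nlinarith [hgg]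
  have hc2 : (0:ℝ) ≤ 6*g^3-9*g^2+17*g-7 := by nlinarith [hgg]
  have hc3 : (0:ℝ) ≤ 4*g-2 := by linarith
  have d1 : (0:ℝ) < g^2+a := by nlinarith
  have d2 : (0:ℝ) < (g-1)^2+a := by nlinarith
  have d3 : (0:ℝ) < g^2-g+a := by nlinarith
  rw [div_add_div _ _ (by positivity : ((g^2+a)^2:ℝ) ≠ 0) (by positivity : (((g-1)^2+a)^2:ℝ) ≠ 0),
    div_le_div_iff₀ (by positivity) (by positivity)]
  nlinarith [hc0, mul_nonneg hc1 hm, mul_nonneg hc2 (mul_nonneg hm hm),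
    mul_nonneg hc3 (mul_nonneg (mul_nonneg hm hm) hm)]

private lemma lem_psi (g a : ℝ) (hg1 : 1.61 ≤ g) (hg2 : g ≤ 1.76) (ha : 1 ≤ a) :
    0 ≤ (a-g^2)/(g^2+a)^2 + (a-(g-1)^2)/((g-1)^2+a)^2 := by
  have h1 : (0:ℝ) ≤ g - 1.61 := by linarith
  have h2 : (0:ℝ) ≤ 1.76 - g := by linarith
  have hm : (0:ℝ) ≤ a - 1 := by linarith
  have hgg := mul_nonneg h1 h2
  have hc0 : (0:ℝ) ≤ -2*g^6+6*g^5-9*g^4+8*g^3+3*g^2-6*g+4 := by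
    nlinarith [hgg, mul_nonneg hgg hgg, mul_nonneg (mul_nonneg hgg hgg) hgg]
  have hc1 : (0:ℝ) ≤ -2*g^4+4*g^3+6*g^2-8*g+9 := by nlinarith [hgg, mul_nonneg hgg hgg]
  have hc2 : (0:ℝ) ≤ 2*g^2-2*g+7 := by nlinarith
  have d1 : (0:ℝ) < g^2+a := by nlinarith
  have d2 : (0:ℝ) < (g-1)^2+a := by nlinarith
  rw [div_add_div _ _ (by positivity : ((g^2+a)^2:ℝ) ≠ 0) (by positivity : (((g-1)^2+a)^2:ℝ) ≠ 0)]
  apply div_nonneg _ (by positivity)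
  nlinarith [hc0, mul_nonneg hc1 hm, mul_nonneg hc2 (mul_nonneg hm hm),
    mul_nonneg (mul_nonneg hm hm) hm]

private lemma lem_CR (g a : ℝ) (hg1 : 1.61 ≤ g) (hg2 : g ≤ 1.76) (ha : 1 ≤ a) :
    (46/100)*((a-g^2)/(g^2+a)^2 + (a-(g-1)^2)/((g-1)^2+a)^2) ≤ (13/10)*((a-1/2)/(a+1/2)^2) := by
  have h1 : (0:ℝ) ≤ g - 1.61 := by linarith
  have h2 : (0:ℝ) ≤ 1.76 - g := by linarith
  have hm : (0:ℝ) ≤ a - 1 := by linarith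
  have hgg := mul_nonneg h1 h2
  have hgg2 := mul_nonneg hgg hgg
  have hc0 : (0:ℝ) ≤ (13/20)*g^8-(13/5)*g^7+(857/100)*g^6-(1661/100)*g^5+(4593/200)*g^4-(532/25)*g^3+(1459/200)*g^2+(101/100)*g-(77/50) := by
    nlinarith [hgg, hgg2, mul_nonneg hgg2 hgg, mul_nonneg hgg2 hgg2]
  have hc1 : (0:ℝ) ≤ (13/10)*g^8-(26/5)*g^7+(459/25)*g^6-(922/25)*g^5+(5869/100)*g^4-(3099/50)*g^3+(651/20)*g^2-(171/25)*g-(367/200) := by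
    nlinarith [hgg, hgg2, mul_nonneg hgg2 hgg, mul_nonneg hgg2 hgg2]
  have hc2 : (0:ℝ) ≤ (153/25)*g^6-(459/25)*g^5+(223/5)*g^4-(293/5)*g^3+(4677/100)*g^2-(2053/100)*g+(509/200) := by
    nlinarith [hgg, hgg2, mul_nonneg hgg2 hgg]
  have hc3 : (0:ℝ) ≤ (218/25)*g^4-(436/25)*g^3+(642/25)*g^2-(424/25)*g+(493/100) := by
    nlinarith [hgg, hgg2]
  have hc4 : (0:ℝ) ≤ (107/25)*g^2-(107/25)*g+(247/100) := by nlinarith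
  have d1 : (0:ℝ) < g^2+a := by nlinarith
  have d2 : (0:ℝ) < (g-1)^2+a := by nlinarith
  have d3 : (0:ℝ) < a+1/2 := by linarith
  rw [div_add_div _ _ (by positivity : ((g^2+a)^2:ℝ) ≠ 0) (by positivity : (((g-1)^2+a)^2:ℝ) ≠ 0),
    ← mul_div_assoc, ← mul_div_assoc, div_le_div_iff₀ (by positivity) (by positivity)]
  nlinarith [hc0, mul_nonneg hc1 hm, mul_nonneg hc2 (mul_nonneg hm hm),
    mul_nonneg hc3 (mul_nonneg (mul_nonneg hm hm) hm),
    mul_nonneg hc4 (mul_nonneg (mul_nonneg hm hm) (mul_nonneg hm hm)),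
    mul_nonneg (mul_nonneg (mul_nonneg hm hm) (mul_nonneg hm hm)) hm]

private lemma lem_CL (x a : ℝ) (hx1 : 1 ≤ x) (hx2 : x ≤ 1.15) (ha : 1 ≤ a) :
    (13/10)*((a-1/2)/(a+1/2)^2) ≤ (a-x^2)/(x^2+a)^2 + (a-(x-1)^2)/((x-1)^2+a)^2 := by
  have h1 : (0:ℝ) ≤ x - 1 := by linarith
  have h2 : (0:ℝ) ≤ 1.15 - x := by linarith
  have hm : (0:ℝ) ≤ a - 1 := by linarith
  have hgg := mul_nonneg h1 h2
  have hgg2 := mul_nonneg hgg hgg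
  have hc0 : (0:ℝ) ≤ -(13/20)*x^8+(13/5)*x^7-11*x^6+(239/10)*x^5-(339/10)*x^4+31*x^3-(73/20)*x^2-(83/10)*x+(32/5) := by
    nlinarith [hgg, hgg2, mul_nonneg hgg2 hgg, mul_nonneg hgg2 hgg2]
  have hc1 : (0:ℝ) ≤ -(13/10)*x^8+(26/5)*x^7-(108/5)*x^6+(233/5)*x^5-(757/10)*x^4+(399/5)*x^3-(102/5)*x^2-(63/5)*x+(77/4) := by
    nlinarith [hgg, hgg2, mul_nonneg hgg2 hgg, mul_nonneg hgg2 hgg2]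
  have hc2 : (0:ℝ) ≤ -(36/5)*x^6+(108/5)*x^5-(527/10)*x^4+(347/5)*x^3-33*x^2+(19/10)*x+(227/10) := by
    nlinarith [hgg, hgg2, mul_nonneg hgg2 hgg]
  have hc3 : (0:ℝ) ≤ -(49/5)*x^4+(98/5)*x^3-(96/5)*x^2+(47/5)*x+(137/10) := by
    nlinarith [hgg, hgg2]
  have hc4 : (0:ℝ) ≤ -(16/5)*x^2+(16/5)*x+(91/20) := by nlinarith
  have d1 : (0:ℝ) < x^2+a := by nlinarith
  have d2 : (0:ℝ) < (x-1)^2+a := by positivity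
  have d3 : (0:ℝ) < a+1/2 := by linarith
  rw [div_add_div _ _ (by positivity : ((x^2+a)^2:ℝ) ≠ 0) (by positivity : (((x-1)^2+a)^2:ℝ) ≠ 0),
    ← mul_div_assoc, div_le_div_iff₀ (by positivity) (by positivity)]
  nlinarith [hc0, mul_nonneg hc1 hm, mul_nonneg hc2 (mul_nonneg hm hm),
    mul_nonneg hc3 (mul_nonneg (mul_nonneg hm hm) hm),
    mul_nonneg hc4 (mul_nonneg (mul_nonneg hm hm) (mul_nonneg hm hm)),
    mul_nonneg (mul_nonneg (mul_nonneg hm hm) (mul_nonneg hm hm)) hm]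

private lemma hasDerivAt_term (c d e t : ℝ) (h : d + e*t^2 ≠ 0) :
    HasDerivAt (fun u : ℝ => c / (d + e*u^2)) (-(2*e*t*c) / (d+e*t^2)^2) t := by
  have h1 : HasDerivAt (fun u : ℝ => d + e*u^2) (2*e*t) t := by
    have := ((hasDerivAt_pow 2 t).const_mul e).const_add d
    refine this.congr_deriv ?_; ring
  have h2 := (hasDerivAt_const t c).div h1 h
  refine h2.congr_deriv ?_
  ring

private lemma coreB (x g r a : ℝ) (hx1 : 1 ≤ x) (ha : 1 ≤ a)
    (hg1 : 1.61 ≤ g) (hg2 : g ≤ 1.76) (hgx : g^2 - g = x^2) (hrpos : 0 < r)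
    (hsr : 2*g-1 ≤ r*x) :
    (1/r)*g/(g^2+a)^2 + (1/r)*(g-1)/((g-1)^2+a)^2 ≤ x/(x^2+a)^2 + (x-1)/((x-1)^2+a)^2 := by
  have hstar := lem_star g a hg1 hg2 ha
  rw [show g^2-g+a = x^2+a by linarith] at hstar
  have hx2a : (0:ℝ) < x^2+a := by nlinarith
  have key1 : (1/r)*g/(g^2+a)^2 + (1/r)*(g-1)/((g-1)^2+a)^2
      = (1/r)*(g/(g^2+a)^2 + (g-1)/((g-1)^2+a)^2) := by ring
  rw [key1]
  have h2 : (1/r)*(g/(g^2+a)^2 + (g-1)/((g-1)^2+a)^2) ≤ (1/r)*((2*g-1)/(x^2+a)^2) :=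
    mul_le_mul_of_nonneg_left hstar (by positivity)
  have hnum : (2*g-1)/r ≤ x := by rw [div_le_iff₀ hrpos]; nlinarith [hsr]
  have h3 : (1/r)*((2*g-1)/(x^2+a)^2) ≤ x/(x^2+a)^2 := by
    rw [show (1/r)*((2*g-1)/(x^2+a)^2) = ((2*g-1)/r)/(x^2+a)^2 by ring]
    gcongr
  have h4 : (0:ℝ) ≤ (x-1)/((x-1)^2+a)^2 := div_nonneg (by linarith) (by positivity)
  linarith

private lemma partB (k : ℕ) (hk1 : 1 ≤ k) (x : ℝ) (hx1 : 1 ≤ x) (hx2 : x ≤ 1.15) :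
    AntitoneOn (fun t => Sigk k x t) (Set.Ici 1) := by
  have hkR : (1:ℝ) ≤ (k:ℝ) := by exact_mod_cast hk1
  have hK : (1:ℝ) ≤ (k:ℝ)^2 := by nlinarith
  set r := Real.sqrt 5 with hrdef
  have hκ : κ = 1/r := rfl
  have hr2 : r^2 = 5 := Real.sq_sqrt (by norm_num)
  have hrpos : 0 < r := Real.sqrt_pos.2 (by norm_num)
  set s := Real.sqrt (1 + 4*x^2) with hsdef
  have hs2 : s^2 = 1 + 4*x^2 := Real.sq_sqrt (by positivity)
  have hspos : 0 < s := Real.sqrt_pos.2 (by positivity)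
  set g := σ₁ x with hgdef
  have hgs : g = (1+s)/2 := by rw [hgdef, σ₁, hsdef]
  have hg1 : 1.61 ≤ g := by rw [hgs]; nlinarith [hs2, hspos]
  have hg2 : g ≤ 1.76 := by rw [hgs]; nlinarith [hs2, hspos]
  have hgx : g^2 - g = x^2 := by rw [hgs]; linear_combination hs2/4
  have hxpos : (0:ℝ) < x := by linarith
  have hsr : 2*g-1 ≤ r*x := by
    rw [hgs]
    have hrx : 0 < r*x := mul_pos hrpos hxpos
    nlinarith [hs2, hr2, hspos, hrx, hx1]
  have heq : (fun t => Sigk k x t) = (fun t : ℝ =>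
      x / (x^2 + (k:ℝ)^2*t^2) + (x-1)/((x-1)^2 + (k:ℝ)^2*t^2)
      - κ * g/(g^2 + (k:ℝ)^2*t^2) - κ * (g-1)/((g-1)^2 + (k:ℝ)^2*t^2)) := rfl
  rw [heq]
  have hF : ∀ t : ℝ, 1 ≤ t → HasDerivAt (fun t : ℝ =>
      x / (x^2 + (k:ℝ)^2*t^2) + (x-1)/((x-1)^2 + (k:ℝ)^2*t^2)
      - κ * g/(g^2 + (k:ℝ)^2*t^2) - κ * (g-1)/((g-1)^2 + (k:ℝ)^2*t^2))
      ( -(2*(k:ℝ)^2*t*x)/(x^2+(k:ℝ)^2*t^2)^2 + -(2*(k:ℝ)^2*t*(x-1))/((x-1)^2+(k:ℝ)^2*t^2)^2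
        - -(2*(k:ℝ)^2*t*(κ*g))/(g^2+(k:ℝ)^2*t^2)^2
        - -(2*(k:ℝ)^2*t*(κ*(g-1)))/((g-1)^2+(k:ℝ)^2*t^2)^2 ) t := by
    intro t ht
    have hKt : (1:ℝ) ≤ (k:ℝ)^2*t^2 := by nlinarith
    have n1 : x^2 + (k:ℝ)^2*t^2 ≠ 0 := by nlinarith
    have n2 : (x-1)^2 + (k:ℝ)^2*t^2 ≠ 0 := by nlinarith [sq_nonneg (x-1)]
    have n3 : g^2 + (k:ℝ)^2*t^2 ≠ 0 := by nlinarith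
    have n4 : (g-1)^2 + (k:ℝ)^2*t^2 ≠ 0 := by nlinarith [sq_nonneg (g-1)]
    exact (((hasDerivAt_term x (x^2) ((k:ℝ)^2) t n1).add
      (hasDerivAt_term (x-1) ((x-1)^2) ((k:ℝ)^2) t n2)).sub
      (hasDerivAt_term (κ*g) (g^2) ((k:ℝ)^2) t n3)).sub
      (hasDerivAt_term (κ*(g-1)) ((g-1)^2) ((k:ℝ)^2) t n4)
  apply antitoneOn_of_deriv_nonpos (convex_Ici 1)
  · exact fun t ht => (hF t ht).continuousAt.continuousWithinAt
  · rw [interior_Ici]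
    exact fun t ht => (hF t (le_of_lt ht)).differentiableAt.differentiableWithinAt
  · intro t ht
    rw [interior_Ici] at ht
    rw [(hF t ht.le).deriv]
    have ha : (1:ℝ) ≤ (k:ℝ)^2*t^2 := by nlinarith [(Set.mem_Ioi.mp ht).le]
    have hcb := coreB x g r ((k:ℝ)^2*t^2) hx1 ha hg1 hg2 hgx hrpos hsr
    have htpos : (0:ℝ) < t := by nlinarith [(Set.mem_Ioi.mp ht).le]
    have key : ( -(2*(k:ℝ)^2*t*x)/(x^2+(k:ℝ)^2*t^2)^2 + -(2*(k:ℝ)^2*t*(x-1))/((x-1)^2+(k:ℝ)^2*t^2)^2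
        - -(2*(k:ℝ)^2*t*(κ*g))/(g^2+(k:ℝ)^2*t^2)^2
        - -(2*(k:ℝ)^2*t*(κ*(g-1)))/((g-1)^2+(k:ℝ)^2*t^2)^2 )
        = (2*(k:ℝ)^2*t) * (((1/r)*g/(g^2+(k:ℝ)^2*t^2)^2 + (1/r)*(g-1)/((g-1)^2+(k:ℝ)^2*t^2)^2)
          - (x/(x^2+(k:ℝ)^2*t^2)^2 + (x-1)/((x-1)^2+(k:ℝ)^2*t^2)^2)) := by
      rw [hκ]; ring
    rw [key]
    apply mul_nonpos_of_nonneg_of_nonpos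
    · positivity
    · linarith [hcb]

private lemma partC (k : ℕ) (hk1 : 1 ≤ k) :
    MonotoneOn (fun σ => Sigk k σ 1) (Set.Icc 1 1.15) := by
  have hkR : (1:ℝ) ≤ (k:ℝ) := by exact_mod_cast hk1
  have hK : (1:ℝ) ≤ (k:ℝ)^2 := by nlinarith
  set K := (k:ℝ)^2 with hKdef
  set r := Real.sqrt 5 with hrdef
  have hκ : κ = 1/r := rfl
  have hr2 : r^2 = 5 := Real.sq_sqrt (by norm_num)
  have hrpos : 0 < r := Real.sqrt_pos.2 (by norm_num)
  have heq : (fun σ => Sigk k σ 1) = (fun x : ℝ =>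
      x/(x^2+K) + (x-1)/((x-1)^2+K) - κ*σ₁ x/((σ₁ x)^2+K)
      - κ*(σ₁ x - 1)/((σ₁ x - 1)^2+K)) := by
    funext x; simp [Sigk, hKdef]
  rw [heq]
  have hF : ∀ x : ℝ, x ∈ Set.Icc (1:ℝ) 1.15 → ∃ E : ℝ,
      HasDerivAt (fun x : ℝ => x/(x^2+K) + (x-1)/((x-1)^2+K) - κ*σ₁ x/((σ₁ x)^2+K)
        - κ*(σ₁ x - 1)/((σ₁ x - 1)^2+K)) E x ∧ 0 ≤ E := by
    rintro x ⟨hx1, hx2⟩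
    set s := Real.sqrt (1 + 4*x^2) with hsdef
    have hs2 : s^2 = 1 + 4*x^2 := Real.sq_sqrt (by positivity)
    have hspos : 0 < s := Real.sqrt_pos.2 (by positivity)
    set g := σ₁ x with hgdef
    have hgs : g = (1+s)/2 := by rw [hgdef, σ₁, hsdef]
    have hg1 : 1.61 ≤ g := by rw [hgs]; nlinarith [hs2, hspos]
    have hg2 : g ≤ 1.76 := by rw [hgs]; nlinarith [hs2, hspos]
    have hxpos : (0:ℝ) < x := by linarith
    have n1 : x^2+K ≠ 0 := by positivity
    have n2 : (x-1)^2+K ≠ 0 := by positivity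
    have n3 : g^2+K ≠ 0 := by positivity
    have n4 : (g-1)^2+K ≠ 0 := by positivity
    have hsne : s ≠ 0 := ne_of_gt hspos
    have hrne : r ≠ 0 := ne_of_gt hrpos
    -- derivative of sqrt(1+4x^2)
    have hinner : HasDerivAt (fun y : ℝ => 1+4*y^2) (8*x) x := by
      have := ((hasDerivAt_pow 2 x).const_mul 4).const_add 1
      refine this.congr_deriv ?_; push_cast; ring
    have hsd : HasDerivAt (fun y : ℝ => Real.sqrt (1+4*y^2)) (4*x/s) x := by
      have h0 := (Real.hasDerivAt_sqrt (show (1+4*x^2:ℝ) ≠ 0 by positivity)).comp x hinner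
      have : HasDerivAt (fun y : ℝ => Real.sqrt (1+4*y^2))
          (1 / (2 * Real.sqrt (1+4*x^2)) * (8*x)) x := h0
      convert this using 1
      rw [← hsdef]; field_simp; ring
    have hG : HasDerivAt σ₁ (2*x/s) x := by
      have h1 : HasDerivAt (fun y : ℝ => (1 + Real.sqrt (1+4*y^2))/2) ((4*x/s)/2) x :=
        (hsd.const_add 1).div_const 2
      refine h1.congr_deriv ?_
      ring
    have t1 : HasDerivAt (fun y : ℝ => y/(y^2+K)) ((K-x^2)/(x^2+K)^2) x := by
      have := (hasDerivAt_id x).div ((hasDerivAt_pow 2 x).add_const K) n1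
      refine this.congr_deriv ?_
      simp only [id_eq]
      push_cast
      ring
    have t2 : HasDerivAt (fun y : ℝ => (y-1)/((y-1)^2+K)) ((K-(x-1)^2)/((x-1)^2+K)^2) x := by
      have := ((hasDerivAt_id x).sub_const 1).div
        ((((hasDerivAt_id x).sub_const 1).pow 2).add_const K) n2
      refine this.congr_deriv ?_
      simp only [Pi.pow_apply, id_eq]
      push_cast
      ring
    have t3 : HasDerivAt (fun y : ℝ => κ*σ₁ y/((σ₁ y)^2+K))
        (κ*(2*x/s)*((K-g^2)/(g^2+K)^2)) x := by
      have := (hG.const_mul κ).div ((hG.pow 2).add_const K) n3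
      refine this.congr_deriv ?_
      simp only [Pi.pow_apply]
      push_cast
      ring
    have t4 : HasDerivAt (fun y : ℝ => κ*(σ₁ y - 1)/((σ₁ y - 1)^2+K))
        (κ*(2*x/s)*((K-(g-1)^2)/((g-1)^2+K)^2)) x := by
      have := ((hG.sub_const 1).const_mul κ).div
        ((((hG.sub_const 1).pow 2).add_const K) ) n4
      refine this.congr_deriv ?_
      simp only [Pi.pow_apply]
      push_cast
      ring
    have Htot := ((t1.add t2).sub t3).sub t4
    refine ⟨(K-x^2)/(x^2+K)^2 + (K-(x-1)^2)/((x-1)^2+K)^2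
      - (1/r)*(2*x/s)*((K-g^2)/(g^2+K)^2 + (K-(g-1)^2)/((g-1)^2+K)^2), ?_, ?_⟩
    · refine Htot.congr_deriv ?_
      rw [hκ]
      ring
    · have hpg := lem_psi g K hg1 hg2 hK
      have hsge : r ≤ s := by nlinarith [hs2, hr2, hspos, hrpos]
      have h5 : (5:ℝ) ≤ r*s := by nlinarith [hr2, hsge, hrpos]
      have hrs : (0:ℝ) < r*s := by linarith
      have hcoef2 : (1/r)*(2*x/s) ≤ 46/100 := by
        rw [show (1/r)*(2*x/s) = (2*x)/(r*s) by field_simp]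
        rw [div_le_iff₀ hrs]
        nlinarith
      have hmul : (1/r)*(2*x/s)*((K-g^2)/(g^2+K)^2 + (K-(g-1)^2)/((g-1)^2+K)^2)
          ≤ (46/100)*((K-g^2)/(g^2+K)^2 + (K-(g-1)^2)/((g-1)^2+K)^2) :=
        mul_le_mul_of_nonneg_right hcoef2 hpg
      have hCR := lem_CR g K hg1 hg2 hK
      have hCL := lem_CL x K hx1 hx2 hK
      linarith
  apply monotoneOn_of_deriv_nonneg (convex_Icc 1 1.15)
  · intro y hy
    obtain ⟨E, hE, _⟩ := hF y hy
    exact hE.continuousAt.continuousWithinAt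
  · rw [interior_Icc]
    intro y hy
    obtain ⟨E, hE, _⟩ := hF y (Set.mem_Icc_of_Ioo hy)
    exact hE.differentiableAt.differentiableWithinAt
  · rw [interior_Icc]
    intro y hy
    obtain ⟨E, hE, hE0⟩ := hF y (Set.mem_Icc_of_Ioo hy)
    rw [hE.deriv]
    exact hE0


/-- For `0 < ε ≤ 0.15`, `1 ≤ k ≤ 16`, `1 < σ ≤ 1 + ε` and `t ≥ 1`:
`Σ_k(σ,t) ≤ Σ_k(1+ε,1)`; indeed `Σ_k(σ,·)` is decreasing on `t ≥ 1` at fixed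
`σ`, and `Σ_k(·,1)` is increasing on `1 ≤ σ ≤ 1.15`. -/
theorem Sigk_le (ε : ℝ) (hε : 0 < ε) (hε' : ε ≤ 0.15) :
    (∀ k : ℕ, 1 ≤ k → k ≤ 16 → ∀ σ t : ℝ, 1 < σ → σ ≤ 1 + ε → 1 ≤ t →
      Sigk k σ t ≤ Sigk k (1 + ε) 1) ∧
    (∀ k : ℕ, 1 ≤ k → k ≤ 16 → ∀ σ : ℝ, 1 < σ → σ ≤ 1 + ε →
      AntitoneOn (fun t => Sigk k σ t) (Set.Ici 1)) ∧
    (∀ k : ℕ, 1 ≤ k → k ≤ 16 →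
      MonotoneOn (fun σ => Sigk k σ 1) (Set.Icc 1 1.15)) := by
  have h115 : (1:ℝ) + ε ≤ 1.15 := by norm_num at hε' ⊢; linarith
  refine ⟨?_, ?_, ?_⟩
  · intro k hk1 hk16 σ t hσ1 hσ2 ht
    have h1 : Sigk k σ t ≤ Sigk k σ 1 :=
      partB k hk1 σ hσ1.le (by linarith) (Set.mem_Ici.2 le_rfl) (Set.mem_Ici.2 ht) ht
    have h2 : Sigk k σ 1 ≤ Sigk k (1+ε) 1 :=
      partC k hk1 ⟨hσ1.le, by linarith⟩ ⟨by linarith, by linarith⟩ hσ2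
    linarith
  · intro k hk1 hk16 σ hσ1 hσ2
    exact partB k hk1 σ hσ1.le (by linarith)
  · intro k hk1 hk16
    exact partC k hk1
end

section
/- For all real σ with 1 < σ ≤ 1.15 and all real t ≥ 1, the values Σ_k(σ,t) for k = 1, 2, ..., 16 are bounded above, respectively, by: 0.23445352, 0.06869804, 0.02783858, 0.01427867, 0.0085573, 0.00568194, 0.00404715, 0.00303134, 0.00235718, 0.00188669, 0.00154513, 0.00128917, 0.0010924, 0.00093759, 0.00081374, 0.00071303. -/
/-- Admissible values `𝓑_{0.15}(k)` for `k = 1, …, 16` (Table 1). -/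
noncomputable def B015 : ℕ → ℝ
  | 1 => 0.23445352
  | 2 => 0.06869804
  | 3 => 0.02783858
  | 4 => 0.01427867
  | 5 => 0.0085573
  | 6 => 0.00568194
  | 7 => 0.00404715
  | 8 => 0.00303134
  | 9 => 0.00235718
  | 10 => 0.00188669
  | 11 => 0.00154513
  | 12 => 0.00128917
  | 13 => 0.0010924
  | 14 => 0.00093759
  | 15 => 0.00081374
  | 16 => 0.00071303
  | _ => 0

lemma sqL (σ : ℝ) (h1 : 1 ≤ σ) (h2 : σ ≤ 23/20) :
    5 * ((178315737909/1000000000000 : ℝ) + (82025239436/100000000000 : ℝ) * σ)^2 ≤ 1 + 4*σ^2 := by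
  nlinarith [sq_nonneg (σ - 23/20)]

set_option maxHeartbeats 2000000 in
lemma glue (a b Bk : ℝ) (m : ℕ) (σ t : ℝ) (hσ1 : 1 < σ) (hσ2 : σ ≤ 23/20) (ht : 1 ≤ t)
    (hm : 1 ≤ m)
    (hL0 : 0 ≤ a + b * σ)
    (hL : 5 * (a + b*σ)^2 ≤ 1 + 4*σ^2)
    (key : ∀ u : ℝ, ((m:ℝ))^2 ≤ u →
      0 ≤ Bk * (σ^2+u) * ((σ-1)^2+u) * ((σ^2+u)^2+u)
        - σ * ((σ-1)^2+u) * ((σ^2+u)^2+u) - (σ-1) * (σ^2+u) * ((σ^2+u)^2+u)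
        + (a + b*σ) * (σ^2+u)^2 * ((σ-1)^2+u)) :
    Sigk m σ t ≤ Bk := by
  unfold Sigk
  have hm1 : (1:ℝ) ≤ (m:ℝ) := by exact_mod_cast hm
  have ht2 : (1:ℝ) ≤ t^2 := by nlinarith
  have hu1 : ((m:ℝ))^2 ≤ (m:ℝ)^2 * t^2 := by nlinarith [sq_nonneg (m:ℝ)]
  set u : ℝ := (m:ℝ)^2 * t^2 with hu_def
  have hupos : (0:ℝ) < u := by nlinarith
  have hQ := key u hu1
  set R : ℝ := Real.sqrt (1 + 4*σ^2) with hRdef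
  set c : ℝ := σ₁ σ with hcdef
  have hRnn : (0:ℝ) ≤ 1 + 4*σ^2 := by positivity
  have hceq : c = (1 + R)/2 := by
    rw [hcdef]; unfold σ₁; rw [← hRdef]
  have hR2 : R^2 = 1 + 4*σ^2 := Real.sq_sqrt hRnn
  have hRpos : 0 ≤ R := Real.sqrt_nonneg _
  have hR2' : 2 ≤ R := by nlinarith
  have hc2 : c^2 = c + σ^2 := by rw [hceq]; linear_combination hR2/4
  have h2c : 2*c - 1 = R := by rw [hceq]; ring
  have hc1 : 1 < c := by rw [hceq]; linarith
  have hs5 : Real.sqrt 5 ^ 2 = 5 := Real.sq_sqrt (by norm_num)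
  have hs5pos : 0 < Real.sqrt 5 := Real.sqrt_pos.mpr (by norm_num)
  have hXle : Real.sqrt 5 * (a + b*σ) ≤ R := by
    nlinarith [mul_nonneg hs5pos.le hL0]
  have hκR : a + b*σ ≤ κ * R := by
    rw [κ, div_mul_eq_mul_div, le_div_iff₀ hs5pos]
    nlinarith
  have hd1 : (0:ℝ) < σ^2 + u := by positivity
  have hd2 : (0:ℝ) < (σ-1)^2 + u := by positivity
  have hd3 : (0:ℝ) < (σ^2+u)^2 + u := by positivity
  have hcd1 : (0:ℝ) < c^2 + u := by positivity
  have hcd2 : (0:ℝ) < (c-1)^2 + u := by positivity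
  have hden : (c^2+u) * ((c-1)^2+u) = (σ^2+u)^2 + u := by
    linear_combination (c^2 - c + σ^2 + 2*u) * hc2
  have hsum : κ * c / (c^2+u) + κ * (c-1) / ((c-1)^2+u)
      = κ * R * (σ^2+u) / ((σ^2+u)^2+u) := by
    rw [div_add_div _ _ (ne_of_gt hcd1) (ne_of_gt hcd2), hden]
    congr 1
    rw [← h2c]; linear_combination κ * (2*c-1) * hc2
  have hsum_ge : (a + b*σ) * (σ^2+u) / ((σ^2+u)^2+u)
      ≤ κ * c / (c^2+u) + κ * (c-1) / ((c-1)^2+u) := by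
    rw [hsum]
    apply (div_le_div_iff_of_pos_right hd3).mpr
    nlinarith
  have hfinal : Bk - (σ/(σ^2+u) + (σ-1)/((σ-1)^2+u) - (a+b*σ)*(σ^2+u)/((σ^2+u)^2+u))
      = (Bk * (σ^2+u) * ((σ-1)^2+u) * ((σ^2+u)^2+u)
        - σ * ((σ-1)^2+u) * ((σ^2+u)^2+u) - (σ-1) * (σ^2+u) * ((σ^2+u)^2+u)
        + (a + b*σ) * (σ^2+u)^2 * ((σ-1)^2+u))
        / ((σ^2+u) * ((σ-1)^2+u) * ((σ^2+u)^2+u)) := by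
    field_simp
    ring
  have hfin2 : 0 ≤ (Bk * (σ^2+u) * ((σ-1)^2+u) * ((σ^2+u)^2+u)
        - σ * ((σ-1)^2+u) * ((σ^2+u)^2+u) - (σ-1) * (σ^2+u) * ((σ^2+u)^2+u)
        + (a + b*σ) * (σ^2+u)^2 * ((σ-1)^2+u))
        / ((σ^2+u) * ((σ-1)^2+u) * ((σ^2+u)^2+u)) :=
    div_nonneg hQ (by positivity)
  linarith [hsum_ge, hfinal, hfin2]

lemma cert1 (σ u : ℝ) (h1 : 1 ≤ σ) (h2 : σ ≤ 23/20) (hu : (1 : ℝ) ≤ u) :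
    0 ≤ (23445352/100000000 : ℝ) * (σ^2+u) * ((σ-1)^2+u) * ((σ^2+u)^2+u)
      - σ * ((σ-1)^2+u) * ((σ^2+u)^2+u) - (σ-1) * (σ^2+u) * ((σ^2+u)^2+u)
      + ((178315737909/1000000000000 : ℝ) + (82025239436/100000000000 : ℝ) * σ) * (σ^2+u)^2 * ((σ-1)^2+u) := by
  have hx : (0:ℝ) ≤ 23/20 - σ := by linarith
  have hy : (0:ℝ) ≤ σ - 1 := by linarith
  have hv : (0:ℝ) ≤ u - 1 := by linarith
  calc (0:ℝ) ≤ (11944629667087/16402500000000) * (23/20 - σ)^0 * (σ - 1)^8 * (u - 1)^0 +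
      (31139113828478707967/4100625000000) * (23/20 - σ)^1 * (σ - 1)^7 * (u - 1)^0 +
      (824885379135255075541/16402500000000) * (23/20 - σ)^2 * (σ - 1)^6 * (u - 1)^0 +
      (29283470714148394117/205031250000) * (23/20 - σ)^3 * (σ - 1)^5 * (u - 1)^0 +
      (9246523492404433621/41006250000) * (23/20 - σ)^4 * (σ - 1)^4 * (u - 1)^0 +
      (109561080541647709/512578125) * (23/20 - σ)^5 * (σ - 1)^3 * (u - 1)^0 +
      (12471169320638812/102515625) * (23/20 - σ)^6 * (σ - 1)^2 * (u - 1)^0 +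
      (789221100475744/20503125) * (23/20 - σ)^7 * (σ - 1)^1 * (u - 1)^0 +
      (21420923665216/4100625) * (23/20 - σ)^8 * (σ - 1)^0 * (u - 1)^0 +
      (418860614384351149/41006250000) * (23/20 - σ)^0 * (σ - 1)^8 * (u - 1)^1 +
      (1800870959565861727/20503125000) * (23/20 - σ)^1 * (σ - 1)^7 * (u - 1)^1 +
      (3355809536637717187/10251562500) * (23/20 - σ)^2 * (σ - 1)^6 * (u - 1)^1 +
      (2836632980471189381/4100625000) * (23/20 - σ)^3 * (σ - 1)^5 * (u - 1)^1 +
      (37223652740840789047/41006250000) * (23/20 - σ)^4 * (σ - 1)^4 * (u - 1)^1 +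
      (388641056937417166/512578125) * (23/20 - σ)^5 * (σ - 1)^3 * (u - 1)^1 +
      (40387869692404534/102515625) * (23/20 - σ)^6 * (σ - 1)^2 * (u - 1)^1 +
      (2388762194602576/20503125) * (23/20 - σ)^7 * (σ - 1)^1 * (u - 1)^1 +
      (61598128930432/4100625) * (23/20 - σ)^8 * (σ - 1)^0 * (u - 1)^1 +
      (1590757457318741/102515625) * (23/20 - σ)^0 * (σ - 1)^8 * (u - 1)^2 +
      (12779593088654248/102515625) * (23/20 - σ)^1 * (σ - 1)^7 * (u - 1)^2 +
      (8986750598916697/20503125) * (23/20 - σ)^2 * (σ - 1)^6 * (u - 1)^2 +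
      (18062284405754168/20503125) * (23/20 - σ)^3 * (σ - 1)^5 * (u - 1)^2 +
      (22696767235343107/20503125) * (23/20 - σ)^4 * (σ - 1)^4 * (u - 1)^2 +
      (91292843817774256/102515625) * (23/20 - σ)^5 * (σ - 1)^3 * (u - 1)^2 +
      (45913685818800143/102515625) * (23/20 - σ)^6 * (σ - 1)^2 * (u - 1)^2 +
      (2639700150551312/20503125) * (23/20 - σ)^7 * (σ - 1)^1 * (u - 1)^2 +
      (13282617924304/820125) * (23/20 - σ)^8 * (σ - 1)^0 * (u - 1)^2 +
      (10289830059856/1366875) * (23/20 - σ)^0 * (σ - 1)^8 * (u - 1)^3 +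
      (16382397257632/273375) * (23/20 - σ)^1 * (σ - 1)^7 * (u - 1)^3 +
      (285381200030752/1366875) * (23/20 - σ)^2 * (σ - 1)^6 * (u - 1)^3 +
      (568365971485088/1366875) * (23/20 - σ)^3 * (σ - 1)^5 * (u - 1)^3 +
      (141548654571968/273375) * (23/20 - σ)^4 * (σ - 1)^4 * (u - 1)^3 +
      (564248340469856/1366875) * (23/20 - σ)^5 * (σ - 1)^3 * (u - 1)^3 +
      (56252713803104/273375) * (23/20 - σ)^6 * (σ - 1)^2 * (u - 1)^3 +
      (80147287281632/1366875) * (23/20 - σ)^7 * (σ - 1)^1 * (u - 1)^3 +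
      (9995713558768/1366875) * (23/20 - σ)^8 * (σ - 1)^0 * (u - 1)^3 +
      (6002010112/6561) * (23/20 - σ)^0 * (σ - 1)^8 * (u - 1)^4 +
      (48016080896/6561) * (23/20 - σ)^1 * (σ - 1)^7 * (u - 1)^4 +
      (168056283136/6561) * (23/20 - σ)^2 * (σ - 1)^6 * (u - 1)^4 +
      (336112566272/6561) * (23/20 - σ)^3 * (σ - 1)^5 * (u - 1)^4 +
      (420140707840/6561) * (23/20 - σ)^4 * (σ - 1)^4 * (u - 1)^4 +
      (336112566272/6561) * (23/20 - σ)^5 * (σ - 1)^3 * (u - 1)^4 +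
      (168056283136/6561) * (23/20 - σ)^6 * (σ - 1)^2 * (u - 1)^4 +
      (48016080896/6561) * (23/20 - σ)^7 * (σ - 1)^1 * (u - 1)^4 +
      (6002010112/6561) * (23/20 - σ)^8 * (σ - 1)^0 * (u - 1)^4 := by
        repeat' apply add_nonneg
        all_goals exact mul_nonneg (mul_nonneg (mul_nonneg (by norm_num) (pow_nonneg hx _)) (pow_nonneg hy _)) (pow_nonneg hv _)
    _ = _ := by ring

lemma cert2 (σ u : ℝ) (h1 : 1 ≤ σ) (h2 : σ ≤ 23/20) (hu : (4 : ℝ) ≤ u) :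
    0 ≤ (6869804/100000000 : ℝ) * (σ^2+u) * ((σ-1)^2+u) * ((σ^2+u)^2+u)
      - σ * ((σ-1)^2+u) * ((σ^2+u)^2+u) - (σ-1) * (σ^2+u) * ((σ^2+u)^2+u)
      + ((178315737909/1000000000000 : ℝ) + (82025239436/100000000000 : ℝ) * σ) * (σ^2+u)^2 * ((σ-1)^2+u) := by
  have hx : (0:ℝ) ≤ 23/20 - σ := by linarith
  have hy : (0:ℝ) ≤ σ - 1 := by linarith
  have hv : (0:ℝ) ≤ u - 4 := by linarith
  calc (0:ℝ) ≤ (350323953277187/16402500000000) * (23/20 - σ)^0 * (σ - 1)^8 * (u - 4)^0 +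
      (440779445171588957167/4100625000000) * (23/20 - σ)^1 * (σ - 1)^7 * (u - 4)^0 +
      (12061619308821354653141/16402500000000) * (23/20 - σ)^2 * (σ - 1)^6 * (u - 4)^0 +
      (442257667900563401267/205031250000) * (23/20 - σ)^3 * (σ - 1)^5 * (u - 4)^0 +
      (72106721343542383381/20503125000) * (23/20 - σ)^4 * (σ - 1)^4 * (u - 4)^0 +
      (1764337358902732727/512578125) * (23/20 - σ)^5 * (σ - 1)^3 * (u - 4)^0 +
      (207321427352961701/102515625) * (23/20 - σ)^6 * (σ - 1)^2 * (u - 4)^0 +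
      (2708201425757248/4100625) * (23/20 - σ)^7 * (σ - 1)^1 * (u - 4)^0 +
      (15169072913216/164025) * (23/20 - σ)^8 * (σ - 1)^0 * (u - 4)^0 +
      (1998359431836004349/41006250000) * (23/20 - σ)^0 * (σ - 1)^8 * (u - 4)^1 +
      (9087871162172776127/20503125000) * (23/20 - σ)^1 * (σ - 1)^7 * (u - 4)^1 +
      (17764671547411878887/10251562500) * (23/20 - σ)^2 * (σ - 1)^6 * (u - 4)^1 +
      (15659272536539107381/4100625000) * (23/20 - σ)^3 * (σ - 1)^5 * (u - 4)^1 +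
      (213348390198242313047/41006250000) * (23/20 - σ)^4 * (σ - 1)^4 * (u - 4)^1 +
      (2304965034192716846/512578125) * (23/20 - σ)^5 * (σ - 1)^3 * (u - 4)^1 +
      (247211882616633392/102515625) * (23/20 - σ)^6 * (σ - 1)^2 * (u - 4)^1 +
      (15058314087611408/20503125) * (23/20 - σ)^7 * (σ - 1)^1 * (u - 4)^1 +
      (79842194679952/820125) * (23/20 - σ)^8 * (σ - 1)^0 * (u - 4)^1 +
      (940806361376447/34171875) * (23/20 - σ)^0 * (σ - 1)^8 * (u - 4)^2 +
      (289363178404808/1265625) * (23/20 - σ)^1 * (σ - 1)^7 * (u - 4)^2 +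
      (5667716749043459/6834375) * (23/20 - σ)^2 * (σ - 1)^6 * (u - 4)^2 +
      (11729732293435496/6834375) * (23/20 - σ)^3 * (σ - 1)^5 * (u - 4)^2 +
      (5050422485101763/2278125) * (23/20 - σ)^4 * (σ - 1)^4 * (u - 4)^2 +
      (62547361983214352/34171875) * (23/20 - σ)^5 * (σ - 1)^3 * (u - 4)^2 +
      (32238264820985381/34171875) * (23/20 - σ)^6 * (σ - 1)^2 * (u - 4)^2 +
      (632319873756848/2278125) * (23/20 - σ)^7 * (σ - 1)^1 * (u - 4)^2 +
      (48785406782752/1366875) * (23/20 - σ)^8 * (σ - 1)^0 * (u - 4)^2 +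
      (20217245616368/4100625) * (23/20 - σ)^0 * (σ - 1)^8 * (u - 4)^3 +
      (32676451410656/820125) * (23/20 - σ)^1 * (σ - 1)^7 * (u - 4)^3 +
      (577691847292256/4100625) * (23/20 - σ)^2 * (σ - 1)^6 * (u - 4)^3 +
      (1167289440151264/4100625) * (23/20 - σ)^3 * (σ - 1)^5 * (u - 4)^3 +
      (294848259018304/820125) * (23/20 - σ)^4 * (σ - 1)^4 * (u - 4)^3 +
      (1191694482350368/4100625) * (23/20 - σ)^5 * (σ - 1)^3 * (u - 4)^3 +
      (120419377898272/820125) * (23/20 - σ)^6 * (σ - 1)^2 * (u - 4)^3 +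
      (173841560852896/4100625) * (23/20 - σ)^7 * (σ - 1)^1 * (u - 4)^3 +
      (21960462916304/4100625) * (23/20 - σ)^8 * (σ - 1)^0 * (u - 4)^3 +
      (1758669824/6561) * (23/20 - σ)^0 * (σ - 1)^8 * (u - 4)^4 +
      (14069358592/6561) * (23/20 - σ)^1 * (σ - 1)^7 * (u - 4)^4 +
      (49242755072/6561) * (23/20 - σ)^2 * (σ - 1)^6 * (u - 4)^4 +
      (98485510144/6561) * (23/20 - σ)^3 * (σ - 1)^5 * (u - 4)^4 +
      (123106887680/6561) * (23/20 - σ)^4 * (σ - 1)^4 * (u - 4)^4 +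
      (98485510144/6561) * (23/20 - σ)^5 * (σ - 1)^3 * (u - 4)^4 +
      (49242755072/6561) * (23/20 - σ)^6 * (σ - 1)^2 * (u - 4)^4 +
      (14069358592/6561) * (23/20 - σ)^7 * (σ - 1)^1 * (u - 4)^4 +
      (1758669824/6561) * (23/20 - σ)^8 * (σ - 1)^0 * (u - 4)^4 := by
        repeat' apply add_nonneg
        all_goals exact mul_nonneg (mul_nonneg (mul_nonneg (by norm_num) (pow_nonneg hx _)) (pow_nonneg hy _)) (pow_nonneg hv _)
    _ = _ := by ring

lemma cert3 (σ u : ℝ) (h1 : 1 ≤ σ) (h2 : σ ≤ 23/20) (hu : (9 : ℝ) ≤ u) :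
    0 ≤ (2783858/100000000 : ℝ) * (σ^2+u) * ((σ-1)^2+u) * ((σ^2+u)^2+u)
      - σ * ((σ-1)^2+u) * ((σ^2+u)^2+u) - (σ-1) * (σ^2+u) * ((σ^2+u)^2+u)
      + ((178315737909/1000000000000 : ℝ) + (82025239436/100000000000 : ℝ) * σ) * (σ^2+u)^2 * ((σ-1)^2+u) := by
  have hx : (0:ℝ) ≤ 23/20 - σ := by linarith
  have hy : (0:ℝ) ≤ σ - 1 := by linarith
  have hv : (0:ℝ) ≤ u - 9 := by linarith
  calc (0:ℝ) ≤ (1688241828812179/5467500000000) * (23/20 - σ)^0 * (σ - 1)^8 * (u - 9)^0 +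
      (1101244261541803695889/1366875000000) * (23/20 - σ)^1 * (σ - 1)^7 * (u - 9)^0 +
      (10154671231699668534349/1822500000000) * (23/20 - σ)^2 * (σ - 1)^6 * (u - 9)^0 +
      (1128970215835102118839/68343750000) * (23/20 - σ)^3 * (σ - 1)^5 * (u - 9)^0 +
      (372000759184395953999/13668750000) * (23/20 - σ)^4 * (σ - 1)^4 * (u - 9)^0 +
      (1532617622919738773/56953125) * (23/20 - σ)^5 * (σ - 1)^3 * (u - 9)^0 +
      (545703060977997412/34171875) * (23/20 - σ)^6 * (σ - 1)^2 * (u - 9)^0 +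
      (7198372215530272/1366875) * (23/20 - σ)^7 * (σ - 1)^1 * (u - 9)^0 +
      (1507617097024/2025) * (23/20 - σ)^8 * (σ - 1)^0 * (u - 9)^0 +
      (2051306837187960983/13668750000) * (23/20 - σ)^0 * (σ - 1)^8 * (u - 9)^1 +
      (9701903774068171909/6834375000) * (23/20 - σ)^1 * (σ - 1)^7 * (u - 9)^1 +
      (241452580454860459/42187500) * (23/20 - σ)^2 * (σ - 1)^6 * (u - 9)^1 +
      (17679172142843241727/1366875000) * (23/20 - σ)^3 * (σ - 1)^5 * (u - 9)^1 +
      (246040534997018244349/13668750000) * (23/20 - σ)^4 * (σ - 1)^4 * (u - 9)^1 +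
      (902489906865053294/56953125) * (23/20 - σ)^5 * (σ - 1)^3 * (u - 9)^1 +
      (295126408429198274/34171875) * (23/20 - σ)^6 * (σ - 1)^2 * (u - 9)^1 +
      (18239772455614576/6834375) * (23/20 - σ)^7 * (σ - 1)^1 * (u - 9)^1 +
      (32664068414336/91125) * (23/20 - σ)^8 * (σ - 1)^0 * (u - 9)^1 +
      (1423831342735147/34171875) * (23/20 - σ)^0 * (σ - 1)^8 * (u - 9)^2 +
      (12059542095054616/34171875) * (23/20 - σ)^1 * (σ - 1)^7 * (u - 9)^2 +
      (109966059061979/84375) * (23/20 - σ)^2 * (σ - 1)^6 * (u - 9)^2 +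
      (18740603357180056/6834375) * (23/20 - σ)^3 * (σ - 1)^5 * (u - 9)^2 +
      (24577413147611029/6834375) * (23/20 - σ)^4 * (σ - 1)^4 * (u - 9)^2 +
      (34297918453834784/11390625) * (23/20 - σ)^5 * (σ - 1)^3 * (u - 9)^2 +
      (53728337113225381/34171875) * (23/20 - σ)^6 * (σ - 1)^2 * (u - 9)^2 +
      (3199993352352944/6834375) * (23/20 - σ)^7 * (σ - 1)^1 * (u - 9)^2 +
      (27743905201424/455625) * (23/20 - σ)^8 * (σ - 1)^0 * (u - 9)^2 +
      (5134450056656/1366875) * (23/20 - σ)^0 * (σ - 1)^8 * (u - 9)^3 +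
      (8371809663392/273375) * (23/20 - σ)^1 * (σ - 1)^7 * (u - 9)^3 +
      (149262099150752/1366875) * (23/20 - σ)^2 * (σ - 1)^6 * (u - 9)^3 +
      (304061783421088/1366875) * (23/20 - σ)^3 * (σ - 1)^5 * (u - 9)^3 +
      (77406523394368/273375) * (23/20 - σ)^4 * (σ - 1)^4 * (u - 9)^3 +
      (315217128770656/1366875) * (23/20 - σ)^5 * (σ - 1)^3 * (u - 9)^3 +
      (32083488900064/273375) * (23/20 - σ)^6 * (σ - 1)^2 * (u - 9)^3 +
      (46639910609632/1366875) * (23/20 - σ)^7 * (σ - 1)^1 * (u - 9)^3 +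
      (5931260438768/1366875) * (23/20 - σ)^8 * (σ - 1)^0 * (u - 9)^3 +
      (712667648/6561) * (23/20 - σ)^0 * (σ - 1)^8 * (u - 9)^4 +
      (5701341184/6561) * (23/20 - σ)^1 * (σ - 1)^7 * (u - 9)^4 +
      (19954694144/6561) * (23/20 - σ)^2 * (σ - 1)^6 * (u - 9)^4 +
      (39909388288/6561) * (23/20 - σ)^3 * (σ - 1)^5 * (u - 9)^4 +
      (49886735360/6561) * (23/20 - σ)^4 * (σ - 1)^4 * (u - 9)^4 +
      (39909388288/6561) * (23/20 - σ)^5 * (σ - 1)^3 * (u - 9)^4 +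
      (19954694144/6561) * (23/20 - σ)^6 * (σ - 1)^2 * (u - 9)^4 +
      (5701341184/6561) * (23/20 - σ)^7 * (σ - 1)^1 * (u - 9)^4 +
      (712667648/6561) * (23/20 - σ)^8 * (σ - 1)^0 * (u - 9)^4 := by
        repeat' apply add_nonneg
        all_goals exact mul_nonneg (mul_nonneg (mul_nonneg (by norm_num) (pow_nonneg hx _)) (pow_nonneg hy _)) (pow_nonneg hv _)
    _ = _ := by ring

lemma cert4 (σ u : ℝ) (h1 : 1 ≤ σ) (h2 : σ ≤ 23/20) (hu : (16 : ℝ) ≤ u) :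
    0 ≤ (1427867/100000000 : ℝ) * (σ^2+u) * ((σ-1)^2+u) * ((σ^2+u)^2+u)
      - σ * ((σ-1)^2+u) * ((σ^2+u)^2+u) - (σ-1) * (σ^2+u) * ((σ^2+u)^2+u)
      + ((178315737909/1000000000000 : ℝ) + (82025239436/100000000000 : ℝ) * σ) * (σ^2+u)^2 * ((σ-1)^2+u) := by
  have hx : (0:ℝ) ≤ 23/20 - σ := by linarith
  have hy : (0:ℝ) ≤ σ - 1 := by linarith
  have hv : (0:ℝ) ≤ u - 16 := by linarith
  calc (0:ℝ) ≤ (14442964460574481/8201250000000) * (23/20 - σ)^0 * (σ - 1)^8 * (u - 16)^0 +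
      (15481327471376821942717/4100625000000) * (23/20 - σ)^1 * (σ - 1)^7 * (u - 16)^0 +
      (430275998998125937213541/16402500000000) * (23/20 - σ)^2 * (σ - 1)^6 * (u - 16)^0 +
      (16018917502203085079867/205031250000) * (23/20 - σ)^3 * (σ - 1)^5 * (u - 16)^0 +
      (2651003054605366834663/20503125000) * (23/20 - σ)^4 * (σ - 1)^4 * (u - 16)^0 +
      (65819121360133918199/512578125) * (23/20 - σ)^5 * (σ - 1)^3 * (u - 16)^0 +
      (7845285619622188997/102515625) * (23/20 - σ)^6 * (σ - 1)^2 * (u - 16)^0 +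
      (519596971946979584/20503125) * (23/20 - σ)^7 * (σ - 1)^1 * (u - 16)^0 +
      (14751000108989696/4100625) * (23/20 - σ)^8 * (σ - 1)^0 * (u - 16)^0 +
      (14498101060364791649/41006250000) * (23/20 - σ)^0 * (σ - 1)^8 * (u - 16)^1 +
      (70846328306033950727/20503125000) * (23/20 - σ)^1 * (σ - 1)^7 * (u - 16)^1 +
      (36566116276103896703/2562890625) * (23/20 - σ)^2 * (σ - 1)^6 * (u - 16)^1 +
      (134676677691523787881/4100625000) * (23/20 - σ)^3 * (σ - 1)^5 * (u - 16)^1 +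
      (1902340860235133109047/41006250000) * (23/20 - σ)^4 * (σ - 1)^4 * (u - 16)^1 +
      (21193794966924480566/512578125) * (23/20 - σ)^5 * (σ - 1)^3 * (u - 16)^1 +
      (2334661132014558824/102515625) * (23/20 - σ)^6 * (σ - 1)^2 * (u - 16)^1 +
      (145615522309265936/20503125) * (23/20 - σ)^7 * (σ - 1)^1 * (u - 16)^1 +
      (3943280098081232/4100625) * (23/20 - σ)^8 * (σ - 1)^0 * (u - 16)^1 +
      (220943490788333/3796875) * (23/20 - σ)^0 * (σ - 1)^8 * (u - 16)^2 +
      (17087878431549416/34171875) * (23/20 - σ)^1 * (σ - 1)^7 * (u - 16)^2 +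
      (12784406583460999/6834375) * (23/20 - σ)^2 * (σ - 1)^6 * (u - 16)^2 +
      (9069581577947152/2278125) * (23/20 - σ)^3 * (σ - 1)^5 * (u - 16)^2 +
      (36053895255380519/6834375) * (23/20 - σ)^4 * (σ - 1)^4 * (u - 16)^2 +
      (152361101014727752/34171875) * (23/20 - σ)^5 * (σ - 1)^3 * (u - 16)^2 +
      (26746958566381127/11390625) * (23/20 - σ)^6 * (σ - 1)^2 * (u - 16)^2 +
      (4816542987084304/6834375) * (23/20 - σ)^7 * (σ - 1)^1 * (u - 16)^2 +
      (5047266784736/54675) * (23/20 - σ)^8 * (σ - 1)^0 * (u - 16)^2 +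
      (12907062955568/4100625) * (23/20 - σ)^0 * (σ - 1)^8 * (u - 16)^3 +
      (21168232496096/820125) * (23/20 - σ)^1 * (σ - 1)^7 * (u - 16)^3 +
      (379510935892256/4100625) * (23/20 - σ)^2 * (σ - 1)^6 * (u - 16)^3 +
      (777196728775264/4100625) * (23/20 - σ)^3 * (σ - 1)^5 * (u - 16)^3 +
      (198853177083904/820125) * (23/20 - σ)^4 * (σ - 1)^4 * (u - 16)^3 +
      (813669810465568/4100625) * (23/20 - σ)^5 * (σ - 1)^3 * (u - 16)^3 +
      (83196803516512/820125) * (23/20 - σ)^6 * (σ - 1)^2 * (u - 16)^3 +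
      (121472483204896/4100625) * (23/20 - σ)^7 * (σ - 1)^1 * (u - 16)^3 +
      (15512283076304/4100625) * (23/20 - σ)^8 * (σ - 1)^0 * (u - 16)^3 +
      (365533952/6561) * (23/20 - σ)^0 * (σ - 1)^8 * (u - 16)^4 +
      (2924271616/6561) * (23/20 - σ)^1 * (σ - 1)^7 * (u - 16)^4 +
      (10234950656/6561) * (23/20 - σ)^2 * (σ - 1)^6 * (u - 16)^4 +
      (20469901312/6561) * (23/20 - σ)^3 * (σ - 1)^5 * (u - 16)^4 +
      (25587376640/6561) * (23/20 - σ)^4 * (σ - 1)^4 * (u - 16)^4 +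
      (20469901312/6561) * (23/20 - σ)^5 * (σ - 1)^3 * (u - 16)^4 +
      (10234950656/6561) * (23/20 - σ)^6 * (σ - 1)^2 * (u - 16)^4 +
      (2924271616/6561) * (23/20 - σ)^7 * (σ - 1)^1 * (u - 16)^4 +
      (365533952/6561) * (23/20 - σ)^8 * (σ - 1)^0 * (u - 16)^4 := by
        repeat' apply add_nonneg
        all_goals exact mul_nonneg (mul_nonneg (mul_nonneg (by norm_num) (pow_nonneg hx _)) (pow_nonneg hy _)) (pow_nonneg hv _)
    _ = _ := by ring

lemma cert5 (σ u : ℝ) (h1 : 1 ≤ σ) (h2 : σ ≤ 23/20) (hu : (25 : ℝ) ≤ u) :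
    0 ≤ (855730/100000000 : ℝ) * (σ^2+u) * ((σ-1)^2+u) * ((σ^2+u)^2+u)
      - σ * ((σ-1)^2+u) * ((σ^2+u)^2+u) - (σ-1) * (σ^2+u) * ((σ^2+u)^2+u)
      + ((178315737909/1000000000000 : ℝ) + (82025239436/100000000000 : ℝ) * σ) * (σ^2+u)^2 * ((σ-1)^2+u) := by
  have hx : (0:ℝ) ≤ 23/20 - σ := by linarith
  have hy : (0:ℝ) ≤ σ - 1 := by linarith
  have hv : (0:ℝ) ≤ u - 25 := by linarith
  calc (0:ℝ) ≤ (2927833008958866937/16402500000000) * (23/20 - σ)^0 * (σ - 1)^8 * (u - 25)^0 +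
      (53717739251539966582067/4100625000000) * (23/20 - σ)^1 * (σ - 1)^7 * (u - 25)^0 +
      (1496551764393185052956341/16402500000000) * (23/20 - σ)^2 * (σ - 1)^6 * (u - 25)^0 +
      (55847563396165812581317/205031250000) * (23/20 - σ)^3 * (σ - 1)^5 * (u - 25)^0 +
      (18527536622389164134749/41006250000) * (23/20 - σ)^4 * (σ - 1)^4 * (u - 25)^0 +
      (230522629578168210973/512578125) * (23/20 - σ)^5 * (σ - 1)^3 * (u - 25)^0 +
      (27537918184803385996/102515625) * (23/20 - σ)^6 * (σ - 1)^2 * (u - 25)^0 +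
      (73111596354580192/820125) * (23/20 - σ)^7 * (σ - 1)^1 * (u - 25)^0 +
      (2079958515421504/164025) * (23/20 - σ)^8 * (σ - 1)^0 * (u - 25)^0 +
      (29388882361769380549/41006250000) * (23/20 - σ)^0 * (σ - 1)^8 * (u - 25)^1 +
      (147297295091621667727/20503125000) * (23/20 - σ)^1 * (σ - 1)^7 * (u - 25)^1 +
      (309489907643309198737/10251562500) * (23/20 - σ)^2 * (σ - 1)^6 * (u - 25)^1 +
      (288715546745827510781/4100625000) * (23/20 - σ)^3 * (σ - 1)^5 * (u - 25)^1 +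
      (4119970707751432781047/41006250000) * (23/20 - σ)^4 * (σ - 1)^4 * (u - 25)^1 +
      (46281094556116336606/512578125) * (23/20 - σ)^5 * (σ - 1)^3 * (u - 25)^1 +
      (5133490876811183398/102515625) * (23/20 - σ)^6 * (σ - 1)^2 * (u - 25)^1 +
      (322071106373126992/20503125) * (23/20 - σ)^7 * (σ - 1)^1 * (u - 25)^1 +
      (8766426346616704/4100625) * (23/20 - σ)^8 * (σ - 1)^0 * (u - 25)^1 +
      (7999680658147841/102515625) * (23/20 - σ)^0 * (σ - 1)^8 * (u - 25)^2 +
      (69474923143519048/102515625) * (23/20 - σ)^1 * (σ - 1)^7 * (u - 25)^2 +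
      (52456824469968097/20503125) * (23/20 - σ)^2 * (σ - 1)^6 * (u - 25)^2 +
      (112543598677671368/20503125) * (23/20 - σ)^3 * (σ - 1)^5 * (u - 25)^2 +
      (150194561208822847/20503125) * (23/20 - σ)^4 * (σ - 1)^4 * (u - 25)^2 +
      (638753544122810656/102515625) * (23/20 - σ)^5 * (σ - 1)^3 * (u - 25)^2 +
      (338324222325468143/102515625) * (23/20 - σ)^6 * (σ - 1)^2 * (u - 25)^2 +
      (20413357375353872/20503125) * (23/20 - σ)^7 * (σ - 1)^1 * (u - 25)^2 +
      (537296646155408/4100625) * (23/20 - σ)^8 * (σ - 1)^0 * (u - 25)^2 +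
      (1280065632752/455625) * (23/20 - σ)^0 * (σ - 1)^8 * (u - 25)^3 +
      (234193209056/10125) * (23/20 - σ)^1 * (σ - 1)^7 * (u - 25)^3 +
      (37930392303584/455625) * (23/20 - σ)^2 * (σ - 1)^6 * (u - 25)^3 +
      (77953446697696/455625) * (23/20 - σ)^3 * (σ - 1)^5 * (u - 25)^3 +
      (27451593664/125) * (23/20 - σ)^4 * (σ - 1)^4 * (u - 25)^3 +
      (82146985886752/455625) * (23/20 - σ)^5 * (σ - 1)^3 * (u - 25)^3 +
      (8424786298528/91125) * (23/20 - σ)^6 * (σ - 1)^2 * (u - 25)^3 +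
      (1370658387616/50625) * (23/20 - σ)^7 * (σ - 1)^1 * (u - 25)^3 +
      (1579604146256/455625) * (23/20 - σ)^8 * (σ - 1)^0 * (u - 25)^3 +
      (219066880/6561) * (23/20 - σ)^0 * (σ - 1)^8 * (u - 25)^4 +
      (1752535040/6561) * (23/20 - σ)^1 * (σ - 1)^7 * (u - 25)^4 +
      (6133872640/6561) * (23/20 - σ)^2 * (σ - 1)^6 * (u - 25)^4 +
      (12267745280/6561) * (23/20 - σ)^3 * (σ - 1)^5 * (u - 25)^4 +
      (15334681600/6561) * (23/20 - σ)^4 * (σ - 1)^4 * (u - 25)^4 +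
      (12267745280/6561) * (23/20 - σ)^5 * (σ - 1)^3 * (u - 25)^4 +
      (6133872640/6561) * (23/20 - σ)^6 * (σ - 1)^2 * (u - 25)^4 +
      (1752535040/6561) * (23/20 - σ)^7 * (σ - 1)^1 * (u - 25)^4 +
      (219066880/6561) * (23/20 - σ)^8 * (σ - 1)^0 * (u - 25)^4 := by
        repeat' apply add_nonneg
        all_goals exact mul_nonneg (mul_nonneg (mul_nonneg (by norm_num) (pow_nonneg hx _)) (pow_nonneg hy _)) (pow_nonneg hv _)
    _ = _ := by ring

lemma cert6 (σ u : ℝ) (h1 : 1 ≤ σ) (h2 : σ ≤ 23/20) (hu : (36 : ℝ) ≤ u) :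
    0 ≤ (568194/100000000 : ℝ) * (σ^2+u) * ((σ-1)^2+u) * ((σ^2+u)^2+u)
      - σ * ((σ-1)^2+u) * ((σ^2+u)^2+u) - (σ-1) * (σ^2+u) * ((σ^2+u)^2+u)
      + ((178315737909/1000000000000 : ℝ) + (82025239436/100000000000 : ℝ) * σ) * (σ^2+u)^2 * ((σ-1)^2+u) := by
  have hx : (0:ℝ) ≤ 23/20 - σ := by linarith
  have hy : (0:ℝ) ≤ σ - 1 := by linarith
  have hv : (0:ℝ) ≤ u - 36 := by linarith
  calc (0:ℝ) ≤ (336755934384831379/5467500000000) * (23/20 - σ)^0 * (σ - 1)^8 * (u - 36)^0 +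
      (50582943999827513632489/1366875000000) * (23/20 - σ)^1 * (σ - 1)^7 * (u - 36)^0 +
      (470428556199621452551949/1822500000000) * (23/20 - σ)^2 * (σ - 1)^6 * (u - 36)^0 +
      (52739554404008108610289/68343750000) * (23/20 - σ)^3 * (σ - 1)^5 * (u - 36)^0 +
      (8760149085533714416711/6834375000) * (23/20 - σ)^4 * (σ - 1)^4 * (u - 36)^0 +
      (2694812444640369533/2109375) * (23/20 - σ)^5 * (σ - 1)^3 * (u - 36)^0 +
      (26109139489372377559/34171875) * (23/20 - σ)^6 * (σ - 1)^2 * (u - 36)^0 +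
      (1735140816084114368/6834375) * (23/20 - σ)^7 * (σ - 1)^1 * (u - 36)^0 +
      (16474587134480704/455625) * (23/20 - σ)^8 * (σ - 1)^0 * (u - 36)^0 +
      (53889400465713054949/41006250000) * (23/20 - σ)^0 * (σ - 1)^8 * (u - 36)^1 +
      (275292408691508336527/20503125000) * (23/20 - σ)^1 * (σ - 1)^7 * (u - 36)^1 +
      (585825648788881478137/10251562500) * (23/20 - σ)^2 * (σ - 1)^6 * (u - 36)^1 +
      (551548985383518814781/4100625000) * (23/20 - σ)^3 * (σ - 1)^5 * (u - 36)^1 +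
      (7926119835120357089047/41006250000) * (23/20 - σ)^4 * (σ - 1)^4 * (u - 36)^1 +
      (89537132055313056766/512578125) * (23/20 - σ)^5 * (σ - 1)^3 * (u - 36)^1 +
      (9977325614041974544/102515625) * (23/20 - σ)^6 * (σ - 1)^2 * (u - 36)^1 +
      (628407961120838416/20503125) * (23/20 - σ)^7 * (σ - 1)^1 * (u - 36)^1 +
      (17161908152654032/4100625) * (23/20 - σ)^8 * (σ - 1)^0 * (u - 36)^1 +
      (10418168110121041/102515625) * (23/20 - σ)^0 * (σ - 1)^8 * (u - 36)^2 +
      (91174712235265448/102515625) * (23/20 - σ)^1 * (σ - 1)^7 * (u - 36)^2 +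
      (69292631646979457/20503125) * (23/20 - σ)^2 * (σ - 1)^6 * (u - 36)^2 +
      (149506403785604008/20503125) * (23/20 - σ)^3 * (σ - 1)^5 * (u - 36)^2 +
      (200511177709203167/20503125) * (23/20 - σ)^4 * (σ - 1)^4 * (u - 36)^2 +
      (856469015534296256/102515625) * (23/20 - σ)^5 * (σ - 1)^3 * (u - 36)^2 +
      (455404780940720143/102515625) * (23/20 - σ)^6 * (σ - 1)^2 * (u - 36)^2 +
      (27573456693201712/20503125) * (23/20 - σ)^7 * (σ - 1)^1 * (u - 36)^2 +
      (145608274654688/820125) * (23/20 - σ)^8 * (σ - 1)^0 * (u - 36)^2 +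
      (10690531712368/4100625) * (23/20 - σ)^0 * (σ - 1)^8 * (u - 36)^3 +
      (17651492805856/820125) * (23/20 - σ)^1 * (σ - 1)^7 * (u - 36)^3 +
      (318475542252256/4100625) * (23/20 - σ)^2 * (σ - 1)^6 * (u - 36)^3 +
      (656116284791264/4100625) * (23/20 - σ)^3 * (σ - 1)^5 * (u - 36)^3 +
      (168824462266304/820125) * (23/20 - σ)^4 * (σ - 1)^4 * (u - 36)^3 +
      (694495777326368/4100625) * (23/20 - σ)^5 * (σ - 1)^3 * (u - 36)^3 +
      (71371006957472/820125) * (23/20 - σ)^6 * (σ - 1)^2 * (u - 36)^3 +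
      (104705817972896/4100625) * (23/20 - σ)^7 * (σ - 1)^1 * (u - 36)^3 +
      (13431924036304/4100625) * (23/20 - σ)^8 * (σ - 1)^0 * (u - 36)^3 +
      (48485888/2187) * (23/20 - σ)^0 * (σ - 1)^8 * (u - 36)^4 +
      (387887104/2187) * (23/20 - σ)^1 * (σ - 1)^7 * (u - 36)^4 +
      (1357604864/2187) * (23/20 - σ)^2 * (σ - 1)^6 * (u - 36)^4 +
      (2715209728/2187) * (23/20 - σ)^3 * (σ - 1)^5 * (u - 36)^4 +
      (3394012160/2187) * (23/20 - σ)^4 * (σ - 1)^4 * (u - 36)^4 +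
      (2715209728/2187) * (23/20 - σ)^5 * (σ - 1)^3 * (u - 36)^4 +
      (1357604864/2187) * (23/20 - σ)^6 * (σ - 1)^2 * (u - 36)^4 +
      (387887104/2187) * (23/20 - σ)^7 * (σ - 1)^1 * (u - 36)^4 +
      (48485888/2187) * (23/20 - σ)^8 * (σ - 1)^0 * (u - 36)^4 := by
        repeat' apply add_nonneg
        all_goals exact mul_nonneg (mul_nonneg (mul_nonneg (by norm_num) (pow_nonneg hx _)) (pow_nonneg hy _)) (pow_nonneg hv _)
    _ = _ := by ring

lemma cert7 (σ u : ℝ) (h1 : 1 ≤ σ) (h2 : σ ≤ 23/20) (hu : (49 : ℝ) ≤ u) :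
    0 ≤ (404715/100000000 : ℝ) * (σ^2+u) * ((σ-1)^2+u) * ((σ^2+u)^2+u)
      - σ * ((σ-1)^2+u) * ((σ^2+u)^2+u) - (σ-1) * (σ^2+u) * ((σ^2+u)^2+u)
      + ((178315737909/1000000000000 : ℝ) + (82025239436/100000000000 : ℝ) * σ) * (σ^2+u)^2 * ((σ-1)^2+u) := by
  have hx : (0:ℝ) ≤ 23/20 - σ := by linarith
  have hy : (0:ℝ) ≤ σ - 1 := by linarith
  have hv : (0:ℝ) ≤ u - 49 := by linarith
  calc (0:ℝ) ≤ (386427778989782827/2733750000000) * (23/20 - σ)^0 * (σ - 1)^8 * (u - 49)^0 +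
      (123176234830130703437639/1366875000000) * (23/20 - σ)^1 * (σ - 1)^7 * (u - 49)^0 +
      (1146581833061181022356349/1822500000000) * (23/20 - σ)^2 * (σ - 1)^6 * (u - 49)^0 +
      (128655220622735235507839/68343750000) * (23/20 - σ)^3 * (σ - 1)^5 * (u - 49)^0 +
      (42776290937539219457959/13668750000) * (23/20 - σ)^4 * (σ - 1)^4 * (u - 49)^0 +
      (59264478124175572511/18984375) * (23/20 - σ)^5 * (σ - 1)^3 * (u - 49)^0 +
      (63851168398026347972/34171875) * (23/20 - σ)^6 * (σ - 1)^2 * (u - 49)^0 +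
      (169869332089669792/273375) * (23/20 - σ)^7 * (σ - 1)^1 * (u - 49)^0 +
      (64563911994176/729) * (23/20 - σ)^8 * (σ - 1)^0 * (u - 49)^0 +
      (30587707810611623083/13668750000) * (23/20 - σ)^0 * (σ - 1)^8 * (u - 49)^1 +
      (158496349822192142509/6834375000) * (23/20 - σ)^1 * (σ - 1)^7 * (u - 49)^1 +
      (85102353161392199551/854296875) * (23/20 - σ)^2 * (σ - 1)^6 * (u - 49)^1 +
      (322595715176471645027/1366875000) * (23/20 - σ)^3 * (σ - 1)^5 * (u - 49)^1 +
      (4658825575879501464349/13668750000) * (23/20 - σ)^4 * (σ - 1)^4 * (u - 49)^1 +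
      (52833137016712935682/170859375) * (23/20 - σ)^5 * (σ - 1)^3 * (u - 49)^1 +
      (5905992653729778754/34171875) * (23/20 - σ)^6 * (σ - 1)^2 * (u - 49)^1 +
      (372968226067498096/6834375) * (23/20 - σ)^7 * (σ - 1)^1 * (u - 49)^1 +
      (408357076467328/54675) * (23/20 - σ)^8 * (σ - 1)^0 * (u - 49)^1 +
      (13241681493402991/102515625) * (23/20 - σ)^0 * (σ - 1)^8 * (u - 49)^2 +
      (116533692225689048/102515625) * (23/20 - σ)^1 * (σ - 1)^7 * (u - 49)^2 +
      (88983300015141557/20503125) * (23/20 - σ)^2 * (σ - 1)^6 * (u - 49)^2 +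
      (192766057461650608/20503125) * (23/20 - σ)^3 * (σ - 1)^5 * (u - 49)^2 +
      (259433092736768597/20503125) * (23/20 - σ)^4 * (σ - 1)^4 * (u - 49)^2 +
      (1111543918898448056/102515625) * (23/20 - σ)^5 * (σ - 1)^3 * (u - 49)^2 +
      (592634801463386143/102515625) * (23/20 - σ)^6 * (σ - 1)^2 * (u - 49)^2 +
      (35968974249436432/20503125) * (23/20 - σ)^7 * (σ - 1)^1 * (u - 49)^2 +
      (951772918529296/4100625) * (23/20 - σ)^8 * (σ - 1)^0 * (u - 49)^2 +
      (10160682718768/4100625) * (23/20 - σ)^0 * (σ - 1)^8 * (u - 49)^3 +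
      (16809384250336/820125) * (23/20 - σ)^1 * (σ - 1)^7 * (u - 49)^3 +
      (303835160532256/4100625) * (23/20 - σ)^2 * (σ - 1)^6 * (u - 49)^3 +
      (627023849159264/4100625) * (23/20 - σ)^3 * (σ - 1)^5 * (u - 49)^3 +
      (161597258261504/820125) * (23/20 - σ)^4 * (σ - 1)^4 * (u - 49)^3 +
      (665765872724768/4100625) * (23/20 - σ)^5 * (σ - 1)^3 * (u - 49)^3 +
      (68515436819552/820125) * (23/20 - σ)^6 * (σ - 1)^2 * (u - 49)^3 +
      (100650645636896/4100625) * (23/20 - σ)^7 * (σ - 1)^1 * (u - 49)^3 +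
      (12927970116304/4100625) * (23/20 - σ)^8 * (σ - 1)^0 * (u - 49)^3 +
      (34535680/2187) * (23/20 - σ)^0 * (σ - 1)^8 * (u - 49)^4 +
      (276285440/2187) * (23/20 - σ)^1 * (σ - 1)^7 * (u - 49)^4 +
      (966999040/2187) * (23/20 - σ)^2 * (σ - 1)^6 * (u - 49)^4 +
      (1933998080/2187) * (23/20 - σ)^3 * (σ - 1)^5 * (u - 49)^4 +
      (2417497600/2187) * (23/20 - σ)^4 * (σ - 1)^4 * (u - 49)^4 +
      (1933998080/2187) * (23/20 - σ)^5 * (σ - 1)^3 * (u - 49)^4 +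
      (966999040/2187) * (23/20 - σ)^6 * (σ - 1)^2 * (u - 49)^4 +
      (276285440/2187) * (23/20 - σ)^7 * (σ - 1)^1 * (u - 49)^4 +
      (34535680/2187) * (23/20 - σ)^8 * (σ - 1)^0 * (u - 49)^4 := by
        repeat' apply add_nonneg
        all_goals exact mul_nonneg (mul_nonneg (mul_nonneg (by norm_num) (pow_nonneg hx _)) (pow_nonneg hy _)) (pow_nonneg hv _)
    _ = _ := by ring

lemma cert8 (σ u : ℝ) (h1 : 1 ≤ σ) (h2 : σ ≤ 23/20) (hu : (64 : ℝ) ≤ u) :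
    0 ≤ (303134/100000000 : ℝ) * (σ^2+u) * ((σ-1)^2+u) * ((σ^2+u)^2+u)
      - σ * ((σ-1)^2+u) * ((σ^2+u)^2+u) - (σ-1) * (σ^2+u) * ((σ^2+u)^2+u)
      + ((178315737909/1000000000000 : ℝ) + (82025239436/100000000000 : ℝ) * σ) * (σ^2+u)^2 * ((σ-1)^2+u) := by
  have hx : (0:ℝ) ≤ 23/20 - σ := by linarith
  have hy : (0:ℝ) ≤ σ - 1 := by linarith
  have hv : (0:ℝ) ≤ u - 64 := by linarith
  calc (0:ℝ) ≤ (14606607213644436437/16402500000000) * (23/20 - σ)^0 * (σ - 1)^8 * (u - 64)^0 +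
      (804410411547017883363667/4100625000000) * (23/20 - σ)^1 * (σ - 1)^7 * (u - 64)^0 +
      (22476650985386044150505141/16402500000000) * (23/20 - σ)^2 * (σ - 1)^6 * (u - 64)^0 +
      (841171825944282862244267/205031250000) * (23/20 - σ)^3 * (σ - 1)^5 * (u - 64)^0 +
      (139919211195952047524791/20503125000) * (23/20 - σ)^4 * (σ - 1)^4 * (u - 64)^0 +
      (3491262385093068001487/512578125) * (23/20 - σ)^5 * (σ - 1)^3 * (u - 64)^0 +
      (418167104892248780021/102515625) * (23/20 - σ)^6 * (σ - 1)^2 * (u - 64)^0 +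
      (5565390321975645184/4100625) * (23/20 - σ)^7 * (σ - 1)^1 * (u - 64)^0 +
      (31745740010968064/164025) * (23/20 - σ)^8 * (σ - 1)^0 * (u - 64)^0 +
      (147459872808921439349/41006250000) * (23/20 - σ)^0 * (σ - 1)^8 * (u - 64)^1 +
      (772310691709827550127/20503125000) * (23/20 - σ)^1 * (σ - 1)^7 * (u - 64)^1 +
      (1670031077185080370637/10251562500) * (23/20 - σ)^2 * (σ - 1)^6 * (u - 64)^1 +
      (1590170605651665130381/4100625000) * (23/20 - σ)^3 * (σ - 1)^5 * (u - 64)^1 +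
      (23046221871276624993047/41006250000) * (23/20 - σ)^4 * (σ - 1)^4 * (u - 64)^1 +
      (262078969932054300446/512578125) * (23/20 - σ)^5 * (σ - 1)^3 * (u - 64)^1 +
      (29362475258200070552/102515625) * (23/20 - σ)^6 * (σ - 1)^2 * (u - 64)^1 +
      (1857729888182991248/20503125) * (23/20 - σ)^7 * (σ - 1)^1 * (u - 64)^1 +
      (10186173095214736/820125) * (23/20 - σ)^8 * (σ - 1)^0 * (u - 64)^1 +
      (5493362087544947/34171875) * (23/20 - σ)^0 * (σ - 1)^8 * (u - 64)^2 +
      (16181464497615272/11390625) * (23/20 - σ)^1 * (σ - 1)^7 * (u - 64)^2 +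
      (37195788512064059/6834375) * (23/20 - σ)^2 * (σ - 1)^6 * (u - 64)^2 +
      (80814246421863896/6834375) * (23/20 - σ)^3 * (σ - 1)^5 * (u - 64)^2 +
      (36346029966062863/2278125) * (23/20 - σ)^4 * (σ - 1)^4 * (u - 64)^2 +
      (468202832729896352/34171875) * (23/20 - σ)^5 * (σ - 1)^3 * (u - 64)^2 +
      (250112108830925381/34171875) * (23/20 - σ)^6 * (σ - 1)^2 * (u - 64)^2 +
      (1689581211148816/759375) * (23/20 - σ)^7 * (σ - 1)^1 * (u - 64)^2 +
      (402989994560992/1366875) * (23/20 - σ)^8 * (σ - 1)^0 * (u - 64)^2 +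
      (9804086688368/4100625) * (23/20 - σ)^0 * (σ - 1)^8 * (u - 64)^3 +
      (16242341241056/820125) * (23/20 - σ)^1 * (σ - 1)^7 * (u - 64)^3 +
      (293971881292256/4100625) * (23/20 - σ)^2 * (σ - 1)^6 * (u - 64)^3 +
      (607414311991264/4100625) * (23/20 - σ)^3 * (σ - 1)^5 * (u - 64)^3 +
      (156723397914304/820125) * (23/20 - σ)^4 * (σ - 1)^4 * (u - 64)^3 +
      (646381601582368/4100625) * (23/20 - σ)^5 * (σ - 1)^3 * (u - 64)^3 +
      (66587834176672/820125) * (23/20 - σ)^6 * (σ - 1)^2 * (u - 64)^3 +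
      (97911973172896/4100625) * (23/20 - σ)^7 * (σ - 1)^1 * (u - 64)^3 +
      (12587464516304/4100625) * (23/20 - σ)^8 * (σ - 1)^0 * (u - 64)^3 +
      (77602304/6561) * (23/20 - σ)^0 * (σ - 1)^8 * (u - 64)^4 +
      (620818432/6561) * (23/20 - σ)^1 * (σ - 1)^7 * (u - 64)^4 +
      (2172864512/6561) * (23/20 - σ)^2 * (σ - 1)^6 * (u - 64)^4 +
      (4345729024/6561) * (23/20 - σ)^3 * (σ - 1)^5 * (u - 64)^4 +
      (5432161280/6561) * (23/20 - σ)^4 * (σ - 1)^4 * (u - 64)^4 +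
      (4345729024/6561) * (23/20 - σ)^5 * (σ - 1)^3 * (u - 64)^4 +
      (2172864512/6561) * (23/20 - σ)^6 * (σ - 1)^2 * (u - 64)^4 +
      (620818432/6561) * (23/20 - σ)^7 * (σ - 1)^1 * (u - 64)^4 +
      (77602304/6561) * (23/20 - σ)^8 * (σ - 1)^0 * (u - 64)^4 := by
        repeat' apply add_nonneg
        all_goals exact mul_nonneg (mul_nonneg (mul_nonneg (by norm_num) (pow_nonneg hx _)) (pow_nonneg hy _)) (pow_nonneg hv _)
    _ = _ := by ring

lemma cert9 (σ u : ℝ) (h1 : 1 ≤ σ) (h2 : σ ≤ 23/20) (hu : (81 : ℝ) ≤ u) :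
    0 ≤ (235718/100000000 : ℝ) * (σ^2+u) * ((σ-1)^2+u) * ((σ^2+u)^2+u)
      - σ * ((σ-1)^2+u) * ((σ^2+u)^2+u) - (σ-1) * (σ^2+u) * ((σ^2+u)^2+u)
      + ((178315737909/1000000000000 : ℝ) + (82025239436/100000000000 : ℝ) * σ) * (σ^2+u)^2 * ((σ-1)^2+u) := by
  have hx : (0:ℝ) ≤ 23/20 - σ := by linarith
  have hy : (0:ℝ) ≤ σ - 1 := by linarith
  have hv : (0:ℝ) ≤ u - 81 := by linarith
  calc (0:ℝ) ≤ (10391927180291268079/5467500000000) * (23/20 - σ)^0 * (σ - 1)^8 * (u - 81)^0 +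
      (534789549759422015500489/1366875000000) * (23/20 - σ)^1 * (σ - 1)^7 * (u - 81)^0 +
      (4983067669846693239207949/1822500000000) * (23/20 - σ)^2 * (σ - 1)^6 * (u - 81)^0 +
      (559691299134867145276039/68343750000) * (23/20 - σ)^3 * (σ - 1)^5 * (u - 81)^0 +
      (186270676711313438419127/13668750000) * (23/20 - σ)^4 * (σ - 1)^4 * (u - 81)^0 +
      (774939053093428389221/56953125) * (23/20 - σ)^5 * (σ - 1)^3 * (u - 81)^0 +
      (278561553454013232244/34171875) * (23/20 - σ)^6 * (σ - 1)^2 * (u - 81)^0 +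
      (18543758372459986208/6834375) * (23/20 - σ)^7 * (σ - 1)^1 * (u - 81)^0 +
      (6531744710276032/16875) * (23/20 - σ)^8 * (σ - 1)^0 * (u - 81)^0 +
      (25123754846870962061/4556250000) * (23/20 - σ)^0 * (σ - 1)^8 * (u - 81)^1 +
      (397979340094386220709/6834375000) * (23/20 - σ)^1 * (σ - 1)^7 * (u - 81)^1 +
      (864975847727387289679/3417187500) * (23/20 - σ)^2 * (σ - 1)^6 * (u - 81)^1 +
      (275506200883105101509/455625000) * (23/20 - σ)^3 * (σ - 1)^5 * (u - 81)^1 +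
      (12009944187946364596349/13668750000) * (23/20 - σ)^4 * (σ - 1)^4 * (u - 81)^1 +
      (136852766585499057322/170859375) * (23/20 - σ)^5 * (σ - 1)^3 * (u - 81)^1 +
      (63200052787681766/140625) * (23/20 - σ)^6 * (σ - 1)^2 * (u - 81)^1 +
      (972976300593022832/6834375) * (23/20 - σ)^7 * (σ - 1)^1 * (u - 81)^1 +
      (26705466034870144/1366875) * (23/20 - σ)^8 * (σ - 1)^0 * (u - 81)^1 +
      (6712817670370547/34171875) * (23/20 - σ)^0 * (σ - 1)^8 * (u - 81)^2 +
      (19835002677356872/11390625) * (23/20 - σ)^1 * (σ - 1)^7 * (u - 81)^2 +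
      (45711662561592059/6834375) * (23/20 - σ)^2 * (σ - 1)^6 * (u - 81)^2 +
      (99532813492501496/6834375) * (23/20 - σ)^3 * (σ - 1)^5 * (u - 81)^2 +
      (14949415340984981/759375) * (23/20 - σ)^4 * (σ - 1)^4 * (u - 81)^2 +
      (578662851329706752/34171875) * (23/20 - σ)^5 * (σ - 1)^3 * (u - 81)^2 +
      (309558668331953381/34171875) * (23/20 - σ)^6 * (σ - 1)^2 * (u - 81)^2 +
      (6281371248385168/2278125) * (23/20 - σ)^7 * (σ - 1)^1 * (u - 81)^2 +
      (99992051163632/273375) * (23/20 - σ)^8 * (σ - 1)^0 * (u - 81)^2 +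
      (1061501581552/455625) * (23/20 - σ)^0 * (σ - 1)^8 * (u - 81)^3 +
      (1760417245664/91125) * (23/20 - σ)^1 * (σ - 1)^7 * (u - 81)^3 +
      (31892936463584/455625) * (23/20 - σ)^2 * (σ - 1)^6 * (u - 81)^3 +
      (65957896553696/455625) * (23/20 - σ)^3 * (σ - 1)^5 * (u - 81)^3 +
      (17032668619456/91125) * (23/20 - σ)^4 * (σ - 1)^4 * (u - 81)^3 +
      (70304206699552/455625) * (23/20 - σ)^5 * (σ - 1)^3 * (u - 81)^3 +
      (7247849321888/91125) * (23/20 - σ)^6 * (σ - 1)^2 * (u - 81)^3 +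
      (10664790576544/455625) * (23/20 - σ)^7 * (σ - 1)^1 * (u - 81)^3 +
      (1371952306256/455625) * (23/20 - σ)^8 * (σ - 1)^0 * (u - 81)^3 +
      (60343808/6561) * (23/20 - σ)^0 * (σ - 1)^8 * (u - 81)^4 +
      (482750464/6561) * (23/20 - σ)^1 * (σ - 1)^7 * (u - 81)^4 +
      (1689626624/6561) * (23/20 - σ)^2 * (σ - 1)^6 * (u - 81)^4 +
      (3379253248/6561) * (23/20 - σ)^3 * (σ - 1)^5 * (u - 81)^4 +
      (4224066560/6561) * (23/20 - σ)^4 * (σ - 1)^4 * (u - 81)^4 +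
      (3379253248/6561) * (23/20 - σ)^5 * (σ - 1)^3 * (u - 81)^4 +
      (1689626624/6561) * (23/20 - σ)^6 * (σ - 1)^2 * (u - 81)^4 +
      (482750464/6561) * (23/20 - σ)^7 * (σ - 1)^1 * (u - 81)^4 +
      (60343808/6561) * (23/20 - σ)^8 * (σ - 1)^0 * (u - 81)^4 := by
        repeat' apply add_nonneg
        all_goals exact mul_nonneg (mul_nonneg (mul_nonneg (by norm_num) (pow_nonneg hx _)) (pow_nonneg hy _)) (pow_nonneg hv _)
    _ = _ := by ring

lemma cert10 (σ u : ℝ) (h1 : 1 ≤ σ) (h2 : σ ≤ 23/20) (hu : (100 : ℝ) ≤ u) :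
    0 ≤ (188669/100000000 : ℝ) * (σ^2+u) * ((σ-1)^2+u) * ((σ^2+u)^2+u)
      - σ * ((σ-1)^2+u) * ((σ^2+u)^2+u) - (σ-1) * (σ^2+u) * ((σ^2+u)^2+u)
      + ((178315737909/1000000000000 : ℝ) + (82025239436/100000000000 : ℝ) * σ) * (σ^2+u)^2 * ((σ-1)^2+u) := by
  have hx : (0:ℝ) ≤ 23/20 - σ := by linarith
  have hy : (0:ℝ) ≤ σ - 1 := by linarith
  have hv : (0:ℝ) ≤ u - 100 := by linarith
  calc (0:ℝ) ≤ (13127182600421271353/4100625000000) * (23/20 - σ)^0 * (σ - 1)^8 * (u - 100)^0 +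
      (2983332474876570598506817/4100625000000) * (23/20 - σ)^1 * (σ - 1)^7 * (u - 100)^0 +
      (83419877476932947729046341/16402500000000) * (23/20 - σ)^2 * (σ - 1)^6 * (u - 100)^0 +
      (3124131167119218310360067/205031250000) * (23/20 - σ)^3 * (σ - 1)^5 * (u - 100)^0 +
      (520021407800067822156637/20503125000) * (23/20 - σ)^4 * (σ - 1)^4 * (u - 100)^0 +
      (12984297394371526751423/512578125) * (23/20 - σ)^5 * (σ - 1)^3 * (u - 100)^0 +
      (1556218885004251455221/102515625) * (23/20 - σ)^6 * (σ - 1)^2 * (u - 100)^0 +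
      (4144995354462402368/820125) * (23/20 - σ)^7 * (σ - 1)^1 * (u - 100)^0 +
      (118291691517828416/164025) * (23/20 - σ)^8 * (σ - 1)^0 * (u - 100)^0 +
      (333546739964093146649/41006250000) * (23/20 - σ)^0 * (σ - 1)^8 * (u - 100)^1 +
      (1772322136573055870327/20503125000) * (23/20 - σ)^1 * (σ - 1)^7 * (u - 100)^1 +
      (1933496754675005285881/5125781250) * (23/20 - σ)^2 * (σ - 1)^6 * (u - 100)^1 +
      (3704932607146113934081/4100625000) * (23/20 - σ)^3 * (σ - 1)^5 * (u - 100)^1 +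
      (53941296445950676941047/41006250000) * (23/20 - σ)^4 * (σ - 1)^4 * (u - 100)^1 +
      (615593421719676533606/512578125) * (23/20 - σ)^5 * (σ - 1)^3 * (u - 100)^1 +
      (69166284269291394848/102515625) * (23/20 - σ)^6 * (σ - 1)^2 * (u - 100)^1 +
      (4386434930648987792/20503125) * (23/20 - σ)^7 * (σ - 1)^1 * (u - 100)^1 +
      (120498301244797904/4100625) * (23/20 - σ)^8 * (σ - 1)^0 * (u - 100)^1 +
      (8073241580977897/34171875) * (23/20 - σ)^0 * (σ - 1)^8 * (u - 100)^2 +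
      (71734497881839816/34171875) * (23/20 - σ)^1 * (σ - 1)^7 * (u - 100)^2 +
      (18404849717763413/2278125) * (23/20 - σ)^2 * (σ - 1)^6 * (u - 100)^2 +
      (120423024387094816/6834375) * (23/20 - σ)^3 * (σ - 1)^5 * (u - 100)^2 +
      (163012987828130539/6834375) * (23/20 - σ)^4 * (σ - 1)^4 * (u - 100)^2 +
      (233985851735754184/11390625) * (23/20 - σ)^5 * (σ - 1)^3 * (u - 100)^2 +
      (375916754887099381/34171875) * (23/20 - σ)^6 * (σ - 1)^2 * (u - 100)^2 +
      (22905182622260624/6834375) * (23/20 - σ)^7 * (σ - 1)^1 * (u - 100)^2 +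
      (22526528534368/50625) * (23/20 - σ)^8 * (σ - 1)^0 * (u - 100)^2 +
      (9371145192368/4100625) * (23/20 - σ)^0 * (σ - 1)^8 * (u - 100)^3 +
      (15553590757856/820125) * (23/20 - σ)^1 * (σ - 1)^7 * (u - 100)^3 +
      (281986327972256/4100625) * (23/20 - σ)^2 * (σ - 1)^6 * (u - 100)^3 +
      (583575069031264/4100625) * (23/20 - σ)^3 * (σ - 1)^5 * (u - 100)^3 +
      (150795728946304/820125) * (23/20 - σ)^4 * (σ - 1)^4 * (u - 100)^3 +
      (622796196206368/4100625) * (23/20 - σ)^5 * (σ - 1)^3 * (u - 100)^3 +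
      (64241491029472/820125) * (23/20 - σ)^6 * (σ - 1)^2 * (u - 100)^3 +
      (94577008292896/4100625) * (23/20 - σ)^7 * (σ - 1)^1 * (u - 100)^3 +
      (12172654276304/4100625) * (23/20 - σ)^8 * (σ - 1)^0 * (u - 100)^3 +
      (48299264/6561) * (23/20 - σ)^0 * (σ - 1)^8 * (u - 100)^4 +
      (386394112/6561) * (23/20 - σ)^1 * (σ - 1)^7 * (u - 100)^4 +
      (1352379392/6561) * (23/20 - σ)^2 * (σ - 1)^6 * (u - 100)^4 +
      (2704758784/6561) * (23/20 - σ)^3 * (σ - 1)^5 * (u - 100)^4 +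
      (3380948480/6561) * (23/20 - σ)^4 * (σ - 1)^4 * (u - 100)^4 +
      (2704758784/6561) * (23/20 - σ)^5 * (σ - 1)^3 * (u - 100)^4 +
      (1352379392/6561) * (23/20 - σ)^6 * (σ - 1)^2 * (u - 100)^4 +
      (386394112/6561) * (23/20 - σ)^7 * (σ - 1)^1 * (u - 100)^4 +
      (48299264/6561) * (23/20 - σ)^8 * (σ - 1)^0 * (u - 100)^4 := by
        repeat' apply add_nonneg
        all_goals exact mul_nonneg (mul_nonneg (mul_nonneg (by norm_num) (pow_nonneg hx _)) (pow_nonneg hy _)) (pow_nonneg hv _)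
    _ = _ := by ring

lemma cert11 (σ u : ℝ) (h1 : 1 ≤ σ) (h2 : σ ≤ 23/20) (hu : (121 : ℝ) ≤ u) :
    0 ≤ (154513/100000000 : ℝ) * (σ^2+u) * ((σ-1)^2+u) * ((σ^2+u)^2+u)
      - σ * ((σ-1)^2+u) * ((σ^2+u)^2+u) - (σ-1) * (σ^2+u) * ((σ^2+u)^2+u)
      + ((178315737909/1000000000000 : ℝ) + (82025239436/100000000000 : ℝ) * σ) * (σ^2+u)^2 * ((σ-1)^2+u) := by
  have hx : (0:ℝ) ≤ 23/20 - σ := by linarith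
  have hy : (0:ℝ) ≤ σ - 1 := by linarith
  have hv : (0:ℝ) ≤ u - 121 := by linarith
  calc (0:ℝ) ≤ (22273880803723297889/2050312500000) * (23/20 - σ)^0 * (σ - 1)^8 * (u - 121)^0 +
      (5238697132454412693241217/4100625000000) * (23/20 - σ)^1 * (σ - 1)^7 * (u - 121)^0 +
      (146515238854850063668689541/16402500000000) * (23/20 - σ)^2 * (σ - 1)^6 * (u - 121)^0 +
      (5488284206736537777565117/205031250000) * (23/20 - σ)^3 * (σ - 1)^5 * (u - 121)^0 +
      (1827475413729351096469261/41006250000) * (23/20 - σ)^4 * (σ - 1)^4 * (u - 121)^0 +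
      (22819701750042971354629/512578125) * (23/20 - σ)^5 * (σ - 1)^3 * (u - 121)^0 +
      (2735592046198751072092/102515625) * (23/20 - σ)^6 * (σ - 1)^2 * (u - 121)^0 +
      (182193006250872237664/20503125) * (23/20 - σ)^7 * (σ - 1)^1 * (u - 121)^0 +
      (5200519035344117056/4100625) * (23/20 - σ)^8 * (σ - 1)^0 * (u - 121)^0 +
      (476274089504759691049/41006250000) * (23/20 - σ)^0 * (σ - 1)^8 * (u - 121)^1 +
      (2543207666967429783127/20503125000) * (23/20 - σ)^1 * (σ - 1)^7 * (u - 121)^1 +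
      (2782863761852444518331/5125781250) * (23/20 - σ)^2 * (σ - 1)^6 * (u - 121)^1 +
      (5343456203439991268081/4100625000) * (23/20 - σ)^3 * (σ - 1)^5 * (u - 121)^1 +
      (77914508056099411409047/41006250000) * (23/20 - σ)^4 * (σ - 1)^4 * (u - 121)^1 +
      (890217826799154949366/512578125) * (23/20 - σ)^5 * (σ - 1)^3 * (u - 121)^1 +
      (100115616308541368854/102515625) * (23/20 - σ)^6 * (σ - 1)^2 * (u - 121)^1 +
      (6354091307422693456/20503125) * (23/20 - σ)^7 * (σ - 1)^1 * (u - 121)^1 +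
      (174664736327228032/4100625) * (23/20 - σ)^8 * (σ - 1)^0 * (u - 121)^1 +
      (28725889773809891/102515625) * (23/20 - σ)^0 * (σ - 1)^8 * (u - 121)^2 +
      (255714928635713848/102515625) * (23/20 - σ)^1 * (σ - 1)^7 * (u - 121)^2 +
      (197125075756080877/20503125) * (23/20 - σ)^2 * (σ - 1)^6 * (u - 121)^2 +
      (430478666317520288/20503125) * (23/20 - σ)^3 * (σ - 1)^5 * (u - 121)^2 +
      (583359239238513337/20503125) * (23/20 - σ)^4 * (σ - 1)^4 * (u - 121)^2 +
      (2514386369585709256/102515625) * (23/20 - σ)^5 * (σ - 1)^3 * (u - 121)^2 +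
      (1347623153454990143/102515625) * (23/20 - σ)^6 * (σ - 1)^2 * (u - 121)^2 +
      (82172043081604112/20503125) * (23/20 - σ)^7 * (σ - 1)^1 * (u - 121)^2 +
      (436673816122192/820125) * (23/20 - σ)^8 * (σ - 1)^0 * (u - 121)^2 +
      (3078181920656/1366875) * (23/20 - σ)^0 * (σ - 1)^8 * (u - 121)^3 +
      (5112070700192/273375) * (23/20 - σ)^1 * (σ - 1)^7 * (u - 121)^3 +
      (92734122390752/1366875) * (23/20 - σ)^2 * (σ - 1)^6 * (u - 121)^3 +
      (192015498381088/1366875) * (23/20 - σ)^3 * (σ - 1)^5 * (u - 121)^3 +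
      (49641058826368/273375) * (23/20 - σ)^4 * (σ - 1)^4 * (u - 121)^3 +
      (205114455554656/1366875) * (23/20 - σ)^5 * (σ - 1)^3 * (u - 121)^3 +
      (21166615912864/273375) * (23/20 - σ)^6 * (σ - 1)^2 * (u - 121)^3 +
      (31174192289632/1366875) * (23/20 - σ)^7 * (σ - 1)^1 * (u - 121)^3 +
      (4013821718768/1366875) * (23/20 - σ)^8 * (σ - 1)^0 * (u - 121)^3 +
      (39555328/6561) * (23/20 - σ)^0 * (σ - 1)^8 * (u - 121)^4 +
      (316442624/6561) * (23/20 - σ)^1 * (σ - 1)^7 * (u - 121)^4 +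
      (1107549184/6561) * (23/20 - σ)^2 * (σ - 1)^6 * (u - 121)^4 +
      (2215098368/6561) * (23/20 - σ)^3 * (σ - 1)^5 * (u - 121)^4 +
      (2768872960/6561) * (23/20 - σ)^4 * (σ - 1)^4 * (u - 121)^4 +
      (2215098368/6561) * (23/20 - σ)^5 * (σ - 1)^3 * (u - 121)^4 +
      (1107549184/6561) * (23/20 - σ)^6 * (σ - 1)^2 * (u - 121)^4 +
      (316442624/6561) * (23/20 - σ)^7 * (σ - 1)^1 * (u - 121)^4 +
      (39555328/6561) * (23/20 - σ)^8 * (σ - 1)^0 * (u - 121)^4 := by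
        repeat' apply add_nonneg
        all_goals exact mul_nonneg (mul_nonneg (mul_nonneg (by norm_num) (pow_nonneg hx _)) (pow_nonneg hy _)) (pow_nonneg hv _)
    _ = _ := by ring

lemma cert12 (σ u : ℝ) (h1 : 1 ≤ σ) (h2 : σ ≤ 23/20) (hu : (144 : ℝ) ≤ u) :
    0 ≤ (128917/100000000 : ℝ) * (σ^2+u) * ((σ-1)^2+u) * ((σ^2+u)^2+u)
      - σ * ((σ-1)^2+u) * ((σ^2+u)^2+u) - (σ-1) * (σ^2+u) * ((σ^2+u)^2+u)
      + ((178315737909/1000000000000 : ℝ) + (82025239436/100000000000 : ℝ) * σ) * (σ^2+u)^2 * ((σ-1)^2+u) := by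
  have hx : (0:ℝ) ≤ 23/20 - σ := by linarith
  have hy : (0:ℝ) ≤ σ - 1 := by linarith
  have hv : (0:ℝ) ≤ u - 144 := by linarith
  calc (0:ℝ) ≤ (23322182279958574501/1366875000000) * (23/20 - σ)^0 * (σ - 1)^8 * (u - 144)^0 +
      (2923345828067358567282139/1366875000000) * (23/20 - σ)^1 * (σ - 1)^7 * (u - 144)^0 +
      (9086023127141014678970783/607500000000) * (23/20 - σ)^2 * (σ - 1)^6 * (u - 144)^0 +
      (3063687271582367528846089/68343750000) * (23/20 - σ)^3 * (σ - 1)^5 * (u - 144)^0 +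
      (510154560755308582550557/6834375000) * (23/20 - σ)^4 * (σ - 1)^4 * (u - 144)^0 +
      (4247559886788508200463/56953125) * (23/20 - σ)^5 * (σ - 1)^3 * (u - 144)^0 +
      (1527815552143513803127/34171875) * (23/20 - σ)^6 * (σ - 1)^2 * (u - 144)^0 +
      (20353931766119720704/1366875) * (23/20 - σ)^7 * (σ - 1)^1 * (u - 144)^0 +
      (38738009516090624/18225) * (23/20 - σ)^8 * (σ - 1)^0 * (u - 144)^0 +
      (661475631640475125049/41006250000) * (23/20 - σ)^0 * (σ - 1)^8 * (u - 144)^1 +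
      (3546016347236602118327/20503125000) * (23/20 - σ)^1 * (σ - 1)^7 * (u - 144)^1 +
      (3889423566208025940781/5125781250) * (23/20 - σ)^2 * (σ - 1)^6 * (u - 144)^1 +
      (7480284238546919592481/4100625000) * (23/20 - σ)^3 * (σ - 1)^5 * (u - 144)^1 +
      (109201232955821961693047/41006250000) * (23/20 - σ)^4 * (σ - 1)^4 * (u - 144)^1 +
      (1248822120873099590246/512578125) * (23/20 - σ)^5 * (σ - 1)^3 * (u - 144)^1 +
      (140547190205885903432/102515625) * (23/20 - σ)^6 * (σ - 1)^2 * (u - 144)^1 +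
      (8925535210451652368/20503125) * (23/20 - σ)^7 * (σ - 1)^1 * (u - 144)^1 +
      (49094839424253328/820125) * (23/20 - σ)^8 * (σ - 1)^0 * (u - 144)^1 +
      (33657579319145291/102515625) * (23/20 - σ)^0 * (σ - 1)^8 * (u - 144)^2 +
      (300054652007036248/102515625) * (23/20 - σ)^1 * (σ - 1)^7 * (u - 144)^2 +
      (231583183802823517/20503125) * (23/20 - σ)^2 * (σ - 1)^6 * (u - 144)^2 +
      (506235400838937248/20503125) * (23/20 - σ)^3 * (σ - 1)^5 * (u - 144)^2 +
      (686605701046821457/20503125) * (23/20 - σ)^4 * (σ - 1)^4 * (u - 144)^2 +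
      (2961573980897786056/102515625) * (23/20 - σ)^5 * (σ - 1)^3 * (u - 144)^2 +
      (1588317639235506143/102515625) * (23/20 - σ)^6 * (σ - 1)^2 * (u - 144)^2 +
      (96903184065853232/20503125) * (23/20 - σ)^7 * (σ - 1)^1 * (u - 144)^2 +
      (2576076585035936/4100625) * (23/20 - σ)^8 * (σ - 1)^0 * (u - 144)^2 +
      (9129613915568/4100625) * (23/20 - σ)^0 * (σ - 1)^8 * (u - 144)^3 +
      (15169205744096/820125) * (23/20 - σ)^1 * (σ - 1)^7 * (u - 144)^3 +
      (275294867812256/4100625) * (23/20 - σ)^2 * (σ - 1)^6 * (u - 144)^3 +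
      (570260983015264/4100625) * (23/20 - σ)^3 * (σ - 1)^5 * (u - 144)^3 +
      (147483985803904/820125) * (23/20 - σ)^4 * (σ - 1)^4 * (u - 144)^3 +
      (609614616225568/4100625) * (23/20 - σ)^5 * (σ - 1)^3 * (u - 144)^3 +
      (62929700204512/820125) * (23/20 - σ)^6 * (σ - 1)^2 * (u - 144)^3 +
      (92711871524896/4100625) * (23/20 - σ)^7 * (σ - 1)^1 * (u - 144)^3 +
      (11940587716304/4100625) * (23/20 - σ)^8 * (σ - 1)^0 * (u - 144)^3 +
      (33002752/6561) * (23/20 - σ)^0 * (σ - 1)^8 * (u - 144)^4 +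
      (264022016/6561) * (23/20 - σ)^1 * (σ - 1)^7 * (u - 144)^4 +
      (924077056/6561) * (23/20 - σ)^2 * (σ - 1)^6 * (u - 144)^4 +
      (1848154112/6561) * (23/20 - σ)^3 * (σ - 1)^5 * (u - 144)^4 +
      (2310192640/6561) * (23/20 - σ)^4 * (σ - 1)^4 * (u - 144)^4 +
      (1848154112/6561) * (23/20 - σ)^5 * (σ - 1)^3 * (u - 144)^4 +
      (924077056/6561) * (23/20 - σ)^6 * (σ - 1)^2 * (u - 144)^4 +
      (264022016/6561) * (23/20 - σ)^7 * (σ - 1)^1 * (u - 144)^4 +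
      (33002752/6561) * (23/20 - σ)^8 * (σ - 1)^0 * (u - 144)^4 := by
        repeat' apply add_nonneg
        all_goals exact mul_nonneg (mul_nonneg (mul_nonneg (by norm_num) (pow_nonneg hx _)) (pow_nonneg hy _)) (pow_nonneg hv _)
    _ = _ := by ring

lemma cert13 (σ u : ℝ) (h1 : 1 ≤ σ) (h2 : σ ≤ 23/20) (hu : (169 : ℝ) ≤ u) :
    0 ≤ (109240/100000000 : ℝ) * (σ^2+u) * ((σ-1)^2+u) * ((σ^2+u)^2+u)
      - σ * ((σ-1)^2+u) * ((σ^2+u)^2+u) - (σ-1) * (σ^2+u) * ((σ^2+u)^2+u)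
      + ((178315737909/1000000000000 : ℝ) + (82025239436/100000000000 : ℝ) * σ) * (σ^2+u)^2 * ((σ-1)^2+u) := by
  have hx : (0:ℝ) ≤ 23/20 - σ := by linarith
  have hy : (0:ℝ) ≤ σ - 1 := by linarith
  have hv : (0:ℝ) ≤ u - 169 := by linarith
  calc (0:ℝ) ≤ (5171586142019469637087/16402500000000) * (23/20 - σ)^0 * (σ - 1)^8 * (u - 169)^0 +
      (14110845504285536458467167/4100625000000) * (23/20 - σ)^1 * (σ - 1)^7 * (u - 169)^0 +
      (394641997178970470186461141/16402500000000) * (23/20 - σ)^2 * (σ - 1)^6 * (u - 169)^0 +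
      (14785667114554862450634517/205031250000) * (23/20 - σ)^3 * (σ - 1)^5 * (u - 169)^0 +
      (4924482911966535365889517/41006250000) * (23/20 - σ)^4 * (σ - 1)^4 * (u - 169)^0 +
      (61507817259486722210317/512578125) * (23/20 - σ)^5 * (σ - 1)^3 * (u - 169)^0 +
      (7375383875582096604556/102515625) * (23/20 - σ)^6 * (σ - 1)^2 * (u - 169)^0 +
      (98266969560787321952/4100625) * (23/20 - σ)^7 * (σ - 1)^1 * (u - 169)^0 +
      (561130280833934656/164025) * (23/20 - σ)^8 * (σ - 1)^0 * (u - 169)^0 +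
      (897313531922129552749/41006250000) * (23/20 - σ)^0 * (σ - 1)^8 * (u - 169)^1 +
      (4825118037852000866527/20503125000) * (23/20 - σ)^1 * (σ - 1)^7 * (u - 169)^1 +
      (10604511716511621583987/10251562500) * (23/20 - σ)^2 * (σ - 1)^6 * (u - 169)^1 +
      (10210353940339256736581/4100625000) * (23/20 - σ)^3 * (σ - 1)^5 * (u - 169)^1 +
      (149193308321291966453047/41006250000) * (23/20 - σ)^4 * (σ - 1)^4 * (u - 169)^1 +
      (1707375896911077799246/512578125) * (23/20 - σ)^5 * (σ - 1)^3 * (u - 169)^1 +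
      (192263087675269060582/102515625) * (23/20 - σ)^6 * (σ - 1)^2 * (u - 169)^1 +
      (12215464035744773968/20503125) * (23/20 - σ)^7 * (σ - 1)^1 * (u - 169)^1 +
      (67217430282082688/820125) * (23/20 - σ)^8 * (σ - 1)^0 * (u - 169)^1 +
      (39021833681618741/102515625) * (23/20 - σ)^0 * (σ - 1)^8 * (u - 169)^2 +
      (348279141427099048/102515625) * (23/20 - σ)^1 * (σ - 1)^7 * (u - 169)^2 +
      (269057611121576857/20503125) * (23/20 - σ)^2 * (σ - 1)^6 * (u - 169)^2 +
      (588618759194458808/20503125) * (23/20 - σ)^3 * (σ - 1)^5 * (u - 169)^2 +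
      (798877947861125347/20503125) * (23/20 - σ)^4 * (σ - 1)^4 * (u - 169)^2 +
      (3447834845879435056/102515625) * (23/20 - σ)^5 * (σ - 1)^3 * (u - 169)^2 +
      (1850033854292976143/102515625) * (23/20 - σ)^6 * (σ - 1)^2 * (u - 169)^2 +
      (112920432283849232/20503125) * (23/20 - σ)^7 * (σ - 1)^1 * (u - 169)^2 +
      (3003058472398736/4100625) * (23/20 - σ)^8 * (σ - 1)^0 * (u - 169)^2 +
      (3016103826256/1366875) * (23/20 - σ)^0 * (σ - 1)^8 * (u - 169)^3 +
      (5013267294112/273375) * (23/20 - σ)^1 * (σ - 1)^7 * (u - 169)^3 +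
      (91013972510752/1366875) * (23/20 - σ)^2 * (σ - 1)^6 * (u - 169)^3 +
      (188592583453088/1366875) * (23/20 - σ)^3 * (σ - 1)^5 * (u - 169)^3 +
      (48789567647168/273375) * (23/20 - σ)^4 * (σ - 1)^4 * (u - 169)^3 +
      (201725006428256/1366875) * (23/20 - σ)^5 * (σ - 1)^3 * (u - 169)^3 +
      (20829279097184/273375) * (23/20 - σ)^6 * (σ - 1)^2 * (u - 169)^3 +
      (30694517745632/1366875) * (23/20 - σ)^7 * (σ - 1)^1 * (u - 169)^3 +
      (3954134038768/1366875) * (23/20 - σ)^8 * (σ - 1)^0 * (u - 169)^3 +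
      (27965440/6561) * (23/20 - σ)^0 * (σ - 1)^8 * (u - 169)^4 +
      (223723520/6561) * (23/20 - σ)^1 * (σ - 1)^7 * (u - 169)^4 +
      (783032320/6561) * (23/20 - σ)^2 * (σ - 1)^6 * (u - 169)^4 +
      (1566064640/6561) * (23/20 - σ)^3 * (σ - 1)^5 * (u - 169)^4 +
      (1957580800/6561) * (23/20 - σ)^4 * (σ - 1)^4 * (u - 169)^4 +
      (1566064640/6561) * (23/20 - σ)^5 * (σ - 1)^3 * (u - 169)^4 +
      (783032320/6561) * (23/20 - σ)^6 * (σ - 1)^2 * (u - 169)^4 +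
      (223723520/6561) * (23/20 - σ)^7 * (σ - 1)^1 * (u - 169)^4 +
      (27965440/6561) * (23/20 - σ)^8 * (σ - 1)^0 * (u - 169)^4 := by
        repeat' apply add_nonneg
        all_goals exact mul_nonneg (mul_nonneg (mul_nonneg (by norm_num) (pow_nonneg hx _)) (pow_nonneg hy _)) (pow_nonneg hv _)
    _ = _ := by ring

lemma cert14 (σ u : ℝ) (h1 : 1 ≤ σ) (h2 : σ ≤ 23/20) (hu : (196 : ℝ) ≤ u) :
    0 ≤ (93759/100000000 : ℝ) * (σ^2+u) * ((σ-1)^2+u) * ((σ^2+u)^2+u)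
      - σ * ((σ-1)^2+u) * ((σ^2+u)^2+u) - (σ-1) * (σ^2+u) * ((σ^2+u)^2+u)
      + ((178315737909/1000000000000 : ℝ) + (82025239436/100000000000 : ℝ) * σ) * (σ^2+u)^2 * ((σ-1)^2+u) := by
  have hx : (0:ℝ) ≤ 23/20 - σ := by linarith
  have hy : (0:ℝ) ≤ σ - 1 := by linarith
  have hv : (0:ℝ) ≤ u - 196 := by linarith
  calc (0:ℝ) ≤ (28900005988497952459/911250000000) * (23/20 - σ)^0 * (σ - 1)^8 * (u - 196)^0 +
      (7301277762256494208109239/1366875000000) * (23/20 - σ)^1 * (σ - 1)^7 * (u - 196)^0 +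
      (204289110656168269047729847/5467500000000) * (23/20 - σ)^2 * (σ - 1)^6 * (u - 196)^0 +
      (2551863353854949424858763/22781250000) * (23/20 - σ)^3 * (σ - 1)^5 * (u - 196)^0 +
      (1275082601843082941649631/6834375000) * (23/20 - σ)^4 * (σ - 1)^4 * (u - 196)^0 +
      (31856416081547108290693/170859375) * (23/20 - σ)^5 * (σ - 1)^3 * (u - 196)^0 +
      (47164916760637951319/421875) * (23/20 - σ)^6 * (σ - 1)^2 * (u - 196)^0 +
      (254534092091621732288/6834375) * (23/20 - σ)^7 * (σ - 1)^1 * (u - 196)^0 +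
      (7268054377120073152/1366875) * (23/20 - σ)^8 * (σ - 1)^0 * (u - 196)^0 +
      (397169601258692515483/13668750000) * (23/20 - σ)^0 * (σ - 1)^8 * (u - 196)^1 +
      (2141380000765555826509/6834375000) * (23/20 - σ)^1 * (σ - 1)^7 * (u - 196)^1 +
      (1178447459906982280126/854296875) * (23/20 - σ)^2 * (σ - 1)^6 * (u - 196)^1 +
      (4543474753549340917427/1366875000) * (23/20 - σ)^3 * (σ - 1)^5 * (u - 196)^1 +
      (66441074891437948956349/13668750000) * (23/20 - σ)^4 * (σ - 1)^4 * (u - 196)^1 +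
      (760811362652522747122/170859375) * (23/20 - σ)^5 * (σ - 1)^3 * (u - 196)^1 +
      (85713934655370856768/34171875) * (23/20 - σ)^6 * (σ - 1)^2 * (u - 196)^1 +
      (5447987763199016752/6834375) * (23/20 - σ)^7 * (σ - 1)^1 * (u - 196)^1 +
      (149941436226767344/1366875) * (23/20 - σ)^8 * (σ - 1)^0 * (u - 196)^1 +
      (44800586983196791/102515625) * (23/20 - σ)^0 * (σ - 1)^8 * (u - 196)^2 +
      (400244046329059448/102515625) * (23/20 - σ)^1 * (σ - 1)^7 * (u - 196)^2 +
      (309447432287571557/20503125) * (23/20 - σ)^2 * (σ - 1)^6 * (u - 196)^2 +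
      (677427123482719408/20503125) * (23/20 - σ)^3 * (σ - 1)^5 * (u - 196)^2 +
      (919924239866519117/20503125) * (23/20 - σ)^4 * (σ - 1)^4 * (u - 196)^2 +
      (3972163101493507256/102515625) * (23/20 - σ)^5 * (σ - 1)^3 * (u - 196)^2 +
      (2132269398433790143/102515625) * (23/20 - σ)^6 * (σ - 1)^2 * (u - 196)^2 +
      (130195108567752112/20503125) * (23/20 - σ)^7 * (σ - 1)^1 * (u - 196)^2 +
      (692719695099872/820125) * (23/20 - σ)^8 * (σ - 1)^0 * (u - 196)^2 +
      (8981682008368/4100625) * (23/20 - σ)^0 * (σ - 1)^8 * (u - 196)^3 +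
      (14933729753056/820125) * (23/20 - σ)^1 * (σ - 1)^7 * (u - 196)^3 +
      (271194795252256/4100625) * (23/20 - σ)^2 * (σ - 1)^6 * (u - 196)^3 +
      (562101339911264/4100625) * (23/20 - σ)^3 * (σ - 1)^5 * (u - 196)^3 +
      (145453947394304/820125) * (23/20 - σ)^4 * (σ - 1)^4 * (u - 196)^3 +
      (601532939502368/4100625) * (23/20 - σ)^5 * (σ - 1)^3 * (u - 196)^3 +
      (62125278968672/820125) * (23/20 - σ)^6 * (σ - 1)^2 * (u - 196)^3 +
      (91567905732896/4100625) * (23/20 - σ)^7 * (σ - 1)^1 * (u - 196)^3 +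
      (11798224836304/4100625) * (23/20 - σ)^8 * (σ - 1)^0 * (u - 196)^3 +
      (8000768/2187) * (23/20 - σ)^0 * (σ - 1)^8 * (u - 196)^4 +
      (64006144/2187) * (23/20 - σ)^1 * (σ - 1)^7 * (u - 196)^4 +
      (224021504/2187) * (23/20 - σ)^2 * (σ - 1)^6 * (u - 196)^4 +
      (448043008/2187) * (23/20 - σ)^3 * (σ - 1)^5 * (u - 196)^4 +
      (560053760/2187) * (23/20 - σ)^4 * (σ - 1)^4 * (u - 196)^4 +
      (448043008/2187) * (23/20 - σ)^5 * (σ - 1)^3 * (u - 196)^4 +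
      (224021504/2187) * (23/20 - σ)^6 * (σ - 1)^2 * (u - 196)^4 +
      (64006144/2187) * (23/20 - σ)^7 * (σ - 1)^1 * (u - 196)^4 +
      (8000768/2187) * (23/20 - σ)^8 * (σ - 1)^0 * (u - 196)^4 := by
        repeat' apply add_nonneg
        all_goals exact mul_nonneg (mul_nonneg (mul_nonneg (by norm_num) (pow_nonneg hx _)) (pow_nonneg hy _)) (pow_nonneg hv _)
    _ = _ := by ring

lemma cert15 (σ u : ℝ) (h1 : 1 ≤ σ) (h2 : σ ≤ 23/20) (hu : (225 : ℝ) ≤ u) :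
    0 ≤ (81374/100000000 : ℝ) * (σ^2+u) * ((σ-1)^2+u) * ((σ^2+u)^2+u)
      - σ * ((σ-1)^2+u) * ((σ^2+u)^2+u) - (σ-1) * (σ^2+u) * ((σ^2+u)^2+u)
      + ((178315737909/1000000000000 : ℝ) + (82025239436/100000000000 : ℝ) * σ) * (σ^2+u)^2 * ((σ-1)^2+u) := by
  have hx : (0:ℝ) ≤ 23/20 - σ := by linarith
  have hy : (0:ℝ) ≤ σ - 1 := by linarith
  have hv : (0:ℝ) ≤ u - 225 := by linarith
  calc (0:ℝ) ≤ (445054206855754242679/5467500000000) * (23/20 - σ)^0 * (σ - 1)^8 * (u - 225)^0 +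
      (11007772942620352623977689/1366875000000) * (23/20 - σ)^1 * (σ - 1)^7 * (u - 225)^0 +
      (102672858783422254045355149/1822500000000) * (23/20 - σ)^2 * (σ - 1)^6 * (u - 225)^0 +
      (11543709787228977547830439/68343750000) * (23/20 - σ)^3 * (σ - 1)^5 * (u - 225)^0 +
      (3845655727703001012981383/13668750000) * (23/20 - σ)^4 * (σ - 1)^4 * (u - 225)^0 +
      (16014474728500482705797/56953125) * (23/20 - σ)^5 * (σ - 1)^3 * (u - 225)^0 +
      (5762028909441769248532/34171875) * (23/20 - σ)^6 * (σ - 1)^2 * (u - 225)^0 +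
      (15357157739418303776/273375) * (23/20 - σ)^7 * (σ - 1)^1 * (u - 225)^0 +
      (16242468695131456/2025) * (23/20 - σ)^8 * (σ - 1)^0 * (u - 225)^0 +
      (518060419024058325383/13668750000) * (23/20 - σ)^0 * (σ - 1)^8 * (u - 225)^1 +
      (2799106654153930539109/6834375000) * (23/20 - σ)^1 * (σ - 1)^7 * (u - 225)^1 +
      (228498938071694693477/126562500) * (23/20 - σ)^2 * (σ - 1)^6 * (u - 225)^1 +
      (5951650656369173732527/1366875000) * (23/20 - σ)^3 * (σ - 1)^5 * (u - 225)^1 +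
      (87087489227188135380349/13668750000) * (23/20 - σ)^4 * (σ - 1)^4 * (u - 225)^1 +
      (332568813314710758734/56953125) * (23/20 - σ)^5 * (σ - 1)^3 * (u - 225)^1 +
      (112445459815070826866/34171875) * (23/20 - σ)^6 * (σ - 1)^2 * (u - 225)^1 +
      (7149274210127185264/6834375) * (23/20 - σ)^7 * (σ - 1)^1 * (u - 225)^1 +
      (65605486793366656/455625) * (23/20 - σ)^8 * (σ - 1)^0 * (u - 225)^1 +
      (17004402637138147/34171875) * (23/20 - σ)^0 * (σ - 1)^8 * (u - 225)^2 +
      (152034779157385816/34171875) * (23/20 - σ)^1 * (σ - 1)^7 * (u - 225)^2 +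
      (4356310382365057/253125) * (23/20 - σ)^2 * (σ - 1)^6 * (u - 225)^2 +
      (257625835968009016/6834375) * (23/20 - σ)^3 * (σ - 1)^5 * (u - 225)^2 +
      (350005292229876589/6834375) * (23/20 - σ)^4 * (σ - 1)^4 * (u - 225)^2 +
      (503960451917989184/11390625) * (23/20 - σ)^5 * (σ - 1)^3 * (u - 225)^2 +
      (811855662942049381/34171875) * (23/20 - σ)^6 * (σ - 1)^2 * (u - 225)^2 +
      (49586076146120624/6834375) * (23/20 - σ)^7 * (σ - 1)^1 * (u - 225)^2 +
      (439830228455312/455625) * (23/20 - σ)^8 * (σ - 1)^0 * (u - 225)^2 +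
      (2976173621456/1366875) * (23/20 - σ)^0 * (σ - 1)^8 * (u - 225)^3 +
      (4949699982752/273375) * (23/20 - σ)^1 * (σ - 1)^7 * (u - 225)^3 +
      (89907028590752/1366875) * (23/20 - σ)^2 * (σ - 1)^6 * (u - 225)^3 +
      (186389396157088/1366875) * (23/20 - σ)^3 * (σ - 1)^5 * (u - 225)^3 +
      (48241379080768/273375) * (23/20 - σ)^4 * (σ - 1)^4 * (u - 225)^3 +
      (199542417679456/1366875) * (23/20 - σ)^5 * (σ - 1)^3 * (u - 225)^3 +
      (20612010022624/273375) * (23/20 - σ)^6 * (σ - 1)^2 * (u - 225)^3 +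
      (30385509137632/1366875) * (23/20 - σ)^7 * (σ - 1)^1 * (u - 225)^3 +
      (3915675158768/1366875) * (23/20 - σ)^8 * (σ - 1)^0 * (u - 225)^3 +
      (20831744/6561) * (23/20 - σ)^0 * (σ - 1)^8 * (u - 225)^4 +
      (166653952/6561) * (23/20 - σ)^1 * (σ - 1)^7 * (u - 225)^4 +
      (583288832/6561) * (23/20 - σ)^2 * (σ - 1)^6 * (u - 225)^4 +
      (1166577664/6561) * (23/20 - σ)^3 * (σ - 1)^5 * (u - 225)^4 +
      (1458222080/6561) * (23/20 - σ)^4 * (σ - 1)^4 * (u - 225)^4 +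
      (1166577664/6561) * (23/20 - σ)^5 * (σ - 1)^3 * (u - 225)^4 +
      (583288832/6561) * (23/20 - σ)^6 * (σ - 1)^2 * (u - 225)^4 +
      (166653952/6561) * (23/20 - σ)^7 * (σ - 1)^1 * (u - 225)^4 +
      (20831744/6561) * (23/20 - σ)^8 * (σ - 1)^0 * (u - 225)^4 := by
        repeat' apply add_nonneg
        all_goals exact mul_nonneg (mul_nonneg (mul_nonneg (by norm_num) (pow_nonneg hx _)) (pow_nonneg hy _)) (pow_nonneg hv _)
    _ = _ := by ring

lemma cert16 (σ u : ℝ) (h1 : 1 ≤ σ) (h2 : σ ≤ 23/20) (hu : (256 : ℝ) ≤ u) :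
    0 ≤ (71303/100000000 : ℝ) * (σ^2+u) * ((σ-1)^2+u) * ((σ^2+u)^2+u)
      - σ * ((σ-1)^2+u) * ((σ^2+u)^2+u) - (σ-1) * (σ^2+u) * ((σ^2+u)^2+u)
      + ((178315737909/1000000000000 : ℝ) + (82025239436/100000000000 : ℝ) * σ) * (σ^2+u)^2 * ((σ-1)^2+u) := by
  have hx : (0:ℝ) ≤ 23/20 - σ := by linarith
  have hy : (0:ℝ) ≤ σ - 1 := by linarith
  have hv : (0:ℝ) ≤ u - 256 := by linarith
  calc (0:ℝ) ≤ (1823305370527683299431/8201250000000) * (23/20 - σ)^0 * (σ - 1)^8 * (u - 256)^0 +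
      (48506179868391086150917717/4100625000000) * (23/20 - σ)^1 * (σ - 1)^7 * (u - 256)^0 +
      (1357347109234018636208581541/16402500000000) * (23/20 - σ)^2 * (σ - 1)^6 * (u - 256)^0 +
      (50872741499829139308011867/205031250000) * (23/20 - σ)^3 * (σ - 1)^5 * (u - 256)^0 +
      (8474374693706461558420303/20503125000) * (23/20 - σ)^4 * (σ - 1)^4 * (u - 256)^0 +
      (211752719931214210322039/512578125) * (23/20 - σ)^5 * (σ - 1)^3 * (u - 256)^0 +
      (25397913429983898423557/102515625) * (23/20 - σ)^6 * (σ - 1)^2 * (u - 256)^0 +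
      (1692390495128153575424/20503125) * (23/20 - σ)^7 * (σ - 1)^1 * (u - 256)^0 +
      (48331703438480101376/4100625) * (23/20 - σ)^8 * (σ - 1)^0 * (u - 256)^0 +
      (1995003846899055040049/41006250000) * (23/20 - σ)^0 * (σ - 1)^8 * (u - 256)^1 +
      (10798130239716429961127/20503125000) * (23/20 - σ)^1 * (σ - 1)^7 * (u - 256)^1 +
      (5956271880614520456728/2562890625) * (23/20 - σ)^2 * (σ - 1)^6 * (u - 256)^1 +
      (23000183651431423753081/4100625000) * (23/20 - σ)^3 * (σ - 1)^5 * (u - 256)^1 +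
      (336722777597715162789047/41006250000) * (23/20 - σ)^4 * (σ - 1)^4 * (u - 256)^1 +
      (3859135571667205994966/512578125) * (23/20 - σ)^5 * (σ - 1)^3 * (u - 256)^1 +
      (435075869411044107464/102515625) * (23/20 - σ)^6 * (σ - 1)^2 * (u - 256)^1 +
      (27669197053075847696/20503125) * (23/20 - σ)^7 * (σ - 1)^1 * (u - 256)^1 +
      (761885753441108432/4100625) * (23/20 - σ)^8 * (σ - 1)^0 * (u - 256)^1 +
      (19217955061734797/34171875) * (23/20 - σ)^0 * (σ - 1)^8 * (u - 256)^2 +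
      (57312604640690872/11390625) * (23/20 - σ)^1 * (σ - 1)^7 * (u - 256)^2 +
      (133088729486579159/6834375) * (23/20 - σ)^2 * (σ - 1)^6 * (u - 256)^2 +
      (291634972283922896/6834375) * (23/20 - σ)^3 * (σ - 1)^5 * (u - 256)^2 +
      (14679897991440877/253125) * (23/20 - σ)^4 * (σ - 1)^4 * (u - 256)^2 +
      (1712651246024451752/34171875) * (23/20 - σ)^5 * (σ - 1)^3 * (u - 256)^2 +
      (919921618343903381/34171875) * (23/20 - σ)^6 * (σ - 1)^2 * (u - 256)^2 +
      (18733395635413168/2278125) * (23/20 - σ)^7 * (σ - 1)^1 * (u - 256)^2 +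
      (299163249714272/273375) * (23/20 - σ)^8 * (σ - 1)^0 * (u - 256)^2 +
      (8884907697968/4100625) * (23/20 - σ)^0 * (σ - 1)^8 * (u - 256)^3 +
      (14779666935776/820125) * (23/20 - σ)^1 * (σ - 1)^7 * (u - 256)^3 +
      (268511953972256/4100625) * (23/20 - σ)^2 * (σ - 1)^6 * (u - 256)^3 +
      (556761526663264/4100625) * (23/20 - σ)^3 * (σ - 1)^5 * (u - 256)^3 +
      (144125299727104/820125) * (23/20 - σ)^4 * (σ - 1)^4 * (u - 256)^3 +
      (596242924679968/4100625) * (23/20 - σ)^5 * (σ - 1)^3 * (u - 256)^3 +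
      (61598670397792/820125) * (23/20 - σ)^6 * (σ - 1)^2 * (u - 256)^3 +
      (90818933828896/4100625) * (23/20 - σ)^7 * (σ - 1)^1 * (u - 256)^3 +
      (11705007556304/4100625) * (23/20 - σ)^8 * (σ - 1)^0 * (u - 256)^3 +
      (18253568/6561) * (23/20 - σ)^0 * (σ - 1)^8 * (u - 256)^4 +
      (146028544/6561) * (23/20 - σ)^1 * (σ - 1)^7 * (u - 256)^4 +
      (511099904/6561) * (23/20 - σ)^2 * (σ - 1)^6 * (u - 256)^4 +
      (1022199808/6561) * (23/20 - σ)^3 * (σ - 1)^5 * (u - 256)^4 +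
      (1277749760/6561) * (23/20 - σ)^4 * (σ - 1)^4 * (u - 256)^4 +
      (1022199808/6561) * (23/20 - σ)^5 * (σ - 1)^3 * (u - 256)^4 +
      (511099904/6561) * (23/20 - σ)^6 * (σ - 1)^2 * (u - 256)^4 +
      (146028544/6561) * (23/20 - σ)^7 * (σ - 1)^1 * (u - 256)^4 +
      (18253568/6561) * (23/20 - σ)^8 * (σ - 1)^0 * (u - 256)^4 := by
        repeat' apply add_nonneg
        all_goals exact mul_nonneg (mul_nonneg (mul_nonneg (by norm_num) (pow_nonneg hx _)) (pow_nonneg hy _)) (pow_nonneg hv _)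
    _ = _ := by ring

set_option maxHeartbeats 4000000 in
/-- For `1 < σ ≤ 1.15`, `t ≥ 1` and `1 ≤ k ≤ 16`, `Σ_k(σ,t) ≤ 𝓑_{0.15}(k)`. -/
theorem Sigk_le_B015 (σ t : ℝ) (hσ : 1 < σ) (hσ' : σ ≤ 1.15) (ht : 1 ≤ t) :
    ∀ k : ℕ, 1 ≤ k → k ≤ 16 → Sigk k σ t ≤ B015 k := by
  intro k hk1 hk2
  interval_cases k
  · have hB : B015 1 = (23445352/100000000 : ℝ) := by norm_num [B015]
    rw [hB]
    exact glue (178315737909/1000000000000) (82025239436/100000000000) _ 1 σ t hσ (by linarith) ht (by norm_num)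
      (by linarith) (sqL σ (by linarith) (by linarith))
      (fun u hu => by push_cast at hu; exact cert1 σ u (by linarith) (by linarith) (by nlinarith))
  · have hB : B015 2 = (6869804/100000000 : ℝ) := by norm_num [B015]
    rw [hB]
    exact glue (178315737909/1000000000000) (82025239436/100000000000) _ 2 σ t hσ (by linarith) ht (by norm_num)
      (by linarith) (sqL σ (by linarith) (by linarith))
      (fun u hu => by push_cast at hu; exact cert2 σ u (by linarith) (by linarith) (by nlinarith))
  · have hB : B015 3 = (2783858/100000000 : ℝ) := by norm_num [B015]
    rw [hB]
    exact glue (178315737909/1000000000000) (82025239436/100000000000) _ 3 σ t hσ (by linarith) ht (by norm_num)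
      (by linarith) (sqL σ (by linarith) (by linarith))
      (fun u hu => by push_cast at hu; exact cert3 σ u (by linarith) (by linarith) (by nlinarith))
  · have hB : B015 4 = (1427867/100000000 : ℝ) := by norm_num [B015]
    rw [hB]
    exact glue (178315737909/1000000000000) (82025239436/100000000000) _ 4 σ t hσ (by linarith) ht (by norm_num)
      (by linarith) (sqL σ (by linarith) (by linarith))
      (fun u hu => by push_cast at hu; exact cert4 σ u (by linarith) (by linarith) (by nlinarith))
  · have hB : B015 5 = (855730/100000000 : ℝ) := by norm_num [B015]
    rw [hB]
    exact glue (178315737909/1000000000000) (82025239436/100000000000) _ 5 σ t hσ (by linarith) ht (by norm_num)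
      (by linarith) (sqL σ (by linarith) (by linarith))
      (fun u hu => by push_cast at hu; exact cert5 σ u (by linarith) (by linarith) (by nlinarith))
  · have hB : B015 6 = (568194/100000000 : ℝ) := by norm_num [B015]
    rw [hB]
    exact glue (178315737909/1000000000000) (82025239436/100000000000) _ 6 σ t hσ (by linarith) ht (by norm_num)
      (by linarith) (sqL σ (by linarith) (by linarith))
      (fun u hu => by push_cast at hu; exact cert6 σ u (by linarith) (by linarith) (by nlinarith))
  · have hB : B015 7 = (404715/100000000 : ℝ) := by norm_num [B015]
    rw [hB]
    exact glue (178315737909/1000000000000) (82025239436/100000000000) _ 7 σ t hσ (by linarith) ht (by norm_num)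
      (by linarith) (sqL σ (by linarith) (by linarith))
      (fun u hu => by push_cast at hu; exact cert7 σ u (by linarith) (by linarith) (by nlinarith))
  · have hB : B015 8 = (303134/100000000 : ℝ) := by norm_num [B015]
    rw [hB]
    exact glue (178315737909/1000000000000) (82025239436/100000000000) _ 8 σ t hσ (by linarith) ht (by norm_num)
      (by linarith) (sqL σ (by linarith) (by linarith))
      (fun u hu => by push_cast at hu; exact cert8 σ u (by linarith) (by linarith) (by nlinarith))
  · have hB : B015 9 = (235718/100000000 : ℝ) := by norm_num [B015]
    rw [hB]
    exact glue (178315737909/1000000000000) (82025239436/100000000000) _ 9 σ t hσ (by linarith) ht (by norm_num)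
      (by linarith) (sqL σ (by linarith) (by linarith))
      (fun u hu => by push_cast at hu; exact cert9 σ u (by linarith) (by linarith) (by nlinarith))
  · have hB : B015 10 = (188669/100000000 : ℝ) := by norm_num [B015]
    rw [hB]
    exact glue (178315737909/1000000000000) (82025239436/100000000000) _ 10 σ t hσ (by linarith) ht (by norm_num)
      (by linarith) (sqL σ (by linarith) (by linarith))
      (fun u hu => by push_cast at hu; exact cert10 σ u (by linarith) (by linarith) (by nlinarith))
  · have hB : B015 11 = (154513/100000000 : ℝ) := by norm_num [B015]
    rw [hB]
    exact glue (178315737909/1000000000000) (82025239436/100000000000) _ 11 σ t hσ (by linarith) ht (by norm_num)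
      (by linarith) (sqL σ (by linarith) (by linarith))
      (fun u hu => by push_cast at hu; exact cert11 σ u (by linarith) (by linarith) (by nlinarith))
  · have hB : B015 12 = (128917/100000000 : ℝ) := by norm_num [B015]
    rw [hB]
    exact glue (178315737909/1000000000000) (82025239436/100000000000) _ 12 σ t hσ (by linarith) ht (by norm_num)
      (by linarith) (sqL σ (by linarith) (by linarith))
      (fun u hu => by push_cast at hu; exact cert12 σ u (by linarith) (by linarith) (by nlinarith))
  · have hB : B015 13 = (109240/100000000 : ℝ) := by norm_num [B015]
    rw [hB]
    exact glue (178315737909/1000000000000) (82025239436/100000000000) _ 13 σ t hσ (by linarith) ht (by norm_num)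
      (by linarith) (sqL σ (by linarith) (by linarith))
      (fun u hu => by push_cast at hu; exact cert13 σ u (by linarith) (by linarith) (by nlinarith))
  · have hB : B015 14 = (93759/100000000 : ℝ) := by norm_num [B015]
    rw [hB]
    exact glue (178315737909/1000000000000) (82025239436/100000000000) _ 14 σ t hσ (by linarith) ht (by norm_num)
      (by linarith) (sqL σ (by linarith) (by linarith))
      (fun u hu => by push_cast at hu; exact cert14 σ u (by linarith) (by linarith) (by nlinarith))
  · have hB : B015 15 = (81374/100000000 : ℝ) := by norm_num [B015]
    rw [hB]
    exact glue (178315737909/1000000000000) (82025239436/100000000000) _ 15 σ t hσ (by linarith) ht (by norm_num)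
      (by linarith) (sqL σ (by linarith) (by linarith))
      (fun u hu => by push_cast at hu; exact cert15 σ u (by linarith) (by linarith) (by nlinarith))
  · have hB : B015 16 = (71303/100000000 : ℝ) := by norm_num [B015]
    rw [hB]
    exact glue (178315737909/1000000000000) (82025239436/100000000000) _ 16 σ t hσ (by linarith) ht (by norm_num)
      (by linarith) (sqL σ (by linarith) (by linarith))
      (fun u hu => by push_cast at hu; exact cert16 σ u (by linarith) (by linarith) (by nlinarith))
end

section
/- (McCurley-type bound) For every integer k ≥ 1, every real t ≥ 1, every real σ with 1 < σ ≤ 1.15, and every δ ∈ {0,1}, one has (1/2)·Re( ψ((σ + ikt + δ)/2) - κ·ψ((σ₁(σ) + ikt + δ)/2) ) ≤ ((1-κ)/2)·log(kt/2) + Ξ(σ,k,t,δ) + (1/(2k))·(π/2 - arctan((1+δ)/k)) + (κ/(2k))·(π/2 - arctan(((1+√5)/2 + δ)/k)), where ψ(z) = Γ'(z)/Γ(z) is the logarithmic derivative of the complex Gamma function. -/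
open Complex

/-- `Ξ(σ,k,t,δ)`. -/
noncomputable def Xi (σ : ℝ) (k : ℕ) (t δ : ℝ) : ℝ :=
  1 / 4 * Real.log (1 + ((σ + δ) / (k * t)) ^ 2) -
    κ / 4 * Real.log (1 + ((σ₁ σ + δ) / (k * t)) ^ 2) -
    (σ + δ) / (2 * ((σ + δ) ^ 2 + k ^ 2 * t ^ 2)) +
    κ * (σ₁ σ + δ) / (2 * ((σ₁ σ + δ) ^ 2 + k ^ 2 * t ^ 2))

/-- The digamma function `ψ = Γ'/Γ` on the complex plane. -/
noncomputable def ψc (z : ℂ) : ℂ := deriv Complex.Gamma z / Complex.Gamma z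

open Set intervalIntegral

lemma self_div_le_arctan {x : ℝ} (hx : 0 ≤ x) : x / (1 + x ^ 2) ≤ Real.arctan x := by
  have key : ∀ y : ℝ, HasDerivAt (fun w => Real.arctan w - w / (1 + w ^ 2))
      (2 * y ^ 2 / (1 + y ^ 2) ^ 2) y := by
    intro y
    have h1 : HasDerivAt (fun w : ℝ => w / (1 + w ^ 2))
        ((1 * (1 + y ^ 2) - y * (2 * y)) / (1 + y ^ 2) ^ 2) y := by
      have hy : (1 + y ^ 2) ≠ 0 := by positivity
      exact (hasDerivAt_id y).div (by simpa using (hasDerivAt_pow 2 y).const_add 1) hy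
    have := (Real.hasDerivAt_arctan y).sub h1
    refine this.congr_deriv ?_
    have hy : (1 + y ^ 2) ≠ 0 := by positivity
    field_simp
    ring
  have hmono : MonotoneOn (fun w => Real.arctan w - w / (1 + w ^ 2)) (Ici (0:ℝ)) := by
    apply monotoneOn_of_deriv_nonneg (convex_Ici 0)
    · exact fun y _ => ((key y).continuousAt).continuousWithinAt
    · exact fun y _ => ((key y).differentiableAt).differentiableWithinAt
    · intro y _
      rw [(key y).deriv]
      positivity
  have := hmono (self_mem_Ici) (mem_Ici.2 hx) hx
  simpa using this

lemma arctan_mul_le {u v : ℝ} (hu : 0 < u) (huv : u ≤ v) : u * Real.arctan v ≤ v * Real.arctan u := by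
  have key : ∀ y : ℝ, HasDerivAt (fun w => u * Real.arctan w - w * Real.arctan u)
      (u / (1 + y ^ 2) - Real.arctan u) y := by
    intro y
    have h1 := (Real.hasDerivAt_arctan y).const_mul u
    have h2 := (hasDerivAt_id y).mul_const (Real.arctan u)
    refine (h1.sub h2).congr_deriv ?_
    ring
  have hanti : AntitoneOn (fun w => u * Real.arctan w - w * Real.arctan u) (Ici u) := by
    apply antitoneOn_of_deriv_nonpos (convex_Ici u)
    · exact fun y _ => ((key y).continuousAt).continuousWithinAt
    · exact fun y _ => ((key y).differentiableAt).differentiableWithinAt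
    · intro y hy
      rw [(key y).deriv]
      have hyu : u ≤ y := le_of_lt (by simpa using hy)
      have h3 : u / (1 + y ^ 2) ≤ u / (1 + u ^ 2) := by
        apply div_le_div_of_nonneg_left hu.le (by positivity)
        nlinarith
      have h4 := self_div_le_arctan hu.le
      have : u / (1 + u ^ 2) = u / (1 + u ^ 2) := rfl
      nlinarith [h4, h3]
  have := hanti (self_mem_Ici) (mem_Ici.2 huv) huv
  simp only at this
  nlinarith [this]

noncomputable def trap (z : ℂ) (n : ℕ) : ℂ :=
  Complex.log (z + n + 1) - Complex.log (z + n) -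
    (1 / 2 : ℂ) * (1 / (z + n) + 1 / (z + n + 1))

lemma re_pos_add {z : ℂ} (hz : 0 < z.re) (n : ℕ) (u : ℝ) (hu : 0 ≤ u) :
    0 < (z + n + u).re := by
  simp only [Complex.add_re, Complex.natCast_re, Complex.ofReal_re]
  have : (0:ℝ) ≤ n := n.cast_nonneg
  linarith

lemma mem_slit {z : ℂ} (hz : 0 < z.re) (n : ℕ) (u : ℝ) (hu : 0 ≤ u) :
    (z + n + u) ∈ Complex.slitPlane :=
  Complex.mem_slitPlane_iff.2 (Or.inl (re_pos_add hz n u hu))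

lemma ne_zero_add {z : ℂ} (hz : 0 < z.re) (n : ℕ) (u : ℝ) (hu : 0 ≤ u) :
    z + n + u ≠ 0 := by
  intro h
  have := re_pos_add hz n u hu
  rw [h] at this
  simp at this

lemma hasDerivAt_Phi {z : ℂ} (hz : 0 < z.re) (n : ℕ) {u : ℝ} (hu : 0 ≤ u) :
    HasDerivAt (fun u : ℝ => Complex.log (z + n + u) + ((1 / 2 - u : ℝ) : ℂ) * (z + n + u)⁻¹)
      (((1 / 2 - u : ℝ) : ℂ) * (-(1 / (z + n + u) ^ 2))) u := by
  have hc : HasDerivAt (fun u : ℝ => z + n + (u : ℂ)) 1 u := by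
    simpa using ((hasDerivAt_id u).ofReal_comp (f := fun x : ℝ => x)).const_add (z + n)
  have hlog : HasDerivAt (fun u : ℝ => Complex.log (z + n + u)) ((z + n + u)⁻¹) u := by
    simpa [Function.comp_def] using (Complex.hasDerivAt_log (mem_slit hz n u hu)).comp u hc
  have hinv : HasDerivAt (fun u : ℝ => (z + n + (u:ℂ))⁻¹) (-((z + n + u) ^ 2)⁻¹) u := by
    simpa [Function.comp_def] using (hasDerivAt_inv (ne_zero_add hz n u hu)).comp u hc
  have hcoef : HasDerivAt (fun u : ℝ => ((1 / 2 - u : ℝ) : ℂ)) (-1) u := by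
    have : HasDerivAt (fun u : ℝ => (1 / 2 - u : ℝ)) (-1) u := by
      simpa using (hasDerivAt_id u).const_sub (1/2 : ℝ)
    simpa using this.ofReal_comp
  have := hlog.add (hcoef.mul hinv)
  refine this.congr_deriv ?_
  have hne := ne_zero_add hz n u hu
  field_simp
  ring

lemma continuousOn_integrand {z : ℂ} (hz : 0 < z.re) (n : ℕ) :
    ContinuousOn (fun u : ℝ => ((1 / 2 - u : ℝ) : ℂ) * (-(1 / (z + n + u) ^ 2))) (Icc 0 1) := by
  apply ContinuousOn.mul
  · fun_prop
  · apply ContinuousOn.neg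
    apply ContinuousOn.div continuousOn_const
    · fun_prop
    · intro u hu
      exact pow_ne_zero 2 (ne_zero_add hz n u hu.1)

lemma trap_eq_integral {z : ℂ} (hz : 0 < z.re) (n : ℕ) :
    trap z n = ∫ u in (0:ℝ)..1, ((1 / 2 - u : ℝ) : ℂ) * (-(1 / (z + n + u) ^ 2)) := by
  have h := intervalIntegral.integral_eq_sub_of_hasDerivAt (a := (0:ℝ)) (b := 1)
    (f := fun u : ℝ => Complex.log (z + n + u) + ((1 / 2 - u : ℝ) : ℂ) * (z + n + u)⁻¹)
    (f' := fun u : ℝ => ((1 / 2 - u : ℝ) : ℂ) * (-(1 / (z + n + u) ^ 2)))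
    (fun u hu => hasDerivAt_Phi hz n (by simp only [uIcc_of_le (by norm_num : (0:ℝ) ≤ 1)] at hu; exact hu.1))
    (((continuousOn_integrand hz n).mono (by rw [uIcc_of_le] <;> norm_num)).intervalIntegrable)
  rw [h]
  have h0 : z + (n:ℂ) + ((0:ℝ):ℂ) = z + n := by norm_num
  have h1 : z + (n:ℂ) + ((1:ℝ):ℂ) = z + n + 1 := by norm_num
  rw [h0, h1]
  have hne0 : z + n ≠ 0 := by simpa using ne_zero_add hz n 0 le_rfl
  have hne1 : z + n + 1 ≠ 0 := by simpa using ne_zero_add hz n 1 zero_le_one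
  unfold trap
  push_cast
  field_simp
  ring

lemma norm_integrand_le {z : ℂ} (n : ℕ) {u : ℝ} (hu : u ∈ Set.Ioc (0:ℝ) 1) :
    ‖((1 / 2 - u : ℝ) : ℂ) * (-(1 / (z + n + u) ^ 2))‖ ≤
      1 / 2 * ((z.re + n + u) ^ 2 + z.im ^ 2)⁻¹ := by
  rw [norm_mul, norm_neg, norm_div, norm_one, norm_pow]
  have h1 : ‖((1 / 2 - u : ℝ) : ℂ)‖ = |1 / 2 - u| := by
    rw [Complex.norm_real, Real.norm_eq_abs]
  have h2 : ‖z + (n:ℂ) + (u:ℂ)‖ ^ 2 = (z.re + n + u) ^ 2 + z.im ^ 2 := by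
    rw [Complex.sq_norm, Complex.normSq_apply]
    simp only [Complex.add_re, Complex.add_im, Complex.natCast_re, Complex.natCast_im,
      Complex.ofReal_re, Complex.ofReal_im]
    ring
  rw [h1, h2]
  have h3 : |1 / 2 - u| ≤ 1 / 2 := by
    rw [abs_le]
    constructor <;> [linarith [hu.2]; linarith [hu.1]]
  have h4 : (0:ℝ) < (z.re + n + u) ^ 2 + z.im ^ 2 ∨ True := Or.inr trivial
  rw [one_div ((z.re + (n:ℝ) + u) ^ 2 + z.im ^ 2)]
  apply mul_le_mul h3 le_rfl (by positivity) (by norm_num)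

lemma trap_norm_le_crude {z : ℂ} (hz : 0 < z.re) (n : ℕ) :
    ‖trap z n‖ ≤ 1 / 2 * ((z.re + n) ^ 2)⁻¹ := by
  rw [trap_eq_integral hz]
  have := intervalIntegral.norm_integral_le_of_norm_le_const
    (a := 0) (b := 1) (C := 1 / 2 * ((z.re + n) ^ 2)⁻¹)
    (f := fun u : ℝ => ((1 / 2 - u : ℝ) : ℂ) * (-(1 / (z + n + u) ^ 2))) ?_
  · simpa using this
  · intro u hu
    rw [Set.uIoc_of_le (by norm_num : (0:ℝ) ≤ 1)] at hu
    refine le_trans (norm_integrand_le n hu) ?_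
    have hn : (0:ℝ) ≤ n := n.cast_nonneg
    have h5 : (z.re + n) ^ 2 ≤ (z.re + n + u) ^ 2 + z.im ^ 2 := by nlinarith [hu.1, sq_nonneg z.im]
    rw [one_div]
    have hz2 : (0:ℝ) < (z.re + n) ^ 2 := by positivity
    gcongr

lemma integral_g {x y : ℝ} (hy : 0 < y) (n : ℕ) :
    ∫ u in (0:ℝ)..1, 1 / 2 * ((x + n + u) ^ 2 + y ^ 2)⁻¹ =
      1 / (2 * y) * (Real.arctan ((x + n + 1) / y) - Real.arctan ((x + n) / y)) := by
  have key : ∀ u : ℝ, HasDerivAt (fun u : ℝ => 1 / (2 * y) * Real.arctan ((x + n + u) / y))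
      (1 / 2 * ((x + n + u) ^ 2 + y ^ 2)⁻¹) u := by
    intro u
    have hl : HasDerivAt (fun u : ℝ => (x + n + u) / y) (1 / y) u := by
      simpa using (((hasDerivAt_id u).const_add (x + (n:ℝ))).div_const y)
    have h2 := ((Real.hasDerivAt_arctan ((x + n + u) / y)).comp u hl).const_mul (1 / (2 * y))
    refine h2.congr_deriv ?_
    have hy' : y ≠ 0 := hy.ne'
    have hpos : (0:ℝ) < (x + n + u) ^ 2 + y ^ 2 := by positivity
    field_simp
    ring
  have hcont : Continuous fun u : ℝ => 1 / 2 * ((x + n + u) ^ 2 + y ^ 2)⁻¹ := by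
    apply continuous_const.mul
    apply Continuous.inv₀ (by fun_prop)
    intro u; positivity
  rw [intervalIntegral.integral_eq_sub_of_hasDerivAt (fun u _ => key u)
    (hcont.intervalIntegrable 0 1)]
  simp only [add_zero]
  ring

lemma trap_norm_le_sharp {z : ℂ} (hz : 0 < z.re) (hy : 0 < z.im) (n : ℕ) :
    ‖trap z n‖ ≤ 1 / (2 * z.im) *
      (Real.arctan ((z.re + n + 1) / z.im) - Real.arctan ((z.re + n) / z.im)) := by
  rw [trap_eq_integral hz]
  have hcont : Continuous fun u : ℝ => 1 / 2 * ((z.re + n + u) ^ 2 + z.im ^ 2)⁻¹ := by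
    apply continuous_const.mul
    apply Continuous.inv₀ (by fun_prop)
    intro u; positivity
  have hae : ∀ᵐ u ∂(MeasureTheory.volume.restrict (Set.uIoc (0:ℝ) 1)),
      ‖((1 / 2 - u : ℝ) : ℂ) * (-(1 / (z + n + u) ^ 2))‖ ≤
        1 / 2 * ((z.re + n + u) ^ 2 + z.im ^ 2)⁻¹ := by
    refine (MeasureTheory.ae_restrict_mem measurableSet_uIoc).mono (fun u hu => ?_)
    rw [Set.uIoc_of_le (by norm_num : (0:ℝ) ≤ 1)] at hu
    exact norm_integrand_le n hu
  refine le_trans (intervalIntegral.norm_integral_le_abs_of_norm_le hae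
    (hcont.intervalIntegrable 0 1)) ?_
  rw [integral_g hy n]
  have harc : Real.arctan ((z.re + n) / z.im) ≤ Real.arctan ((z.re + n + 1) / z.im) := by
    apply Real.arctan_strictMono.monotone
    exact (div_le_div_iff_of_pos_right hy).mpr (by linarith)
  rw [_root_.abs_of_nonneg (mul_nonneg (by positivity) (sub_nonneg.2 harc))]

lemma summable_crude {x : ℝ} (hx : 0 < x) :
    Summable (fun n : ℕ => 1 / 2 * ((x + n) ^ 2)⁻¹) := by
  set c : ℝ := min x 1 with hc
  have hc0 : 0 < c := lt_min hx one_pos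
  have hbase : Summable (fun n : ℕ => 1 / ((n:ℝ) + 1) ^ 2) := by
    have h := (summable_nat_add_iff (f := fun n : ℕ => 1 / (n:ℝ) ^ 2) 1).mpr
      (Real.summable_one_div_nat_pow.mpr one_lt_two)
    refine h.congr (fun n => ?_)
    push_cast
    ring
  refine Summable.of_nonneg_of_le (fun n => by positivity) (fun n => ?_)
    ((hbase.mul_left (1 / (2 * c ^ 2))))
  have h1 : c * ((n:ℝ) + 1) ≤ x + n := by
    have h2 : c ≤ x := min_le_left _ _
    have h3 : c ≤ 1 := min_le_right _ _
    have hn : (0:ℝ) ≤ n := n.cast_nonneg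
    nlinarith
  have h4 : (c * ((n:ℝ) + 1)) ^ 2 ≤ (x + n) ^ 2 := by
    apply sq_le_sq' ?_ h1
    have hn : (0:ℝ) ≤ n := n.cast_nonneg
    nlinarith
  have hn : (0:ℝ) ≤ n := n.cast_nonneg
  have e1 : (0:ℝ) < (x + n) ^ 2 := by positivity
  have e2 : (0:ℝ) < ((n:ℝ) + 1) ^ 2 := by positivity
  rw [mul_one_div, one_div, ← div_eq_mul_inv, div_le_div_iff₀ e1 (by positivity)]
  have h5 : 1 / (2 * c ^ 2) * (c * ((n:ℝ) + 1)) ^ 2 = ((n:ℝ) + 1) ^ 2 / 2 := by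
    field_simp
  have h6 := mul_le_mul_of_nonneg_left h4 (by positivity : (0:ℝ) ≤ 1 / (2 * c ^ 2))
  linarith [h5 ▸ h6]

lemma summable_trap_norm {z : ℂ} (hz : 0 < z.re) : Summable (fun n => ‖trap z n‖) :=
  Summable.of_nonneg_of_le (fun n => norm_nonneg _) (fun n => trap_norm_le_crude hz n)
    (summable_crude hz)

lemma summable_trap {z : ℂ} (hz : 0 < z.re) : Summable (trap z) :=
  (summable_trap_norm hz).of_norm

lemma hasSum_arctan {x y : ℝ} (hx : 0 < x) (hy : 0 < y) :
    HasSum (fun n : ℕ => 1 / (2 * y) * (Real.arctan ((x + n + 1) / y) - Real.arctan ((x + n) / y)))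
      (1 / (2 * y) * (Real.pi / 2 - Real.arctan (x / y))) := by
  set A : ℕ → ℝ := fun n => 1 / (2 * y) * Real.arctan ((x + n) / y) with hA
  have hterm : ∀ n : ℕ,
      1 / (2 * y) * (Real.arctan ((x + n + 1) / y) - Real.arctan ((x + n) / y))
        = A (n + 1) - A n := by
    intro n
    simp only [hA]
    push_cast
    ring_nf
  have hpart : ∀ N : ℕ, ∑ n ∈ Finset.range N,
      (1 / (2 * y) * (Real.arctan ((x + n + 1) / y) - Real.arctan ((x + n) / y)))
        = A N - A 0 := by
    intro N
    rw [Finset.sum_congr rfl (fun n _ => hterm n)]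
    exact Finset.sum_range_sub A N
  have hnonneg : ∀ n : ℕ,
      0 ≤ 1 / (2 * y) * (Real.arctan ((x + n + 1) / y) - Real.arctan ((x + n) / y)) := by
    intro n
    apply mul_nonneg (by positivity)
    rw [sub_nonneg]
    apply Real.arctan_strictMono.monotone
    exact (div_le_div_iff_of_pos_right hy).mpr (by linarith)
  have hAlim : Filter.Tendsto (fun N : ℕ => A N) Filter.atTop (nhds (1 / (2 * y) * (Real.pi / 2))) := by
    apply Filter.Tendsto.const_mul
    have h1 : Filter.Tendsto (fun N : ℕ => (x + N) / y) Filter.atTop Filter.atTop := by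
      apply Filter.Tendsto.atTop_div_const hy
      exact Filter.tendsto_atTop_add_const_left _ x (tendsto_natCast_atTop_atTop (R := ℝ))
    exact (Real.tendsto_arctan_atTop.mono_right nhdsWithin_le_nhds).comp h1
  have hlim : Filter.Tendsto (fun N : ℕ => ∑ n ∈ Finset.range N,
      (1 / (2 * y) * (Real.arctan ((x + n + 1) / y) - Real.arctan ((x + n) / y))))
      Filter.atTop (nhds (1 / (2 * y) * (Real.pi / 2 - Real.arctan (x / y)))) := by
    simp only [hpart]
    have : A 0 = 1 / (2 * y) * Real.arctan (x / y) := by simp [hA]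
    rw [this]
    have := hAlim.sub_const (1 / (2 * y) * Real.arctan (x / y))
    convert this using 2
    ring
  have hsummable : Summable (fun n : ℕ =>
      1 / (2 * y) * (Real.arctan ((x + n + 1) / y) - Real.arctan ((x + n) / y))) := by
    apply summable_of_sum_range_le (c := 1 / (2 * y) * (Real.pi / 2 - Real.arctan (x / y))) hnonneg
    intro N
    rw [hpart]
    have h1 : A N ≤ 1 / (2 * y) * (Real.pi / 2) := by
      apply mul_le_mul_of_nonneg_left (Real.arctan_lt_pi_div_two _).le (by positivity)
    have h2 : A 0 = 1 / (2 * y) * Real.arctan (x / y) := by simp [hA]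
    rw [h2]
    nlinarith [h1]
  have := hsummable.hasSum
  rwa [tendsto_nhds_unique hsummable.hasSum.tendsto_sum_nat hlim] at this

lemma tsum_trap_norm_le {z : ℂ} (hz : 0 < z.re) (hy : 0 < z.im) :
    ‖∑' n, trap z n‖ ≤ 1 / (2 * z.im) * (Real.pi / 2 - Real.arctan (z.re / z.im)) := by
  refine le_trans (norm_tsum_le_tsum_norm (summable_trap_norm hz)) ?_
  have hs := hasSum_arctan hz hy
  rw [← hs.tsum_eq]
  exact Summable.tsum_le_tsum (fun n => trap_norm_le_sharp hz hy n) (summable_trap_norm hz) hs.summable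

-- ===== Real digamma side =====
open Filter Topology

local notation "γ" => Real.eulerMascheroniConstant

noncomputable def fd : ℝ → ℝ := deriv (Real.log ∘ Real.Gamma)

lemma ne_neg_nat {x : ℝ} (hx : 0 < x) : ∀ m : ℕ, x ≠ -(m:ℝ) := by
  intro m
  have : (0:ℝ) ≤ m := m.cast_nonneg
  intro h
  rw [h] at hx
  linarith

lemma fd_diff {x : ℝ} (hx : 0 < x) : DifferentiableAt ℝ (Real.log ∘ Real.Gamma) x := by
  refine (Real.differentiableAt_Gamma (ne_neg_nat hx)).log (Real.Gamma_ne_zero (ne_neg_nat hx))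

lemma fd_eq {x : ℝ} (hx : 0 < x) : fd x = deriv Real.Gamma x / Real.Gamma x := by
  unfold fd
  rw [Function.comp_def, deriv.log (Real.differentiableAt_Gamma (ne_neg_nat hx))
    (Real.Gamma_pos_of_pos hx).ne']

lemma fd_rec {x : ℝ} (hx : 0 < x) : fd (x + 1) = fd x + 1 / x := by
  unfold fd
  have h_rec : ∀ y : ℝ, 0 < y → (Real.log ∘ Real.Gamma) (y + 1)
      = (Real.log ∘ Real.Gamma) y + Real.log y := by
    intro y hy
    simp only [Function.comp_apply, Real.Gamma_add_one hy.ne',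
      Real.log_mul hy.ne' (Real.Gamma_pos_of_pos hy).ne', add_comm]
  rw [← deriv_comp_add_const, one_div, ← Real.deriv_log,
    ← deriv_add (fd_diff hx) (Real.differentiableAt_log hx.ne')]
  apply Filter.EventuallyEq.deriv_eq
  filter_upwards [eventually_gt_nhds hx] using fun y hy => h_rec y hy

lemma fd_nat (N : ℕ) : fd ((N:ℝ) + 1) = -γ + (harmonic N : ℝ) := by
  have h0 : (0:ℝ) < (N:ℝ) + 1 := by positivity
  rw [fd_eq h0]
  rw [Real.deriv_Gamma_nat N, Real.Gamma_nat_eq_factorial N]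
  have : (Nat.factorial N : ℝ) ≠ 0 := by positivity
  field_simp

lemma fd_mono : MonotoneOn fd (Set.Ioi (0:ℝ)) :=
  Real.convexOn_log_Gamma.monotoneOn_deriv (fun x hx => fd_diff hx)

noncomputable def trapR (x : ℝ) (n : ℕ) : ℝ :=
  Real.log (x + n + 1) - Real.log (x + n) - 1 / 2 * (1 / (x + n) + 1 / (x + n + 1))

lemma sum_trapR {x : ℝ} (hx : 0 < x) (N : ℕ) :
    ∑ n ∈ Finset.range N, trapR x n =
      (fd x - Real.log x + 1 / (2 * x)) - (fd (x + N) - Real.log (x + N) + 1 / (2 * (x + N))) := by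
  induction N with
  | zero => simp
  | succ N ih =>
    rw [Finset.sum_range_succ, ih]
    have hxN : 0 < x + N := by positivity
    have hrec := fd_rec hxN
    have hcast : x + ((N:ℕ)+1:ℕ) = (x + N) + 1 := by push_cast; ring
    rw [hcast, hrec]
    unfold trapR
    have h1 : x + (N:ℝ) ≠ 0 := hxN.ne'
    have h2 : x + (N:ℝ) + 1 ≠ 0 := by positivity
    field_simp
    ring

lemma log_shift_tendsto {x : ℝ} (hx : 0 < x) :
    Tendsto (fun N : ℕ => Real.log (x + N) - Real.log N) atTop (𝓝 0) := by
  have h1 : Tendsto (fun N : ℕ => 1 + x / N) atTop (𝓝 1) := by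
    have := tendsto_const_div_atTop_nhds_zero_nat x
    simpa using (tendsto_const_nhds (x := (1:ℝ))).add this
  have h2 : Tendsto (fun N : ℕ => Real.log (1 + x / N)) atTop (𝓝 0) := by
    have hc : ContinuousAt Real.log 1 := Real.continuousAt_log (by norm_num)
    have := hc.tendsto.comp h1
    simpa [Function.comp_def] using this
  apply h2.congr'
  filter_upwards [eventually_gt_atTop 0] with N hN
  have hN' : (0:ℝ) < N := by exact_mod_cast hN
  rw [show 1 + x / N = (x + N) / N by field_simp; ring,
    Real.log_div (by positivity) hN'.ne']

lemma fd_sub_log_tendsto {x : ℝ} (hx1 : 1 < x) (hx2 : x < 2) :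
    Tendsto (fun N : ℕ => fd (x + N) - Real.log (x + N)) atTop (𝓝 0) := by
  have hx : 0 < x := by linarith
  have hlow : ∀ N : ℕ, (-γ + (harmonic N : ℝ)) - Real.log (x + N) ≤ fd (x + N) - Real.log (x + N) := by
    intro N
    have h := fd_mono (Set.mem_Ioi.2 (by positivity : (0:ℝ) < (N:ℝ) + 1))
      (Set.mem_Ioi.2 (by positivity : (0:ℝ) < x + N)) (by linarith : (N:ℝ) + 1 ≤ x + N)
    rw [fd_nat N] at h
    linarith
  have hup : ∀ N : ℕ, fd (x + N) - Real.log (x + N)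
      ≤ (-γ + (harmonic (N+1) : ℝ)) - Real.log (x + N) := by
    intro N
    have h := fd_mono (Set.mem_Ioi.2 (by positivity : (0:ℝ) < x + N))
      (Set.mem_Ioi.2 (by positivity : (0:ℝ) < ((N+1:ℕ):ℝ) + 1))
      (by push_cast; linarith : x + (N:ℝ) ≤ ((N+1:ℕ):ℝ) + 1)
    rw [fd_nat (N+1)] at h
    linarith
  have hlog1 : Tendsto (fun N : ℕ => Real.log (x + N) - Real.log N) atTop (𝓝 0) :=
    log_shift_tendsto hx
  have hharm : Tendsto (fun N : ℕ => (harmonic N : ℝ) - Real.log N) atTop (𝓝 γ) :=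
    Real.tendsto_harmonic_sub_log
  have hlowlim : Tendsto (fun N : ℕ => (-γ + (harmonic N : ℝ)) - Real.log (x + N)) atTop (𝓝 0) := by
    have h3 := (hharm.sub hlog1).sub_const γ
    rw [show γ - 0 - γ = 0 by ring] at h3
    exact h3.congr (fun N => by ring)
  have huplim : Tendsto (fun N : ℕ => (-γ + (harmonic (N+1) : ℝ)) - Real.log (x + N)) atTop (𝓝 0) := by
    have hshift : Tendsto (fun N : ℕ => (harmonic (N+1) : ℝ) - Real.log ((N:ℝ)+1)) atTop (𝓝 γ) := by
      have h4 := hharm.comp (tendsto_add_atTop_nat 1)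
      apply h4.congr
      intro N
      simp only [Function.comp]
      push_cast
      ring_nf
    have hlog2 : Tendsto (fun N : ℕ => Real.log ((N:ℝ)+1) - Real.log (x + N)) atTop (𝓝 0) := by
      have ha : Tendsto (fun N : ℕ => Real.log (1 + N) - Real.log N) atTop (𝓝 0) :=
        log_shift_tendsto one_pos
      have := ha.sub hlog1
      apply (by simpa using this : Tendsto _ atTop (𝓝 (0:ℝ))).congr
      intro N
      rw [add_comm (1:ℝ) (N:ℝ)]
      try ring
    have h3 := (hshift.sub_const γ).add hlog2
    rw [show γ - γ + 0 = 0 by ring] at h3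
    exact h3.congr (fun N => by push_cast; ring)
  exact tendsto_of_tendsto_of_tendsto_of_le_of_le hlowlim huplim hlow hup

lemma tendsto_sum_trapR {x : ℝ} (hx1 : 1 < x) (hx2 : x < 2) :
    Tendsto (fun N : ℕ => ∑ n ∈ Finset.range N, trapR x n) atTop
      (𝓝 (fd x - Real.log x + 1 / (2 * x))) := by
  have hx : 0 < x := by linarith
  have h1 : Tendsto (fun N : ℕ => 1 / (2 * (x + N))) atTop (𝓝 0) := by
    have hb : Tendsto (fun N : ℕ => 2 * (x + (N:ℝ))) atTop atTop := by
      apply Filter.Tendsto.const_mul_atTop two_pos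
      exact tendsto_atTop_add_const_left _ x (tendsto_natCast_atTop_atTop (R := ℝ))
    have h0 := (tendsto_inv_atTop_zero).comp hb
    apply h0.congr
    intro N
    simp [Function.comp, one_div]
  have h2 := (fd_sub_log_tendsto hx1 hx2).add h1
  rw [add_zero] at h2
  have h3 := (tendsto_const_nhds (x := fd x - Real.log x + 1 / (2 * x))
    (f := atTop (α := ℕ))).sub h2
  rw [sub_zero] at h3
  apply h3.congr
  intro N
  rw [sum_trapR hx N]
  try ring

lemma cast_ne_neg_nat {x : ℝ} (hx : 0 < x) : ∀ m : ℕ, (x:ℂ) ≠ -(m:ℕ) := by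
  intro m h
  have : (x:ℂ).re = ((-(m:ℕ) : ℂ)).re := by rw [h]
  simp only [Complex.ofReal_re, Complex.neg_re, Complex.natCast_re] at this
  have : (0:ℝ) ≤ m := m.cast_nonneg
  linarith [this]

lemma deriv_Gamma_ofReal {x : ℝ} (hx : 0 < x) :
    deriv Complex.Gamma (x:ℂ) = ((deriv Real.Gamma x : ℝ) : ℂ) := by
  have hdG : DifferentiableAt ℂ Complex.Gamma (x:ℂ) :=
    Complex.differentiableAt_Gamma _ (by exact_mod_cast cast_ne_neg_nat hx)
  have h1 := hdG.hasDerivAt.comp_ofReal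
  have h2 : (fun y : ℝ => Complex.Gamma (y:ℂ)) = fun y : ℝ => ((Real.Gamma y : ℝ) : ℂ) :=
    funext (fun y => Complex.Gamma_ofReal y)
  rw [h2] at h1
  have h3 := (Real.differentiableAt_Gamma (ne_neg_nat hx)).hasDerivAt.ofReal_comp
  exact h1.unique h3

lemma psic_ofReal {x : ℝ} (hx : 0 < x) : ψc (x:ℂ) = ((fd x : ℝ) : ℂ) := by
  unfold ψc
  rw [deriv_Gamma_ofReal hx, Complex.Gamma_ofReal, fd_eq hx]
  push_cast
  ring

lemma trap_ofReal {x : ℝ} (hx : 0 < x) (n : ℕ) : trap (x:ℂ) n = ((trapR x n : ℝ) : ℂ) := by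
  unfold trap trapR
  have e1 : (x:ℂ) + n + 1 = (((x + n + 1 : ℝ)) : ℂ) := by push_cast; ring
  have e2 : (x:ℂ) + n = (((x + n : ℝ)) : ℂ) := by push_cast; ring
  rw [e1, e2, ← Complex.ofReal_log (show (0:ℝ) ≤ x + n + 1 by positivity),
    ← Complex.ofReal_log (show (0:ℝ) ≤ x + n by positivity)]
  push_cast
  ring

lemma hasSum_trap_real {x : ℝ} (hx1 : 1 < x) (hx2 : x < 2) :
    HasSum (trap (x:ℂ)) (ψc (x:ℂ) - Complex.log (x:ℂ) + 1 / (2 * (x:ℂ))) := by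
  have hx : 0 < x := by linarith
  have hz : 0 < ((x:ℂ)).re := by simpa using hx
  have hS := summable_trap hz
  have htarget : ψc (x:ℂ) - Complex.log (x:ℂ) + 1 / (2 * (x:ℂ))
      = (((fd x - Real.log x + 1 / (2 * x) : ℝ)) : ℂ) := by
    rw [psic_ofReal hx, ← Complex.ofReal_log hx.le]
    push_cast
    ring
  rw [htarget]
  have htend : Tendsto (fun N : ℕ => ∑ n ∈ Finset.range N, trap (x:ℂ) n) atTop
      (𝓝 (((fd x - Real.log x + 1 / (2 * x) : ℝ)) : ℂ)) := by
    have hcast := (Complex.continuous_ofReal.tendsto _).comp (tendsto_sum_trapR hx1 hx2)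
    apply hcast.congr
    intro N
    simp only [Function.comp]
    rw [Complex.ofReal_sum]
    exact Finset.sum_congr rfl (fun n _ => (trap_ofReal hx n).symm)
  have huniq := tendsto_nhds_unique hS.hasSum.tendsto_sum_nat htend
  rw [← huniq]
  exact hS.hasSum

lemma slit_of_re_pos {w : ℂ} (h : 0 < w.re) : w ∈ Complex.slitPlane :=
  Complex.mem_slitPlane_iff.2 (Or.inl h)

lemma diff_trap_n {n : ℕ} {w : ℂ} (hw : 0 < w.re) :
    DifferentiableAt ℂ (fun w => trap w n) w := by
  have hre1 : 0 < (w + n).re := by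
    simp only [Complex.add_re, Complex.natCast_re]
    positivity
  have hre2 : 0 < (w + n + 1).re := by
    simp only [Complex.add_re, Complex.natCast_re, Complex.one_re]
    positivity
  have hne1 : w + n ≠ 0 := fun h => by simp [h] at hre1
  have hne2 : w + n + 1 ≠ 0 := fun h => by simp [h] at hre2
  unfold trap
  apply DifferentiableAt.sub
  apply DifferentiableAt.sub
  · exact DifferentiableAt.clog (by fun_prop) (slit_of_re_pos hre2)
  · exact DifferentiableAt.clog (by fun_prop) (slit_of_re_pos hre1)
  · apply DifferentiableAt.const_mul
    apply DifferentiableAt.add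
    · exact (differentiable_const (1:ℂ)).differentiableAt.div (by fun_prop) hne1
    · exact (differentiable_const (1:ℂ)).differentiableAt.div (by fun_prop) hne2

lemma analyticAt_tsum_trap {z : ℂ} (hz : 0 < z.re) :
    AnalyticAt ℂ (fun w => ∑' n, trap w n) z := by
  set ε : ℝ := z.re / 2 with hε
  have hε0 : 0 < ε := by positivity
  set V : Set ℂ := {w : ℂ | ε < w.re} with hV
  have hVopen : IsOpen V := isOpen_lt continuous_const Complex.continuous_re
  have hdiff : DifferentiableOn ℂ (fun w => ∑' n, trap w n) V := by
    apply Complex.differentiableOn_tsum_of_summable_norm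
      (u := fun n : ℕ => 1 / 2 * ((ε + n) ^ 2)⁻¹) (summable_crude hε0)
      (fun n => fun w hw => (diff_trap_n (lt_trans hε0 hw)).differentiableWithinAt) hVopen
    intro n w hw
    have hw' : 0 < w.re := lt_trans hε0 hw
    refine le_trans (trap_norm_le_crude hw' n) ?_
    have h1 : ε + n ≤ w.re + n := by
      have : ε ≤ w.re := le_of_lt hw
      linarith
    have hn : (0:ℝ) ≤ n := n.cast_nonneg
    have h2 : (0:ℝ) < (ε + n) ^ 2 := by positivity
    have h3 : (ε + n) ^ 2 ≤ (w.re + n) ^ 2 := by nlinarith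
    gcongr
  have hzV : z ∈ V := by
    simp only [hV, Set.mem_setOf_eq, hε]
    linarith
  exact (hdiff.analyticOnNhd hVopen) z hzV

lemma psi_eq {z : ℂ} (hz : 0 < z.re) :
    ψc z = Complex.log z - 1 / (2 * z) + ∑' n, trap z n := by
  set U : Set ℂ := {w : ℂ | 0 < w.re} with hU
  have hUopen : IsOpen U := isOpen_lt continuous_const Complex.continuous_re
  have hUconv : Convex ℝ U := convex_halfSpace_re_gt 0
  have hUconn : IsPreconnected U := hUconv.isPreconnected
  have hne_nat : ∀ w ∈ U, ∀ m : ℕ, w ≠ -(m:ℕ) := by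
    intro w hw m h
    have : (0:ℝ) < w.re := hw
    rw [h] at this
    simp only [Complex.neg_re, Complex.natCast_re] at this
    have : (0:ℝ) ≤ m := m.cast_nonneg
    linarith [‹(0:ℝ) < -(m:ℝ)›]
  have hGa : AnalyticOnNhd ℂ Complex.Gamma U := by
    apply DifferentiableOn.analyticOnNhd ?_ hUopen
    exact fun w hw => (Complex.differentiableAt_Gamma w (hne_nat w hw)).differentiableWithinAt
  have hGa' : AnalyticOnNhd ℂ (deriv Complex.Gamma) U := hGa.deriv
  have hψ : AnalyticOnNhd ℂ ψc U := by
    intro w hw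
    exact (hGa' w hw).div (hGa w hw) (Complex.Gamma_ne_zero (hne_nat w hw))
  have hH : AnalyticOnNhd ℂ (fun w => Complex.log w - 1 / (2 * w) + ∑' n, trap w n) U := by
    intro w hw
    have hw' : 0 < w.re := hw
    have hwne : w ≠ 0 := fun h => by simp [h] at hw'
    apply AnalyticAt.add
    apply AnalyticAt.sub
    · exact analyticAt_clog (slit_of_re_pos hw')
    · exact analyticAt_const.div (analyticAt_const.mul (analyticAt_id)) (by
        simpa using mul_ne_zero (two_ne_zero) hwne)
    · exact analyticAt_tsum_trap hw'
  have hmem : ((3/2 : ℝ) : ℂ) ∈ U := by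
    simp only [hU, Set.mem_setOf_eq, Complex.ofReal_re]
    norm_num
  have hfreq : ∃ᶠ w in nhdsWithin ((3/2 : ℝ) : ℂ) {((3/2 : ℝ) : ℂ)}ᶜ,
      ψc w = Complex.log w - 1 / (2 * w) + ∑' n, trap w n := by
    have hseq : Tendsto (fun j : ℕ => ((3/2 + 1/(j+3) : ℝ) : ℂ)) atTop
        (nhdsWithin ((3/2 : ℝ) : ℂ) {((3/2 : ℝ) : ℂ)}ᶜ) := by
      apply tendsto_nhdsWithin_of_tendsto_nhds_of_eventually_within
      · apply (Complex.continuous_ofReal.tendsto _).comp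
        have h1 : Tendsto (fun j : ℕ => 1/((j:ℝ)+3)) atTop (𝓝 0) := by
          have hb : Tendsto (fun j : ℕ => (j:ℝ) + 3) atTop atTop :=
            tendsto_atTop_add_const_right _ 3 (tendsto_natCast_atTop_atTop (R := ℝ))
          have h0 := (tendsto_inv_atTop_zero).comp hb
          apply h0.congr
          intro N
          simp [Function.comp, one_div]
        have := (tendsto_const_nhds (x := (3/2:ℝ)) (f := atTop (α := ℕ))).add h1
        simpa using this
      · apply Filter.Eventually.of_forall
        intro j
        simp only [Set.mem_compl_iff, Set.mem_singleton_iff]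
        intro h
        rw [Complex.ofReal_inj] at h
        have : (0:ℝ) < 1/((j:ℝ)+3) := by positivity
        linarith
    apply hseq.frequently
    apply Filter.Frequently.of_forall
    intro j
    have hj1 : 1 < (3/2 + 1/((j:ℝ)+3) : ℝ) := by
      have : (0:ℝ) < 1/((j:ℝ)+3) := by positivity
      linarith
    have hj2 : (3/2 + 1/((j:ℝ)+3) : ℝ) < 2 := by
      have h2 : 1/((j:ℝ)+3) ≤ 1/3 := by
        apply div_le_div_of_nonneg_left one_pos.le (by norm_num)
        have : (0:ℝ) ≤ j := j.cast_nonneg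
        linarith
      linarith
    have hs := hasSum_trap_real hj1 hj2
    rw [hs.tsum_eq]
    ring
  have heq := AnalyticOnNhd.eqOn_of_preconnected_of_frequently_eq hψ hH hUconn hmem hfreq
  exact heq hz

lemma psi_bound {z : ℂ} (hx : 0 < z.re) (hy : 0 < z.im) :
    ‖ψc z - (Complex.log z - 1 / (2 * z))‖ ≤
      1 / (2 * z.im) * (Real.pi / 2 - Real.arctan (z.re / z.im)) := by
  rw [psi_eq hx, add_sub_cancel_left]
  exact tsum_trap_norm_le hx hy

lemma err_mono {a c Y k : ℝ} (hk : 0 < k) (hkY : k ≤ Y) (hc : 0 < c) (hca : c ≤ a) :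
    1 / Y * (Real.pi / 2 - Real.arctan (a / Y)) ≤
      1 / k * (Real.pi / 2 - Real.arctan (c / k)) := by
  have hY : 0 < Y := lt_of_lt_of_le hk hkY
  have step1 : Real.pi / 2 - Real.arctan (a / Y) ≤ Real.pi / 2 - Real.arctan (c / Y) := by
    have := Real.arctan_strictMono.monotone ((div_le_div_iff_of_pos_right hY).mpr hca)
    linarith
  have e1 : Real.pi / 2 - Real.arctan (c / Y) = Real.arctan (Y / c) := by
    rw [← Real.arctan_inv_of_pos (by positivity : 0 < c / Y), inv_div]
  have e2 : Real.pi / 2 - Real.arctan (c / k) = Real.arctan (k / c) := by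
    rw [← Real.arctan_inv_of_pos (by positivity : 0 < c / k), inv_div]
  have step2 : 1 / Y * Real.arctan (Y / c) ≤ 1 / k * Real.arctan (k / c) := by
    have h := arctan_mul_le (u := k / c) (v := Y / c) (by positivity) (by gcongr)
    have h3 := mul_le_mul_of_nonneg_left h hc.le
    have e3 : c * (k / c * Real.arctan (Y / c)) = k * Real.arctan (Y / c) := by
      field_simp
    have e4 : c * (Y / c * Real.arctan (k / c)) = Y * Real.arctan (k / c) := by
      field_simp
    rw [e3, e4] at h3
    rw [one_div, one_div, inv_mul_eq_div, inv_mul_eq_div, div_le_div_iff₀ hY hk]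
    nlinarith [h3]
  calc 1 / Y * (Real.pi / 2 - Real.arctan (a / Y))
      ≤ 1 / Y * (Real.pi / 2 - Real.arctan (c / Y)) := by
        apply mul_le_mul_of_nonneg_left step1 (by positivity)
    _ = 1 / Y * Real.arctan (Y / c) := by rw [e1]
    _ ≤ 1 / k * Real.arctan (k / c) := step2
    _ = 1 / k * (Real.pi / 2 - Real.arctan (c / k)) := by rw [e2]

lemma log_piece {a Y : ℝ} (ha : 0 < a) (hY : 0 < Y) :
    Real.log ((a ^ 2 + Y ^ 2) / 4) = 2 * Real.log (Y / 2) + Real.log (1 + (a / Y) ^ 2) := by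
  have e : (a ^ 2 + Y ^ 2) / 4 = (Y / 2) ^ 2 * (1 + (a / Y) ^ 2) := by
    field_simp
    ring
  rw [e, Real.log_mul (by positivity) (by positivity), Real.log_pow]
  push_cast
  ring

lemma branch_bound {a Y : ℝ} {z : ℂ} (hz : z = ((a / 2 : ℝ) : ℂ) + ((Y / 2 : ℝ) : ℂ) * Complex.I)
    (ha : 0 < a) (hY : 0 < Y) :
    |(ψc z).re - (Real.log ((a ^ 2 + Y ^ 2) / 4) / 2 - a / (a ^ 2 + Y ^ 2))| ≤
      1 / Y * (Real.pi / 2 - Real.arctan (a / Y)) := by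
  have hre : z.re = a / 2 := by rw [hz]; simp
  have him : z.im = Y / 2 := by rw [hz]; simp
  have hb := psi_bound (z := z) (by rw [hre]; positivity) (by rw [him]; positivity)
  rw [hre, him] at hb
  have hd1 : 1 / (2 * (Y / 2)) = 1 / Y := by field_simp
  have hd2 : a / 2 / (Y / 2) = a / Y := by
    field_simp
  rw [hd1, hd2] at hb
  have hnsq : Complex.normSq z = (a ^ 2 + Y ^ 2) / 4 := by
    rw [Complex.normSq_apply, hre, him]
    ring
  have E1 : (Complex.log z).re = Real.log ((a ^ 2 + Y ^ 2) / 4) / 2 := by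
    rw [Complex.log_re, Complex.norm_def, Real.log_sqrt (Complex.normSq_nonneg z), hnsq]
  have h2z : 2 * z = ((a : ℝ) : ℂ) + ((Y : ℝ) : ℂ) * Complex.I := by
    rw [hz]; push_cast; ring
  have E2 : (1 / (2 * z)).re = a / (a ^ 2 + Y ^ 2) := by
    rw [one_div, Complex.inv_re, h2z, Complex.normSq_apply]
    simp only [Complex.add_re, Complex.ofReal_re, Complex.mul_re, Complex.I_re, Complex.I_im,
      Complex.ofReal_im, Complex.add_im, Complex.mul_im]
    ring_nf
  have hre_eq : (ψc z - (Complex.log z - 1 / (2 * z))).re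
      = (ψc z).re - (Real.log ((a ^ 2 + Y ^ 2) / 4) / 2 - a / (a ^ 2 + Y ^ 2)) := by
    rw [Complex.sub_re, Complex.sub_re, E1, E2]
  calc |(ψc z).re - (Real.log ((a ^ 2 + Y ^ 2) / 4) / 2 - a / (a ^ 2 + Y ^ 2))|
      = |(ψc z - (Complex.log z - 1 / (2 * z))).re| := by rw [hre_eq]
    _ ≤ ‖ψc z - (Complex.log z - 1 / (2 * z))‖ := Complex.abs_re_le_norm _
    _ = ‖ψc z - (Complex.log z - 1 / (2 * z))‖ := rfl
    _ ≤ _ := hb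

lemma key_combine {P1 P2 G1 G2 V1 V2 M1 M2 W T1 T2 e1 e2 c : ℝ}
    (hc : 0 ≤ c)
    (h1 : |P1 - (G1 / 2 - V1)| ≤ M1) (h2 : |P2 - (G2 / 2 - V2)| ≤ M2)
    (hG1 : G1 = 2 * W + T1) (hG2 : G2 = 2 * W + T2)
    (hM1 : M1 ≤ e1) (hM2 : M2 ≤ e2) :
    1 / 2 * (P1 - c * P2) ≤
      (1 - c) / 2 * W + (1 / 4 * T1 - c / 4 * T2 - V1 / 2 + c * V2 / 2)
        + 1 / 2 * e1 + c / 2 * e2 := by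
  have h1' := abs_le.mp h1
  have h2' := abs_le.mp h2
  have hP2 : G2 / 2 - V2 - M2 ≤ P2 := by linarith [h2'.1]
  have hmul := mul_le_mul_of_nonneg_left hP2 hc
  have hMul2 := mul_le_mul_of_nonneg_left hM2 hc
  have hG2k : c * G2 = 2 * (c * W) + c * T2 := by rw [hG2]; ring
  nlinarith [h1'.2, hmul, hMul2, hG2k, hG1]


/-- **A McCurley-type bound** for the differenced logarithmic derivative of
the Gamma factor. -/
theorem mccurley_type_bound (k : ℕ) (hk : 1 ≤ k) (t : ℝ) (ht : 1 ≤ t)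
    (σ : ℝ) (hσ : 1 < σ) (hσ' : σ ≤ 1.15) (δ : ℝ) (hδ : δ = 0 ∨ δ = 1) :
    1 / 2 * (ψc (((σ : ℂ) + k * t * Complex.I + δ) / 2) -
        (κ : ℂ) * ψc (((σ₁ σ : ℂ) + k * t * Complex.I + δ) / 2)).re ≤
      (1 - κ) / 2 * Real.log (k * t / 2) + Xi σ k t δ +
        1 / (2 * k) * (Real.pi / 2 - Real.arctan ((1 + δ) / k)) +
        κ / (2 * k) * (Real.pi / 2 - Real.arctan (((1 + Real.sqrt 5) / 2 + δ) / k)) := by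
  have hδ0 : 0 ≤ δ := by rcases hδ with h | h <;> simp [h]
  have hk1 : (1:ℝ) ≤ (k:ℝ) := by exact_mod_cast hk
  have hk0 : (0:ℝ) < (k:ℝ) := by linarith
  have hY0 : (0:ℝ) < (k:ℝ) * t := by nlinarith
  have hkY : (k:ℝ) ≤ (k:ℝ) * t := by nlinarith
  have hs5 : (0:ℝ) ≤ Real.sqrt 5 := Real.sqrt_nonneg 5
  have hgold : (1 + Real.sqrt 5) / 2 ≤ σ₁ σ := by
    unfold σ₁
    have h5 : Real.sqrt 5 ≤ Real.sqrt (1 + 4 * σ ^ 2) := Real.sqrt_le_sqrt (by nlinarith)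
    linarith
  have ha1pos : 0 < σ + δ := by linarith
  have ha2pos : 0 < σ₁ σ + δ := by linarith
  have hc1 : (0:ℝ) < 1 + δ := by linarith
  have hc2 : (0:ℝ) < (1 + Real.sqrt 5) / 2 + δ := by linarith
  have hκpos : (0:ℝ) ≤ κ := by unfold κ; positivity
  have hz1 : (((σ : ℂ) + k * t * Complex.I + δ) / 2)
      = (((σ + δ) / 2 : ℝ) : ℂ) + ((((k:ℝ) * t) / 2 : ℝ) : ℂ) * Complex.I := by
    push_cast
    ring
  have hz2 : (((σ₁ σ : ℂ) + k * t * Complex.I + δ) / 2)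
      = (((σ₁ σ + δ) / 2 : ℝ) : ℂ) + ((((k:ℝ) * t) / 2 : ℝ) : ℂ) * Complex.I := by
    push_cast
    ring
  have B1 := branch_bound hz1 ha1pos hY0
  have B2 := branch_bound hz2 ha2pos hY0
  have L1 := log_piece ha1pos hY0
  have L2 := log_piece ha2pos hY0
  have E1 := err_mono hk0 hkY hc1 (by linarith : 1 + δ ≤ σ + δ)
  have E2 := err_mono hk0 hkY hc2 (by linarith : (1 + Real.sqrt 5) / 2 + δ ≤ σ₁ σ + δ)
  have hkey := key_combine hκpos B1 B2 L1 L2 E1 E2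
  have hre : (ψc (((σ : ℂ) + k * t * Complex.I + δ) / 2) -
      (κ : ℂ) * ψc (((σ₁ σ : ℂ) + k * t * Complex.I + δ) / 2)).re
      = (ψc (((σ : ℂ) + k * t * Complex.I + δ) / 2)).re -
        κ * (ψc (((σ₁ σ : ℂ) + k * t * Complex.I + δ) / 2)).re := by
    simp [Complex.sub_re, Complex.mul_re, Complex.ofReal_re, Complex.ofReal_im]
  rw [hre]
  refine le_trans hkey (le_of_eq ?_)
  have hq1 : (σ + δ) / (2 * ((σ + δ) ^ 2 + (k:ℝ) ^ 2 * t ^ 2))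
      = (σ + δ) / ((σ + δ) ^ 2 + ((k:ℝ) * t) ^ 2) / 2 := by
    rw [div_div]
    congr 1
    ring
  have hq2 : κ * (σ₁ σ + δ) / (2 * ((σ₁ σ + δ) ^ 2 + (k:ℝ) ^ 2 * t ^ 2))
      = κ * ((σ₁ σ + δ) / ((σ₁ σ + δ) ^ 2 + ((k:ℝ) * t) ^ 2)) / 2 := by
    rw [mul_div_assoc]
    have hinner : (σ₁ σ + δ) / (2 * ((σ₁ σ + δ) ^ 2 + (k:ℝ) ^ 2 * t ^ 2))
        = (σ₁ σ + δ) / ((σ₁ σ + δ) ^ 2 + ((k:ℝ) * t) ^ 2) / 2 := by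
      rw [div_div]
      congr 1
      ring
    rw [hinner, mul_div_assoc]
  unfold Xi
  rw [hq1, hq2]
  ring
end
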